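/- arXiv:1411.0426 — 6 statements merged into one kernel-verified Lean document; each statement's English description precedes it below -/
import Mathlib

section
/- Let u be a concave, law-determined monetary utility function on L^∞ of an atomless probability space, satisfying the Fatou property. Then for all real numbers x < y, the map λ ↦ u(λδ_x + (1−λ)δ_y) is continuous at every λ ∈ (0,1]; in particular lim_{λ→1^-} u(λδ_x + (1−λ)δ_y) = x. -/
open MeasureTheory Filter Set

/-- A (representative of an) element of `L^∞`: a measurable, essentially bounded function. -/
def BddMeas {Ω : Type} [MeasurableSpace Ω] (P : Measure Ω) (ξ : Ω → ℝ) : Prop :=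
  Measurable ξ ∧ ∃ C : ℝ, ∀ᵐ ω ∂P, |ξ ω| ≤ C

/-- `ξ` has the two-point law `l·δ_x + (1-l)·δ_y`. -/
def HasDyadicLaw {Ω : Type} [MeasurableSpace Ω] (P : Measure Ω) (ξ : Ω → ℝ)
    (x y l : ℝ) : Prop :=
  P.map ξ = ENNReal.ofReal l • Measure.dirac x + ENNReal.ofReal (1 - l) • Measure.dirac y

variable {Ω : Type} [MeasurableSpace Ω]

lemma msmall_subset (P : Measure Ω) [IsProbabilityMeasure P]
    (split : ∀ A : Set Ω, MeasurableSet A → 0 < P A →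
      ∃ B : Set Ω, B ⊆ A ∧ MeasurableSet B ∧ 0 < P B ∧ P B < P A) :
    ∀ (n : ℕ) (A : Set Ω), MeasurableSet A → 0 < P A →
      ∃ B, B ⊆ A ∧ MeasurableSet B ∧ 0 < P B ∧ 2 ^ n * P B ≤ P A := by
  intro n
  induction n with
  | zero => exact fun A hA h0 => ⟨A, subset_rfl, hA, h0, by simp⟩
  | succ n ih =>
    intro A hA h0
    obtain ⟨B, hBA, hB, hB0, hBn⟩ := ih A hA h0
    obtain ⟨C, hCB, hC, hC0, hClt⟩ := split B hB hB0
    have hBtop : P B ≠ ⊤ := (measure_lt_top P B).ne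
    have hD : P (B \ C) = P B - P C := measure_diff hCB hC.nullMeasurableSet (measure_lt_top P C).ne
    have hD0 : 0 < P (B \ C) := by
      rw [hD]; exact tsub_pos_of_lt hClt
    have hsum : P C + P (B \ C) = P B := by
      rw [hD]
      exact add_tsub_cancel_of_le hClt.le
    have key : 2 * P C ≤ P B ∨ 2 * P (B \ C) ≤ P B := by
      by_contra hcon
      push_neg at hcon
      obtain ⟨h1, h2⟩ := hcon
      have : 2 * P B < 2 * P B := by
        calc 2 * P B = P B + P B := two_mul _
        _ < 2 * P C + 2 * P (B \ C) := ENNReal.add_lt_add h1 h2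
        _ = 2 * P B := by rw [← mul_add, hsum]
      exact absurd this (lt_irrefl _)
    have step : ∀ E : Set Ω, E ⊆ B → MeasurableSet E → 0 < P E → 2 * P E ≤ P B →
        ∃ B', B' ⊆ A ∧ MeasurableSet B' ∧ 0 < P B' ∧ 2 ^ (n + 1) * P B' ≤ P A := by
      intro E hEB hE hE0 hE2
      refine ⟨E, hEB.trans hBA, hE, hE0, ?_⟩
      calc 2 ^ (n + 1) * P E = 2 ^ n * (2 * P E) := by ring
      _ ≤ 2 ^ n * P B := mul_le_mul_right hE2 _
      _ ≤ P A := hBn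
    rcases key with h | h
    · exact step C (hCB) hC hC0 h
    · exact step (B \ C) (diff_subset) (hB.diff hC) hD0 h

lemma mtiny_subset (P : Measure Ω) [IsProbabilityMeasure P]
    (split : ∀ A : Set Ω, MeasurableSet A → 0 < P A →
      ∃ B : Set Ω, B ⊆ A ∧ MeasurableSet B ∧ 0 < P B ∧ P B < P A) :
    ∀ (A : Set Ω), MeasurableSet A → 0 < P A → ∀ ε : ENNReal, 0 < ε →
      ∃ B, B ⊆ A ∧ MeasurableSet B ∧ 0 < P B ∧ P B ≤ ε := by
  intro A hA h0 ε hε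
  obtain ⟨n, hn⟩ := ENNReal.exists_inv_two_pow_lt hε.ne'
  obtain ⟨B, hBA, hB, hB0, hBn⟩ := msmall_subset P split n A hA h0
  refine ⟨B, hBA, hB, hB0, ?_⟩
  have h1 : 2 ^ n * P B ≤ 1 := hBn.trans (prob_le_one)
  have h2 : P B ≤ 2⁻¹ ^ n := by
    rw [← ENNReal.inv_pow, ENNReal.le_inv_iff_mul_le, mul_comm]
    exact h1
  exact h2.trans hn.le

lemma msierpinski (P : Measure Ω) [IsProbabilityMeasure P]
    (split : ∀ A : Set Ω, MeasurableSet A → 0 < P A →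
      ∃ B : Set Ω, B ⊆ A ∧ MeasurableSet B ∧ 0 < P B ∧ P B < P A) :
    ∀ (A : Set Ω), MeasurableSet A → ∀ r : ENNReal, r ≤ P A →
      ∃ B, B ⊆ A ∧ MeasurableSet B ∧ P B = r := by
  intro A hA r hr
  have hrtop : r ≠ ⊤ := (hr.trans_lt (measure_lt_top P A)).ne
  classical
  -- Good sets
  set Good : Set Ω → Prop := fun B => B ⊆ A ∧ MeasurableSet B ∧ P B ≤ r with hGood
  set g : Set Ω → ENNReal := fun B =>
    sSup {c | ∃ C, C ⊆ A \ B ∧ MeasurableSet C ∧ P C = c ∧ P B + c ≤ r} with hg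
  have g_le : ∀ B, g B ≤ r := by
    intro B
    apply sSup_le
    rintro c ⟨C, _, _, rfl, hsum⟩
    exact le_trans (le_add_self) hsum
  have hstep : ∀ B, Good B →
      ∃ C, C ⊆ A \ B ∧ MeasurableSet C ∧ P B + P C ≤ r ∧ g B ≤ 2 * P C := by
    intro B hB
    rcases eq_or_ne (g B) 0 with h0 | h0
    · exact ⟨∅, empty_subset _, MeasurableSet.empty, by simpa using hB.2.2, by simp [h0]⟩
    · have ghalf : g B / 2 < g B :=
        ENNReal.half_lt_self h0 ((g_le B).trans_lt (hrtop.lt_top)).ne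
      rw [hg] at ghalf
      obtain ⟨c, hc, hlt⟩ := lt_sSup_iff.mp ghalf
      obtain ⟨C, hCsub, hCm, hCP, hCr⟩ := hc
      refine ⟨C, hCsub, hCm, by rwa [hCP], ?_⟩
      have : g B ≤ 2 * c := by
        have h2 : g B = 2 * (g B / 2) := (ENNReal.mul_div_cancel' (by norm_num) (by norm_num)).symm
        rw [h2]
        exact mul_le_mul_right hlt.le _
      rwa [hCP]
  -- the choice function
  let C : {B : Set Ω // Good B} → Set Ω := fun p => (hstep p.1 p.2).choose
  have hC : ∀ p : {B : Set Ω // Good B},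
      C p ⊆ A \ p.1 ∧ MeasurableSet (C p) ∧ P p.1 + P (C p) ≤ r ∧ g p.1 ≤ 2 * P (C p) :=
    fun p => (hstep p.1 p.2).choose_spec
  have goodEmpty : Good ∅ := ⟨empty_subset _, MeasurableSet.empty, by simp⟩
  have goodUnion : ∀ p : {B : Set Ω // Good B}, Good (p.1 ∪ C p) := by
    intro p
    obtain ⟨h1, h2, h3, _⟩ := hC p
    refine ⟨union_subset p.2.1 (h1.trans diff_subset), p.2.2.1.union h2, ?_⟩
    calc P (p.1 ∪ C p) ≤ P p.1 + P (C p) := measure_union_le _ _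
    _ ≤ r := h3
  let seq : ℕ → {B : Set Ω // Good B} := fun n =>
    Nat.rec ⟨∅, goodEmpty⟩ (fun _ p => ⟨p.1 ∪ C p, goodUnion p⟩) n
  have seq_succ : ∀ n, (seq (n + 1)).1 = (seq n).1 ∪ C (seq n) := fun n => rfl
  have seq_mono : ∀ n, (seq n).1 ⊆ (seq (n + 1)).1 := by
    intro n; rw [seq_succ]; exact subset_union_left
  have seq_mono' : Monotone (fun n => (seq n).1) :=
    monotone_nat_of_le_succ seq_mono
  have seq_measure_succ : ∀ n, P ((seq (n + 1)).1) = P ((seq n).1) + P (C (seq n)) := by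
    intro n
    rw [seq_succ]
    apply measure_union _ (hC (seq n)).2.1
    have h1 := (hC (seq n)).1
    exact Set.disjoint_of_subset_right h1 disjoint_sdiff_right
  -- the limit set
  set Binf : Set Ω := ⋃ n, (seq n).1 with hBinf
  have hBm : MeasurableSet Binf := MeasurableSet.iUnion (fun n => (seq n).2.2.1)
  have hBA : Binf ⊆ A := iUnion_subset (fun n => (seq n).2.1)
  have hBle : P Binf ≤ r := by
    rw [hBinf, Directed.measure_iUnion seq_mono'.directed_le]
    exact iSup_le (fun n => (seq n).2.2.2)
  refine ⟨Binf, hBA, hBm, ?_⟩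
  by_contra hne
  have hlt : P Binf < r := lt_of_le_of_ne hBle hne
  -- find a small set in A \ Binf
  have hdiff : P (A \ Binf) = P A - P Binf := measure_diff hBA hBm.nullMeasurableSet (measure_lt_top P Binf).ne
  have hdpos : 0 < P (A \ Binf) := by
    rw [hdiff]
    exact tsub_pos_of_lt (hlt.trans_le hr)
  obtain ⟨C0, hC0sub, hC0m, hC0pos, hC0le⟩ :=
    mtiny_subset P split (A \ Binf) (hA.diff hBm) hdpos (r - P Binf) (tsub_pos_of_lt hlt)
  -- P C0 is in every gset
  have hmem : ∀ n, P C0 ≤ g ((seq n).1) := by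
    intro n
    apply le_sSup
    refine ⟨C0, ?_, hC0m, rfl, ?_⟩
    · refine hC0sub.trans (diff_subset_diff_right ?_)
      exact subset_iUnion (fun n => (seq n).1) n
    · have h1 : P ((seq n).1) ≤ P Binf := measure_mono (subset_iUnion (fun n => (seq n).1) n)
      calc P ((seq n).1) + P C0 ≤ P Binf + (r - P Binf) := add_le_add h1 hC0le
      _ = r := add_tsub_cancel_of_le hlt.le
  set c : ENNReal := P C0 / 2 with hc
  have hcpos : c ≠ 0 := by
    rw [hc]
    simp only [ne_eq, ENNReal.div_eq_zero_iff]
    push_neg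
    exact ⟨hC0pos.ne', by norm_num⟩
  have hctop : c ≠ ⊤ := by
    rw [hc]
    exact (ENNReal.div_lt_top (measure_lt_top P C0).ne (by norm_num)).ne
  have hCn : ∀ n, c ≤ P (C (seq n)) := by
    intro n
    have h1 := (hC (seq n)).2.2.2
    have h2 := (hmem n).trans h1
    rw [hc]
    rw [ENNReal.div_le_iff_le_mul (by norm_num) (by norm_num)]
    rwa [mul_comm] at h2
  have hgrow : ∀ n : ℕ, (n : ENNReal) * c ≤ P ((seq n).1) := by
    intro n
    induction n with
    | zero => simp
    | succ n ih =>
      rw [seq_measure_succ]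
      push_cast
      rw [add_mul, one_mul]
      exact add_le_add ih (hCn n)
  obtain ⟨n, hn⟩ := ENNReal.exists_nat_gt (ENNReal.inv_ne_top.mpr hcpos : c⁻¹ ≠ ⊤)
  have h1 : (1 : ENNReal) < n * c := by
    calc (1 : ENNReal) = c⁻¹ * c := (ENNReal.inv_mul_cancel hcpos hctop).symm
    _ < n * c := by
      rw [ENNReal.mul_lt_mul_iff_left hcpos hctop]
      exact hn
  have h2 : P ((seq n).1) ≤ 1 := prob_le_one
  exact absurd ((h1.trans_le (hgrow n)).trans_le h2) (lt_irrefl _)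

lemma mdisj_family (P : Measure Ω) [IsProbabilityMeasure P]
    (split : ∀ A : Set Ω, MeasurableSet A → 0 < P A →
      ∃ B : Set Ω, B ⊆ A ∧ MeasurableSet B ∧ 0 < P B ∧ P B < P A) :
    ∀ (n : ℕ) (S : Set Ω), MeasurableSet S → ∀ d : ENNReal, (n : ENNReal) * d ≤ P S →
      ∃ D : ℕ → Set Ω, (∀ k, k < n → D k ⊆ S ∧ MeasurableSet (D k) ∧ P (D k) = d) ∧
        (∀ i j, i < n → j < n → i ≠ j → Disjoint (D i) (D j)) := by
  intro n
  induction n with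
  | zero => exact fun S _ d _ => ⟨fun _ => ∅, fun k hk => absurd hk (Nat.not_lt_zero k), fun i j hi => absurd hi (Nat.not_lt_zero i)⟩
  | succ n ih =>
    intro S hS d hd
    push_cast at hd
    have hd1 : d ≤ P S := by
      refine le_trans ?_ hd
      calc d = 1 * d := (one_mul d).symm
      _ ≤ (n + 1 : ENNReal) * d := by
        apply mul_le_mul_left
        exact le_add_self
    have hd1' : ((n : ENNReal) + 1) * d ≤ P S := hd
    obtain ⟨D0, hD0S, hD0m, hD0P⟩ := msierpinski P split S hS d hd1
    have hdtop : d ≠ ⊤ := (hd1.trans_lt (measure_lt_top P S)).ne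
    have hsplitS : P (S \ D0) + d = P S := by
      rw [← hD0P]
      rw [← measure_union disjoint_sdiff_left hD0m]
      rw [Set.diff_union_of_subset hD0S]
    have hrest : (n : ENNReal) * d ≤ P (S \ D0) := by
      rw [← ENNReal.add_le_add_iff_right hdtop, hsplitS]
      calc (n : ENNReal) * d + d = ((n : ENNReal) + 1) * d := by ring
      _ ≤ P S := hd1'
    obtain ⟨D', hD', hdisj'⟩ := ih (S \ D0) (hS.diff hD0m) d hrest
    refine ⟨fun k => Nat.casesOn k D0 D', ?_, ?_⟩
    · intro k hk
      cases k with
      | zero => exact ⟨hD0S, hD0m, hD0P⟩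
      | succ j =>
        have hj : j < n := Nat.lt_of_succ_lt_succ hk
        exact ⟨(hD' j hj).1.trans diff_subset, (hD' j hj).2.1, (hD' j hj).2.2⟩
    · intro i j hi hj hne
      cases i with
      | zero =>
        cases j with
        | zero => exact absurd rfl hne
        | succ j' =>
          have hj' : j' < n := Nat.lt_of_succ_lt_succ hj
          exact (disjoint_sdiff_right.mono_right (hD' j' hj').1)
      | succ i' =>
        cases j with
        | zero =>
          have hi' : i' < n := Nat.lt_of_succ_lt_succ hi
          exact (disjoint_sdiff_right.mono_right (hD' i' hi').1).symm
        | succ j' =>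
          exact hdisj' i' j' (Nat.lt_of_succ_lt_succ hi) (Nat.lt_of_succ_lt_succ hj)
            (fun h => hne (by rw [h]))

open scoped Classical in
lemma mlaw_ite (P : Measure Ω) [IsProbabilityMeasure P] (a b : ℝ) (S : Set Ω)
    (hS : MeasurableSet S) :
    P.map (fun ω => if ω ∈ S then a else b) =
      P S • Measure.dirac a + P Sᶜ • Measure.dirac b := by
  classical
  have hm : Measurable (fun ω => if ω ∈ S then a else b) :=
    Measurable.ite hS measurable_const measurable_const
  ext E hE
  rw [Measure.map_apply hm hE]
  simp only [Measure.coe_add, Measure.coe_smul, Pi.add_apply, Pi.smul_apply, smul_eq_mul,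
    Measure.dirac_apply' _ hE]
  by_cases ha : a ∈ E <;> by_cases hb : b ∈ E
  · have : (fun ω => if ω ∈ S then a else b) ⁻¹' E = univ := by
      ext ω; by_cases hω : ω ∈ S <;> simp [hω, ha, hb]
    rw [this]
    simp [Set.indicator_of_mem ha, Set.indicator_of_mem hb, measure_add_measure_compl hS]
  · have : (fun ω => if ω ∈ S then a else b) ⁻¹' E = S := by
      ext ω; by_cases hω : ω ∈ S <;> simp [hω, ha, hb]
    rw [this]
    simp [Set.indicator_of_mem ha, Set.indicator_of_notMem hb]
  · have : (fun ω => if ω ∈ S then a else b) ⁻¹' E = Sᶜ := by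
      ext ω; by_cases hω : ω ∈ S <;> simp [hω, ha, hb]
    rw [this]
    simp [Set.indicator_of_notMem ha, Set.indicator_of_mem hb]
  · have : (fun ω => if ω ∈ S then a else b) ⁻¹' E = ∅ := by
      ext ω; by_cases hω : ω ∈ S <;> simp [hω, ha, hb]
    rw [this]
    simp [Set.indicator_of_notMem ha, Set.indicator_of_notMem hb]

lemma mavg_conc {Ω : Type} [MeasurableSpace Ω] (P : Measure Ω)
    (u : (Ω → ℝ) → ℝ)
    (hConc : ∀ ξ η : Ω → ℝ, (Measurable ξ ∧ ∃ C : ℝ, ∀ᵐ ω ∂P, |ξ ω| ≤ C) →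
      (Measurable η ∧ ∃ C : ℝ, ∀ᵐ ω ∂P, |η ω| ≤ C) → ∀ l : ℝ, 0 ≤ l → l ≤ 1 →
      l * u ξ + (1 - l) * u η ≤ u (fun ω => l * ξ ω + (1 - l) * η ω))
    (M : ℝ) :
    ∀ (n : ℕ), 0 < n → ∀ ζ : ℕ → Ω → ℝ, (∀ k, Measurable (ζ k)) →
      (∀ k ω, |ζ k ω| ≤ M) →
      (∑ k ∈ Finset.range n, u (ζ k)) / n ≤
        u (fun ω => (∑ k ∈ Finset.range n, ζ k ω) / n) := by
  intro n
  induction n with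
  | zero => intro h; exact absurd h (lt_irrefl 0)
  | succ n ih =>
    intro _ ζ hmeas hbdd
    rcases Nat.eq_zero_or_pos n with hn0 | hn0
    · subst hn0
      have h1 : (fun ω => (∑ k ∈ Finset.range 1, ζ k ω) / ((1 : ℕ) : ℝ)) = ζ 0 := by
        funext ω; simp
      rw [h1]
      simp
    · have hnR : (0 : ℝ) < n := by exact_mod_cast hn0
      have hn1R : (0 : ℝ) < (n : ℝ) + 1 := by positivity
      set ξ : Ω → ℝ := fun ω => (∑ k ∈ Finset.range n, ζ k ω) / n with hξ
      have hξm : Measurable ξ := by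
        apply Measurable.div_const
        exact Finset.measurable_sum _ (fun k _ => hmeas k)
      have hξb : ∀ ω, |ξ ω| ≤ M := by
        intro ω
        rw [hξ]
        simp only [abs_div, abs_of_pos hnR]
        rw [div_le_iff₀ hnR]
        calc |∑ k ∈ Finset.range n, ζ k ω| ≤ ∑ k ∈ Finset.range n, |ζ k ω| :=
          Finset.abs_sum_le_sum_abs _ _
        _ ≤ ∑ k ∈ Finset.range n, M := Finset.sum_le_sum (fun k _ => hbdd k ω)
        _ = M * n := by rw [Finset.sum_const, Finset.card_range]; ring
      set l : ℝ := (n : ℝ) / ((n : ℝ) + 1) with hl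
      have hl0 : 0 ≤ l := by positivity
      have hl1 : l ≤ 1 := by
        rw [hl, div_le_one hn1R]; linarith
      have hcomb := hConc ξ (ζ n) ⟨hξm, M, Filter.Eventually.of_forall hξb⟩
        ⟨hmeas n, M, Filter.Eventually.of_forall (fun ω => hbdd n ω)⟩ l hl0 hl1
      have hfun : (fun ω => l * ξ ω + (1 - l) * ζ n ω) =
          (fun ω => (∑ k ∈ Finset.range (n + 1), ζ k ω) / ((n : ℝ) + 1)) := by
        funext ω
        rw [Finset.sum_range_succ, hξ, hl]
        field_simp
        ring
      rw [hfun] at hcomb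
      have hcast : ((n + 1 : ℕ) : ℝ) = (n : ℝ) + 1 := by push_cast; ring
      rw [hcast]
      calc (∑ k ∈ Finset.range (n + 1), u (ζ k)) / ((n : ℝ) + 1)
          = l * ((∑ k ∈ Finset.range n, u (ζ k)) / n) + (1 - l) * u (ζ n) := by
            rw [Finset.sum_range_succ, hl]
            field_simp
            ring
        _ ≤ l * u ξ + (1 - l) * u (ζ n) := by
            have := ih hn0 ζ hmeas hbdd
            have h2 : ((n : ℕ) : ℝ) = (n : ℝ) := rfl
            apply add_le_add_left
            exact mul_le_mul_of_nonneg_left this hl0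
        _ ≤ _ := hcomb


theorem stmt_0 {Ω : Type} [MeasurableSpace Ω] (P : Measure Ω) [IsProbabilityMeasure P]
    (hAtomless : ∀ A : Set Ω, MeasurableSet A → 0 < P A →
      ∃ B : Set Ω, B ⊆ A ∧ MeasurableSet B ∧ 0 < P B ∧ P B < P A)
    (u : (Ω → ℝ) → ℝ)
    (hTI : ∀ ξ : Ω → ℝ, BddMeas P ξ → ∀ h : ℝ, u (fun ω => ξ ω + h) = u ξ + h)
    (hMono : ∀ ξ η : Ω → ℝ, BddMeas P ξ → BddMeas P η → (∀ᵐ ω ∂P, ξ ω ≤ η ω) → u ξ ≤ u η)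
    (hNorm : u (fun _ => 0) = 0)
    (hLaw : ∀ ξ η : Ω → ℝ, BddMeas P ξ → BddMeas P η → P.map ξ = P.map η → u ξ = u η)
    (hConc : ∀ ξ η : Ω → ℝ, BddMeas P ξ → BddMeas P η → ∀ l : ℝ, 0 ≤ l → l ≤ 1 →
      l * u ξ + (1 - l) * u η ≤ u (fun ω => l * ξ ω + (1 - l) * η ω))
    (hFatou : ∀ (ξs : ℕ → Ω → ℝ) (ξ : Ω → ℝ), (∀ n, BddMeas P (ξs n)) → BddMeas P ξ →
      (∃ C : ℝ, ∀ n, ∀ᵐ ω ∂P, |ξs n ω| ≤ C) →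
      TendstoInMeasure P ξs Filter.atTop ξ →
      Filter.limsup (fun n => u (ξs n)) Filter.atTop ≤ u ξ)
    (x y : ℝ) (hxy : x < y) (v : ℝ → ℝ)
    (hv : ∀ l : ℝ, 0 ≤ l → l ≤ 1 →
      ∃ ξ : Ω → ℝ, BddMeas P ξ ∧ HasDyadicLaw P ξ x y l ∧ v l = u ξ) :
    (∀ l : ℝ, 0 < l → l ≤ 1 → ContinuousWithinAt v (Set.Icc 0 1) l) ∧
      Tendsto v (nhdsWithin 1 (Set.Iio 1)) (nhds x) := by
  classical
  have hxy' : x ≤ y := hxy.le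
  have sier := msierpinski P hAtomless
  set M : ℝ := max |x| |y| with hM
  set X : Set Ω → Ω → ℝ := fun S ω => if ω ∈ S then x else y with hX
  have hXb : ∀ S ω, |X S ω| ≤ M := by
    intro S ω
    rw [hX]; dsimp only
    split
    · exact le_max_left _ _
    · exact le_max_right _ _
  have hXm : ∀ S : Set Ω, MeasurableSet S → Measurable (X S) := by
    intro S hS
    exact Measurable.ite hS measurable_const measurable_const
  have hXbm : ∀ S : Set Ω, MeasurableSet S → BddMeas P (X S) := by
    intro S hS
    exact ⟨hXm S hS, M, Filter.Eventually.of_forall (hXb S)⟩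
  have hcompl : ∀ S : Set Ω, MeasurableSet S → ∀ l : ℝ, 0 ≤ l →
      P S = ENNReal.ofReal l → P Sᶜ = ENNReal.ofReal (1 - l) := by
    intro S hS l hl0 hPS
    rw [measure_compl hS (measure_lt_top P S).ne, measure_univ, hPS,
      ENNReal.ofReal_sub 1 hl0, ENNReal.ofReal_one]
  have hdy : ∀ l : ℝ, 0 ≤ l → ∀ S : Set Ω, MeasurableSet S →
      P S = ENNReal.ofReal l → HasDyadicLaw P (X S) x y l := by
    intro l hl0 S hS hPS
    unfold HasDyadicLaw
    rw [hX]
    rw [mlaw_ite P x y S hS, hPS, hcompl S hS l hl0 hPS]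
  have vX : ∀ l : ℝ, 0 ≤ l → l ≤ 1 → ∀ S : Set Ω, MeasurableSet S →
      P S = ENNReal.ofReal l → v l = u (X S) := by
    intro l hl0 hl1 S hS hPS
    obtain ⟨ξ, hξbm, hξlaw, hveq⟩ := hv l hl0 hl1
    rw [hveq]
    exact hLaw ξ (X S) hξbm (hXbm S hS) (hξlaw.trans (hdy l hl0 S hS hPS).symm)
  have uconst : ∀ c : ℝ, u (fun _ => c) = c := by
    intro c
    have h := hTI (fun _ => 0) ⟨measurable_const, 0, Filter.Eventually.of_forall (by simp)⟩ c
    have h2 : (fun ω : Ω => (0 : ℝ) + c) = fun _ => c := by funext ω; ring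
    rw [h2, hNorm] at h
    linarith [h]
  have vmono : ∀ a b : ℝ, 0 ≤ a → a ≤ b → b ≤ 1 → v b ≤ v a := by
    intro a b ha hab hb1
    obtain ⟨B, _, hBm, hBP⟩ := sier univ MeasurableSet.univ (ENNReal.ofReal b)
      (by rw [measure_univ]; exact ENNReal.ofReal_le_one.mpr hb1)
    obtain ⟨A, hAB, hAm, hAP⟩ := sier B hBm (ENNReal.ofReal a)
      (by rw [hBP]; exact ENNReal.ofReal_le_ofReal hab)
    rw [vX b (ha.trans hab) hb1 B hBm hBP, vX a ha (hab.trans hb1) A hAm hAP]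
    apply hMono _ _ (hXbm B hBm) (hXbm A hAm)
    apply Filter.Eventually.of_forall
    intro ω
    rw [hX]; dsimp only
    by_cases h1 : ω ∈ A
    · simp [h1, hAB h1]
    · by_cases h2 : ω ∈ B <;> simp [h1, h2, hxy']
  have v1 : v 1 = x := by
    rw [vX 1 zero_le_one le_rfl univ MeasurableSet.univ (by simp)]
    have h2 : X univ = fun _ => x := by funext ω; rw [hX]; simp
    rw [h2, uconst]
  have keyK : ∀ (a b : ℝ) (n : ℕ), 0 < n → 0 ≤ a → a ≤ b → b ≤ 1 →
      (n : ℝ) * (b - a) ≤ b → v a ≤ v b + (y - x) / n := by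
    intro a b n hn ha hab hb1 hnb
    have hnR : (0 : ℝ) < n := by exact_mod_cast hn
    set d : ℝ := b - a with hd
    have hd0 : 0 ≤ d := sub_nonneg.mpr hab
    obtain ⟨B, _, hBm, hBP⟩ := sier univ MeasurableSet.univ (ENNReal.ofReal b)
      (by rw [measure_univ]; exact ENNReal.ofReal_le_one.mpr hb1)
    have hnd : (n : ENNReal) * ENNReal.ofReal d ≤ P B := by
      rw [hBP, ← ENNReal.ofReal_natCast n, ← ENNReal.ofReal_mul (by positivity : (0:ℝ) ≤ (n:ℝ))]
      exact ENNReal.ofReal_le_ofReal hnb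
    obtain ⟨D, hD, hdisj⟩ := mdisj_family P hAtomless n B hBm (ENNReal.ofReal d) hnd
    set E : ℕ → Set Ω := fun k => if k < n then D k else ∅ with hE
    have hEm : ∀ k, MeasurableSet (E k) := by
      intro k; rw [hE]; dsimp only
      split
      · exact (hD k (by assumption)).2.1
      · exact MeasurableSet.empty
    have hEsub : ∀ k, E k ⊆ B := by
      intro k; rw [hE]; dsimp only
      split
      · exact (hD k (by assumption)).1
      · exact empty_subset _
    set ζ : ℕ → Ω → ℝ := fun k => X (B \ E k) with hζ
    have hζm : ∀ k, Measurable (ζ k) := fun k => hXm _ (hBm.diff (hEm k))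
    have hζb : ∀ k ω, |ζ k ω| ≤ M := fun k ω => hXb _ ω
    have hζu : ∀ k, k < n → u (ζ k) = v a := by
      intro k hk
      have hEk : E k = D k := by rw [hE]; simp [hk]
      have hPE : P (B \ E k) = ENNReal.ofReal a := by
        rw [measure_diff (hEsub k) (hEm k).nullMeasurableSet (measure_lt_top P (E k)).ne,
          hBP, hEk, (hD k hk).2.2, ← ENNReal.ofReal_sub b hd0]
        congr 1
        rw [hd]; ring
      exact (vX a ha (hab.trans hb1) (B \ E k) (hBm.diff (hEm k)) hPE).symm
    -- pointwise bound on the sum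
    have hpt : ∀ ω, (∑ k ∈ Finset.range n, ζ k ω) ≤ n * (X B ω + (y - x) / n) := by
      intro ω
      by_cases hω : ω ∈ B
      · have hXB : X B ω = x := by rw [hX]; simp [hω]
        -- ζ k ω = if ω ∈ B \ E k then x else y; ω ∈ E k for at most one k < n
        have hterm : ∀ k, ζ k ω = y - (y - x) * (if ω ∈ B \ E k then (1:ℝ) else 0) := by
          intro k
          rw [hζ]; dsimp only
          rw [hX]; dsimp only
          split <;> ring
        have hsum : ∑ k ∈ Finset.range n, ζ k ω =
            n * y - (y - x) * ∑ k ∈ Finset.range n, (if ω ∈ B \ E k then (1:ℝ) else 0) := by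
          rw [Finset.sum_congr rfl (fun k _ => hterm k), Finset.sum_sub_distrib,
            Finset.sum_const, Finset.card_range, ← Finset.mul_sum, nsmul_eq_mul]
        have hind : (n : ℝ) - 1 ≤ ∑ k ∈ Finset.range n, (if ω ∈ B \ E k then (1:ℝ) else 0) := by
          by_cases hex : ∃ k0, k0 ∈ Finset.range n ∧ ω ∈ D k0
          · obtain ⟨k0, hk0mem, hk0⟩ := hex
            have hstep : ∀ k ∈ (Finset.range n).erase k0,
                (if ω ∈ B \ E k then (1:ℝ) else 0) = 1 := by
              intro k hk
              have hkr := Finset.mem_of_mem_erase hk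
              have hkn := Finset.mem_range.mp hkr
              have hkne := Finset.ne_of_mem_erase hk
              have hEk : E k = D k := by rw [hE]; simp [hkn]
              have hnot : ω ∉ D k := by
                intro hcon
                exact absurd (Set.disjoint_left.mp
                  (hdisj k k0 hkn (Finset.mem_range.mp hk0mem) hkne) hcon) (fun hh => hh hk0)
              rw [if_pos ⟨hω, by rw [hEk]; exact hnot⟩]
            calc (n : ℝ) - 1 = ∑ k ∈ (Finset.range n).erase k0, (1 : ℝ) := by
                  rw [Finset.sum_const, Finset.card_erase_of_mem hk0mem, Finset.card_range,
                    nsmul_eq_mul, Nat.cast_sub hn, Nat.cast_one, mul_one]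
              _ = ∑ k ∈ (Finset.range n).erase k0, (if ω ∈ B \ E k then (1:ℝ) else 0) :=
                  (Finset.sum_congr rfl hstep).symm
              _ ≤ ∑ k ∈ Finset.range n, (if ω ∈ B \ E k then (1:ℝ) else 0) := by
                  apply Finset.sum_le_sum_of_subset_of_nonneg (Finset.erase_subset _ _)
                  intro i _ _
                  split <;> norm_num
          · push_neg at hex
            have hall : ∀ k ∈ Finset.range n, (if ω ∈ B \ E k then (1:ℝ) else 0) = 1 := by
              intro k hk
              have hkn := Finset.mem_range.mp hk
              have hEk : E k = D k := by rw [hE]; simp [hkn]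
              rw [if_pos ⟨hω, by rw [hEk]; exact hex k hk⟩]
            rw [Finset.sum_congr rfl hall, Finset.sum_const, Finset.card_range, nsmul_eq_mul,
              mul_one]
            linarith
        rw [hsum, hXB]
        have hyx : 0 ≤ y - x := by linarith
        have h1 : (y - x) * ((n:ℝ) - 1) ≤ (y - x) * ∑ k ∈ Finset.range n,
            (if ω ∈ B \ E k then (1:ℝ) else 0) := mul_le_mul_of_nonneg_left hind hyx
        have h2 : (n:ℝ) * (x + (y - x)/n) = n * y - (y - x) * ((n:ℝ) - 1) := by
          field_simp
          ring
        linarith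
      · have hXB : X B ω = y := by rw [hX]; simp [hω]
        have hterm : ∀ k ∈ Finset.range n, ζ k ω = y := by
          intro k _
          rw [hζ]; dsimp only
          rw [hX]; dsimp only
          rw [if_neg (fun hcon => hω hcon.1)]
        rw [Finset.sum_congr rfl hterm, Finset.sum_const, Finset.card_range, nsmul_eq_mul, hXB]
        have hyx : 0 ≤ (y - x)/n := div_nonneg (by linarith) hnR.le
        nlinarith
    -- concavity: v a ≤ u (avg)
    have havg := mavg_conc P u hConc M n hn ζ hζm hζb
    have hsumu : ∑ k ∈ Finset.range n, u (ζ k) = n * v a := by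
      rw [Finset.sum_congr rfl (fun k hk => hζu k (Finset.mem_range.mp hk)),
        Finset.sum_const, Finset.card_range, nsmul_eq_mul]
    rw [hsumu, mul_div_cancel_left₀ _ hnR.ne'] at havg
    -- monotonicity: u (avg) ≤ u (X B + (y-x)/n)
    have havgm : Measurable (fun ω => (∑ k ∈ Finset.range n, ζ k ω) / (n:ℝ)) := by
      apply Measurable.div_const
      exact Finset.measurable_sum _ (fun k _ => hζm k)
    have havgb : ∀ ω, |(∑ k ∈ Finset.range n, ζ k ω) / (n:ℝ)| ≤ M := by
      intro ω
      rw [abs_div, abs_of_pos hnR, div_le_iff₀ hnR]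
      calc |∑ k ∈ Finset.range n, ζ k ω| ≤ ∑ k ∈ Finset.range n, |ζ k ω| :=
        Finset.abs_sum_le_sum_abs _ _
      _ ≤ ∑ k ∈ Finset.range n, M := Finset.sum_le_sum (fun k _ => hζb k ω)
      _ = M * n := by rw [Finset.sum_const, Finset.card_range, nsmul_eq_mul]; ring
    have hmono2 : u (fun ω => (∑ k ∈ Finset.range n, ζ k ω) / (n:ℝ)) ≤
        u (fun ω => X B ω + (y - x)/n) := by
      apply hMono _ _ ⟨havgm, M, Filter.Eventually.of_forall havgb⟩
        ⟨(hXm B hBm).add_const _, M + (y-x)/n,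
          Filter.Eventually.of_forall (fun ω => by
            have := hXb B ω
            have hyx : 0 ≤ (y - x)/n := div_nonneg (by linarith) hnR.le
            rw [abs_le] at this ⊢
            constructor <;> nlinarith [this.1, this.2])⟩
      apply Filter.Eventually.of_forall
      intro ω
      rw [div_le_iff₀ hnR, mul_comm]
      exact hpt ω
    have hshift : u (fun ω => X B ω + (y - x)/n) = u (X B) + (y - x)/n :=
      hTI (X B) (hXbm B hBm) _
    have hvb : v b = u (X B) := vX b (ha.trans hab) hb1 B hBm hBP
    calc v a ≤ u (fun ω => (∑ k ∈ Finset.range n, ζ k ω) / (n:ℝ)) := havg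
    _ ≤ u (X B) + (y - x)/n := by rw [← hshift]; exact hmono2
    _ = v b + (y - x)/n := by rw [hvb]
  have hchoose : ∀ ε : ℝ, 0 < ε → ∃ n : ℕ, 0 < n ∧ (y - x)/n < ε := by
    intro ε hε
    obtain ⟨n, hn⟩ := exists_nat_gt ((y - x)/ε)
    have h1 : 0 < (y - x)/ε := div_pos (by linarith) hε
    have hnR : (0:ℝ) < n := h1.trans hn
    refine ⟨n, by exact_mod_cast hnR, ?_⟩
    rw [div_lt_iff₀ hnR]
    rw [div_lt_iff₀ hε] at hn
    linarith
  constructor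
  · intro l hl0 hl1
    rw [ContinuousWithinAt, Metric.tendsto_nhdsWithin_nhds]
    intro ε hε
    obtain ⟨n, hn0, hgap⟩ := hchoose ε hε
    have hnR : (0:ℝ) < n := by exact_mod_cast hn0
    refine ⟨l/(2*n), by positivity, ?_⟩
    intro t ht hdist
    obtain ⟨ht0, ht1⟩ := ht
    rw [Real.dist_eq] at hdist ⊢
    have hmul : (n:ℝ) * (l/(2*n)) = l/2 := by field_simp
    rcases le_total t l with hcase | hcase
    · have habs : |t - l| = l - t := by rw [abs_sub_comm]; exact abs_of_nonneg (by linarith)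
      rw [habs] at hdist
      have h2 : (n:ℝ) * (l - t) ≤ l := by
        have h3 : (n:ℝ) * (l - t) < n * (l/(2*n)) :=
          mul_lt_mul_of_pos_left hdist hnR
        rw [hmul] at h3
        linarith
      have h3 := keyK t l n hn0 ht0 hcase hl1 h2
      have h4 := vmono t l ht0 hcase hl1
      rw [abs_of_nonneg (by linarith : (0:ℝ) ≤ v t - v l)]
      linarith
    · have habs : |t - l| = t - l := abs_of_nonneg (by linarith)
      rw [habs] at hdist
      have h2 : (n:ℝ) * (t - l) ≤ t := by
        have h3 : (n:ℝ) * (t - l) < n * (l/(2*n)) :=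
          mul_lt_mul_of_pos_left hdist hnR
        rw [hmul] at h3
        linarith
      have h3 := keyK l t n hn0 hl0.le hcase ht1 h2
      have h4 := vmono l t hl0.le hcase ht1
      rw [abs_of_nonpos (by linarith : v t - v l ≤ 0)]
      linarith
  · rw [Metric.tendsto_nhdsWithin_nhds]
    intro ε hε
    obtain ⟨n, hn0, hgap⟩ := hchoose ε hε
    have hnR : (0:ℝ) < n := by exact_mod_cast hn0
    have hn1 : (1:ℝ) ≤ n := by exact_mod_cast hn0
    refine ⟨1/(2*n), by positivity, ?_⟩
    intro t ht hdist
    have ht1 : t < 1 := ht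
    rw [Real.dist_eq] at hdist ⊢
    have habs : |t - 1| = 1 - t := by rw [abs_sub_comm]; exact abs_of_nonneg (by linarith)
    rw [habs] at hdist
    have hmul : (n:ℝ) * (1/(2*n)) = 1/2 := by field_simp
    have hhalf : 1/(2*(n:ℝ)) ≤ 1/2 := by
      rw [div_le_div_iff₀ (by positivity) (by norm_num)]
      linarith
    have ht0 : 0 ≤ t := by linarith
    have h2 : (n:ℝ) * (1 - t) ≤ 1 := by
      have h3 : (n:ℝ) * (1 - t) < n * (1/(2*n)) := mul_lt_mul_of_pos_left hdist hnR
      rw [hmul] at h3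
      linarith
    have h3 := keyK t 1 n hn0 ht0 ht1.le le_rfl h2
    have h4 := vmono t 1 ht0 ht1.le le_rfl
    rw [v1] at h3 h4
    rw [abs_of_nonneg (by linarith : (0:ℝ) ≤ v t - x)]
    linarith
end

section
/- Let u be a concave, law-determined monetary utility function on L^∞ of an atomless probability space, satisfying the Fatou property. Suppose there exist a > 0 and a sequence k_n < 0 with k_n ↑ 0 such that for every n and every α ∈ (0,1) one has u(α δ_{k_n} + (1−α) δ_a) < 0. Then u(ξ) = ess inf ξ for every ξ ∈ L^∞. -/
open MeasureTheory Filter Set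

/-- The essential infimum of `ξ` with respect to `P`. -/
noncomputable def essInfR {Ω : Type} [MeasurableSpace Ω] (P : Measure Ω) (ξ : Ω → ℝ) : ℝ :=
  sSup {c : ℝ | ∀ᵐ ω ∂P, c ≤ ξ ω}

attribute [local instance] Classical.propDecidable

lemma bddMeas_ind {Ω : Type} [MeasurableSpace Ω] (P : Measure Ω) {A : Set Ω}
    (hA : MeasurableSet A) (x y : ℝ) : BddMeas P (fun ω => if ω ∈ A then x else y) := by
  refine ⟨Measurable.ite hA measurable_const measurable_const,
    max |x| |y|, ae_of_all _ fun ω => ?_⟩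
  by_cases h : ω ∈ A
  · simp only [h, if_true]; exact le_max_left _ _
  · simp only [h, if_false]; exact le_max_right _ _

lemma map_ind {Ω : Type} [MeasurableSpace Ω] (P : Measure Ω) [IsProbabilityMeasure P]
    {A : Set Ω} (hA : MeasurableSet A) (x y : ℝ) :
    P.map (fun ω => if ω ∈ A then x else y)
      = ENNReal.ofReal (P A).toReal • Measure.dirac x
        + ENNReal.ofReal (1 - (P A).toReal) • Measure.dirac y := by
  have hmeas : Measurable (fun ω => if ω ∈ A then x else y) :=
    Measurable.ite hA measurable_const measurable_const
  have hP : ENNReal.ofReal (P A).toReal = P A := ENNReal.ofReal_toReal (measure_ne_top _ _)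
  have hPc : ENNReal.ofReal (1 - (P A).toReal) = P Aᶜ := by
    have h1 : P Aᶜ = 1 - P A := prob_compl_eq_one_sub hA
    have h2 : (P Aᶜ).toReal = 1 - (P A).toReal := by
      rw [h1, ENNReal.toReal_sub_of_le prob_le_one ENNReal.one_ne_top, ENNReal.toReal_one]
    rw [← h2]; exact ENNReal.ofReal_toReal (measure_ne_top _ _)
  ext s hs
  rw [Measure.map_apply hmeas hs, Measure.add_apply, Measure.smul_apply, Measure.smul_apply,
    Measure.dirac_apply' _ hs, Measure.dirac_apply' _ hs, hP, hPc]
  have hpre : (fun ω => if ω ∈ A then x else y) ⁻¹' s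
      = (if x ∈ s then A else ∅) ∪ (if y ∈ s then Aᶜ else ∅) := by
    ext ω
    by_cases hω : ω ∈ A <;> by_cases hx : x ∈ s <;> by_cases hy : y ∈ s <;>
      simp [hω, hx, hy, Set.mem_preimage]
  rw [hpre]
  by_cases hx : x ∈ s <;> by_cases hy : y ∈ s <;>
    simp [hx, hy, Set.indicator_of_mem, Set.indicator_of_notMem]
  exact (prob_add_prob_compl hA).symm

theorem stmt_1 {Ω : Type} [MeasurableSpace Ω] (P : Measure Ω) [IsProbabilityMeasure P]
    (u : (Ω → ℝ) → ℝ)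
    (hAtomless : ∀ A : Set Ω, MeasurableSet A → 0 < P A →
      ∃ B : Set Ω, B ⊆ A ∧ MeasurableSet B ∧ 0 < P B ∧ P B < P A)
    (hTI : ∀ ξ : Ω → ℝ, BddMeas P ξ → ∀ h : ℝ, u (fun ω => ξ ω + h) = u ξ + h)
    (hMono : ∀ ξ η : Ω → ℝ, BddMeas P ξ → BddMeas P η → (∀ᵐ ω ∂P, ξ ω ≤ η ω) → u ξ ≤ u η)
    (hNorm : u (fun _ => 0) = 0)
    (hLaw : ∀ ξ η : Ω → ℝ, BddMeas P ξ → BddMeas P η → P.map ξ = P.map η → u ξ = u η)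
    (hConc : ∀ ξ η : Ω → ℝ, BddMeas P ξ → BddMeas P η → ∀ l : ℝ, 0 ≤ l → l ≤ 1 →
      l * u ξ + (1 - l) * u η ≤ u (fun ω => l * ξ ω + (1 - l) * η ω))
    (hFatou : ∀ (ξs : ℕ → Ω → ℝ) (ξ : Ω → ℝ), (∀ n, BddMeas P (ξs n)) → BddMeas P ξ →
      (∃ C : ℝ, ∀ n, ∀ᵐ ω ∂P, |ξs n ω| ≤ C) →
      TendstoInMeasure P ξs Filter.atTop ξ →
      Filter.limsup (fun n => u (ξs n)) Filter.atTop ≤ u ξ)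
    (a : ℝ) (ha : 0 < a) (k : ℕ → ℝ) (hkneg : ∀ n, k n < 0) (hkmono : Monotone k)
    (hklim : Tendsto k Filter.atTop (nhds 0))
    (hyp : ∀ n : ℕ, ∀ α : ℝ, 0 < α → α < 1 →
      ∃ ξ : Ω → ℝ, BddMeas P ξ ∧ HasDyadicLaw P ξ (k n) a α ∧ u ξ < 0) :
    ∀ ξ : Ω → ℝ, BddMeas P ξ → u ξ = essInfR P ξ := by
  -- constants
  have hconstBdd : ∀ c : ℝ, BddMeas P (fun _ : Ω => c) :=
    fun c => ⟨measurable_const, |c|, ae_of_all _ fun _ => le_rfl⟩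
  have huconst : ∀ c : ℝ, u (fun _ => c) = c := by
    intro c
    have h := hTI (fun _ => 0) (hconstBdd 0) c
    simpa [hNorm] using h
  -- the key lemma: two-valued variables with a negative value on a nontrivial set
  -- have nonpositive (in fact negative) utility
  have hind : ∀ A : Set Ω, MeasurableSet A → 0 < P A → P A < 1 →
      ∀ x : ℝ, x < 0 → ∀ b : ℝ, 0 < b → u (fun ω => if ω ∈ A then x else b) < 0 := by
    have step1 : ∀ A : Set Ω, MeasurableSet A → 0 < P A → P A < 1 → ∀ m : ℕ,
        u (fun ω => if ω ∈ A then k m else a) < 0 := by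
      intro A hA h0 h1 m
      have hα0 : 0 < (P A).toReal := ENNReal.toReal_pos h0.ne' (measure_ne_top _ _)
      have hα1 : (P A).toReal < 1 := by
        have := (ENNReal.toReal_lt_toReal (measure_ne_top _ _) ENNReal.one_ne_top).mpr h1
        simpa using this
      obtain ⟨ξ₀, hξ₀b, hξ₀law, hξ₀u⟩ := hyp m ((P A).toReal) hα0 hα1
      have hmap : P.map (fun ω => if ω ∈ A then k m else a) = P.map ξ₀ := by
        rw [map_ind P hA (k m) a, hξ₀law]
      rw [hLaw _ ξ₀ (bddMeas_ind P hA _ _) hξ₀b hmap]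
      exact hξ₀u
    intro A hA h0 h1 x hx b hb
    set b' := max a b with hb'def
    have hb'a : a ≤ b' := le_max_left _ _
    have hb'0 : 0 < b' := lt_of_lt_of_le ha hb'a
    set μ := a / b' with hμdef
    have hμ0 : 0 < μ := div_pos ha hb'0
    have hμ1 : μ ≤ 1 := (div_le_one hb'0).mpr hb'a
    have hμb' : μ * b' = a := div_mul_cancel₀ a hb'0.ne'
    set x' := μ * x with hx'def
    have hx'neg : x' < 0 := mul_neg_of_pos_of_neg hμ0 hx
    obtain ⟨m, hm⟩ : ∃ m, x' < k m := (hklim.eventually (eventually_gt_nhds hx'neg)).exists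
    have h2 : u (fun ω => if ω ∈ A then x' else a) ≤ u (fun ω => if ω ∈ A then k m else a) := by
      refine hMono _ _ (bddMeas_ind P hA _ _) (bddMeas_ind P hA _ _)
        (ae_of_all _ fun ω => ?_)
      by_cases h : ω ∈ A <;> simp [h, hm.le]
    have h3 := hConc (fun ω => if ω ∈ A then x else b') (fun _ => 0)
      (bddMeas_ind P hA _ _) (hconstBdd 0) μ hμ0.le hμ1
    have hfun : (fun ω => μ * (if ω ∈ A then x else b') + (1 - μ) * (fun _ : Ω => (0:ℝ)) ω)
        = (fun ω => if ω ∈ A then x' else a) := by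
      funext ω
      by_cases h : ω ∈ A <;> simp [h, hx'def, hμb']
    rw [hfun, hNorm, mul_zero, add_zero] at h3
    have h5 : u (fun ω => if ω ∈ A then x else b) ≤ u (fun ω => if ω ∈ A then x else b') := by
      refine hMono _ _ (bddMeas_ind P hA _ _) (bddMeas_ind P hA _ _)
        (ae_of_all _ fun ω => ?_)
      by_cases h : ω ∈ A <;> simp [h, hb'def, le_max_right]
    have hkm0 := step1 A hA h0 h1 m
    nlinarith [h2, h3, h5, hkm0, hμ0]
  -- main proof
  intro ξ hξ
  obtain ⟨hξm, C, hC⟩ := hξ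
  set S := {c : ℝ | ∀ᵐ ω ∂P, c ≤ ξ ω} with hSdef
  have hSne : (-C) ∈ S := hC.mono fun ω h => neg_le_of_abs_le h
  have hPne : (ae P).NeBot := ae_neBot.mpr (IsProbabilityMeasure.ne_zero P)
  have hSbdd : BddAbove S := by
    refine ⟨C, fun c hc => ?_⟩
    have hc' : ∀ᵐ ω ∂P, c ≤ ξ ω := hc
    obtain ⟨ω, h1, h2⟩ := (hc'.and hC).exists
    exact h1.trans (le_of_abs_le h2)
  have hessdef : essInfR P ξ = sSup S := rfl
  have hlower : essInfR P ξ ≤ u ξ := by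
    rw [hessdef]
    refine csSup_le ⟨-C, hSne⟩ fun c hc => ?_
    have := hMono (fun _ => c) ξ (hconstBdd c) ⟨hξm, C, hC⟩ hc
    rwa [huconst c] at this
  have hupper : u ξ ≤ essInfR P ξ := by
    by_contra hlt
    push_neg at hlt
    rw [hessdef] at hlt
    set m := sSup S with hmdef
    set δ := u ξ - m with hδdef
    have hδ0 : 0 < δ := sub_pos.mpr hlt
    set ε := δ / 4 with hεdef
    have hε0 : 0 < ε := by positivity
    set A := {ω | ξ ω < m + ε} with hAdef
    have hAmeas : MeasurableSet A := measurableSet_lt hξm measurable_const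
    have hA0 : 0 < P A := by
      rcases (zero_le : (0:ENNReal) ≤ P A).lt_or_eq with h | h
      · exact h
      · exfalso
        have hmem : (m + ε) ∈ S := by
          rw [hSdef, Set.mem_setOf_eq, ae_iff]
          have : {ω | ¬ m + ε ≤ ξ ω} = A := by
            ext ω; simp [hAdef, not_le]
          rw [this, ← h]
        have := le_csSup hSbdd hmem
        linarith
    rcases lt_or_ge (P A) 1 with hA1 | hA1
    · set C' := max C (m + 2 * ε + 1) with hC'def
      have hC'big : m + 2 * ε + 1 ≤ C' := le_max_right _ _
      set b := C' - (m + 2 * ε) with hbdef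
      have hb0 : 0 < b := by rw [hbdef]; linarith
      have hfun2 : (fun ω => (if ω ∈ A then -ε else b) + (m + 2 * ε))
          = (fun ω => if ω ∈ A then m + ε else C') := by
        funext ω
        by_cases h : ω ∈ A <;> simp [h, hbdef] <;> ring
      have hub : u ξ ≤ u (fun ω => if ω ∈ A then m + ε else C') := by
        refine hMono ξ _ ⟨hξm, C, hC⟩ (bddMeas_ind P hAmeas _ _) (hC.mono fun ω h => ?_)
        by_cases hω : ω ∈ A
        · simp only [hω, if_true]
          exact le_of_lt hω
        · simp only [hω, if_false]
          exact (le_of_abs_le h).trans (le_max_left _ _)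
      have hTIeq := hTI (fun ω => if ω ∈ A then -ε else b) (bddMeas_ind P hAmeas _ _)
        (m + 2 * ε)
      rw [hfun2] at hTIeq
      have hneg := hind A hAmeas hA0 hA1 (-ε) (by linarith) b hb0
      rw [hTIeq] at hub
      have : u ξ = m + δ := by rw [hδdef]; ring
      linarith
    · have hA1' : P A = 1 := le_antisymm prob_le_one hA1
      have hcompl : P Aᶜ = 0 := by
        rw [prob_compl_eq_one_sub hAmeas, hA1', tsub_self]
      have hae : ∀ᵐ ω ∂P, ξ ω ≤ m + ε := by
        rw [ae_iff]
        refine measure_mono_null (fun ω hω => ?_) hcompl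
        simp only [Set.mem_setOf_eq, not_le] at hω
        simp only [Set.mem_compl_iff, hAdef, Set.mem_setOf_eq, not_lt]
        linarith
      have := hMono ξ (fun _ => m + ε) ⟨hξm, C, hC⟩ (hconstBdd _) hae
      rw [huconst] at this
      linarith
  exact le_antisymm hupper hlower
end

section
/- Let u be a concave, law-determined monetary utility function on L^∞ of an atomless probability space, satisfying the Fatou property. Suppose there exist a > 0, a sequence k_n → −∞ and α_n ∈ (0,1) such that u(α_n δ_{k_n} + (1−α_n) δ_a) ≥ 0 for every n. Then u has the weak compactness property: for every m ≥ 0 the family of densities {dℚ/dℙ : ℚ ≪ ℙ a probability measure with c(ℚ) ≤ m} is uniformly integrable in L^1(ℙ). -/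
open MeasureTheory Filter Set
open scoped ENNReal

/-- `c(Q) ≤ m` for the penalty function `c(Q) = sup_{ξ ∈ L^∞} (u(ξ) - E_Q[ξ])`. -/
def PenaltyLE {Ω : Type} [MeasurableSpace Ω] (P : Measure Ω) (u : (Ω → ℝ) → ℝ)
    (Q : Measure Ω) (m : ℝ) : Prop :=
  ∀ ξ : Ω → ℝ, BddMeas P ξ → u ξ - ∫ ω, ξ ω ∂Q ≤ m

/-- The weak compactness property: for every `m ≥ 0`, the family of densities
`{dQ/dP : Q ≪ P a probability measure with c(Q) ≤ m}` is uniformly integrable in `L¹(P)`. -/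
def WCProperty {Ω : Type} [MeasurableSpace Ω] (P : Measure Ω) (u : (Ω → ℝ) → ℝ) : Prop :=
  ∀ m : ℝ, 0 ≤ m → ∀ ε : ℝ, 0 < ε → ∃ δ : ℝ, 0 < δ ∧
    ∀ Q : Measure Ω, IsProbabilityMeasure Q → Q ≪ P → PenaltyLE P u Q m →
      ∀ A : Set Ω, MeasurableSet A → P A < ENNReal.ofReal δ →
        ∫ ω in A, (Q.rnDeriv P ω).toReal ∂P < ε

variable {Ω : Type} [MeasurableSpace Ω]

/-- halving -/
lemma my_halving (P : Measure Ω) [IsProbabilityMeasure P]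
    (hAtomless : ∀ A : Set Ω, MeasurableSet A → 0 < P A →
      ∃ B : Set Ω, B ⊆ A ∧ MeasurableSet B ∧ 0 < P B ∧ P B < P A)
    (A : Set Ω) (hA : MeasurableSet A) (h0 : 0 < P A) :
    ∃ B ⊆ A, MeasurableSet B ∧ 0 < P B ∧ P B ≤ P A / 2 := by
  obtain ⟨B, hBA, hBm, hB0, hBlt⟩ := hAtomless A hA h0
  rcases le_or_gt (P B) (P A / 2) with h | h
  · exact ⟨B, hBA, hBm, hB0, h⟩
  · refine ⟨A \ B, diff_subset, hA.diff hBm, ?_, ?_⟩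
    · have hd : P (A \ B) = P A - P B := measure_diff hBA hBm.nullMeasurableSet (measure_ne_top P B)
      rw [hd]
      exact tsub_pos_of_lt hBlt
    · have hd : P (A \ B) = P A - P B := measure_diff hBA hBm.nullMeasurableSet (measure_ne_top P B)
      rw [hd, tsub_le_iff_right]
      calc P A = P A / 2 + P A / 2 := (ENNReal.add_halves _).symm
        _ ≤ P A / 2 + P B := by gcongr

lemma my_small (P : Measure Ω) [IsProbabilityMeasure P]
    (hAtomless : ∀ A : Set Ω, MeasurableSet A → 0 < P A →
      ∃ B : Set Ω, B ⊆ A ∧ MeasurableSet B ∧ 0 < P B ∧ P B < P A)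
    (A : Set Ω) (hA : MeasurableSet A) (h0 : 0 < P A) (ε : ℝ≥0∞) (hε : ε ≠ 0) :
    ∃ B ⊆ A, MeasurableSet B ∧ 0 < P B ∧ P B ≤ ε := by
  have key : ∀ n : ℕ, ∃ B ⊆ A, MeasurableSet B ∧ 0 < P B ∧ P B ≤ 2⁻¹ ^ n := by
    intro n
    induction n with
    | zero => exact ⟨A, subset_rfl, hA, h0, by simpa using prob_le_one⟩
    | succ n ih =>
      obtain ⟨B, hBA, hBm, hB0, hBle⟩ := ih
      obtain ⟨C, hCB, hCm, hC0, hCle⟩ := my_halving P hAtomless B hBm hB0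
      refine ⟨C, hCB.trans hBA, hCm, hC0, ?_⟩
      calc P C ≤ P B / 2 := hCle
        _ ≤ 2⁻¹ ^ n / 2 := by gcongr
        _ = 2⁻¹ ^ (n + 1) := by rw [pow_succ, ENNReal.div_eq_inv_mul, mul_comm]
  obtain ⟨n, hn⟩ := ENNReal.exists_inv_two_pow_lt hε
  obtain ⟨B, hBA, hBm, hB0, hBle⟩ := key n
  exact ⟨B, hBA, hBm, hB0, hBle.trans hn.le⟩

lemma my_sierpinski (P : Measure Ω) [IsProbabilityMeasure P]
    (hAtomless : ∀ A : Set Ω, MeasurableSet A → 0 < P A →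
      ∃ B : Set Ω, B ⊆ A ∧ MeasurableSet B ∧ 0 < P B ∧ P B < P A)
    (A : Set Ω) (hA : MeasurableSet A) (r : ℝ≥0∞) (hr : r ≤ P A) :
    ∃ B ⊆ A, MeasurableSet B ∧ P B = r := by
  classical
  -- the collection of admissible sets
  set Good : Set (Set Ω) := {s | s ⊆ A ∧ MeasurableSet s ∧ P s ≤ r} with hGood
  have hr_top : r ≠ ∞ := (hr.trans_lt (measure_lt_top P A)).ne
  -- near-maximizing extension
  have key : ∀ (n : ℕ) (s : Set Ω), s ∈ Good →
      ∃ C ∈ Good, s ⊆ C ∧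
        ∀ C' ∈ Good, s ⊆ C' → P C' ≤ P C + (↑(n + 1) : ℝ≥0∞)⁻¹ := by
    intro n s hs
    set t : ℝ≥0∞ := sSup ((fun C => P C) '' {C | C ∈ Good ∧ s ⊆ C}) with ht
    have htle : ∀ C' ∈ Good, s ⊆ C' → P C' ≤ t := fun C' h1 h2 =>
      le_sSup ⟨C', ⟨h1, h2⟩, rfl⟩
    have ht_r : t ≤ r := by
      apply sSup_le
      rintro b ⟨C', ⟨hC', _⟩, rfl⟩
      exact hC'.2.2
    rcases le_or_gt t ((↑(n + 1) : ℝ≥0∞)⁻¹) with h | h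
    · exact ⟨s, hs, subset_rfl, fun C' h1 h2 =>
        (htle C' h1 h2).trans (h.trans le_add_self)⟩
    · have hlt : t - (↑(n + 1) : ℝ≥0∞)⁻¹ < t := by
        refine ENNReal.sub_lt_self ?_ ?_ ?_
        · exact (ht_r.trans_lt (hr.trans_lt (measure_lt_top P A))).ne
        · exact (lt_of_le_of_lt zero_le h).ne'
        · exact ENNReal.inv_ne_zero.mpr (ENNReal.natCast_ne_top _)
      obtain ⟨b, ⟨C, ⟨hC1, hC2⟩, rfl⟩, hb⟩ := lt_sSup_iff.mp hlt
      refine ⟨C, hC1, hC2, fun C' h1 h2 => ?_⟩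
      have : t ≤ P C + (↑(n + 1) : ℝ≥0∞)⁻¹ := tsub_le_iff_right.mp hb.le
      exact (htle C' h1 h2).trans this
  -- choose the extension function
  choose F hF1 hF2 hF3 using key
  -- build the increasing sequence
  let seq : ℕ → {s : Set Ω // s ∈ Good} := fun n =>
    Nat.rec (motive := fun _ => {s : Set Ω // s ∈ Good}) ⟨∅, by simp [hGood]⟩ (fun n s => ⟨F n s.1 s.2, hF1 n s.1 s.2⟩) n
  have hseq_succ : ∀ n, (seq n).1 ⊆ (seq (n + 1)).1 := fun n => hF2 n (seq n).1 (seq n).2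
  have hseq_mono : Monotone (fun n => (seq n).1) := monotone_nat_of_le_succ hseq_succ
  set B : Set Ω := ⋃ n, (seq n).1 with hB
  have hBA : B ⊆ A := iUnion_subset fun n => (seq n).2.1
  have hBm : MeasurableSet B := MeasurableSet.iUnion fun n => (seq n).2.2.1
  have hPB : P B = ⨆ n, P (seq n).1 :=
    (hseq_mono.directed_le).measure_iUnion
  have hPBr : P B ≤ r := by
    rw [hPB]; exact iSup_le fun n => (seq n).2.2.2
  refine ⟨B, hBA, hBm, ?_⟩
  by_contra hne
  have hlt : P B < r := lt_of_le_of_ne hPBr hne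
  -- find a small positive piece of A \ B
  have hdiff : 0 < P (A \ B) := by
    have : P (A \ B) = P A - P B := measure_diff hBA hBm.nullMeasurableSet (measure_ne_top P B)
    rw [this]
    exact tsub_pos_of_lt (hlt.trans_le hr)
  obtain ⟨D, hDAB, hDm, hD0, hDle⟩ :=
    my_small P hAtomless (A \ B) (hA.diff hBm) hdiff (r - P B) (tsub_pos_of_lt hlt).ne'
  set d : ℝ≥0∞ := P D with hd
  have hd_top : d ≠ ∞ := measure_ne_top P D
  have hd0 : d ≠ 0 := hD0.ne'
  -- the key inequality for every n
  have star : ∀ n : ℕ, P (seq n).1 + d ≤ P B + (↑(n + 1) : ℝ≥0∞)⁻¹ := by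
    intro n
    have hDB : Disjoint (seq n).1 D := by
      apply Set.disjoint_left.mpr
      intro x hx hxD
      exact (hDAB hxD).2 (mem_iUnion.mpr ⟨n, hx⟩)
    have hunion : P ((seq n).1 ∪ D) = P (seq n).1 + d := measure_union hDB hDm
    have hgood : ((seq n).1 ∪ D) ∈ Good := by
      refine ⟨union_subset (seq n).2.1 (fun x hx => (hDAB hx).1), (seq n).2.2.1.union hDm, ?_⟩
      rw [hunion]
      calc P (seq n).1 + d ≤ P B + (r - P B) := by
            gcongr
            exact subset_iUnion (fun n => (seq n).1) n
        _ = r := add_tsub_cancel_of_le hlt.le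
    have := hF3 n (seq n).1 (seq n).2 ((seq n).1 ∪ D) hgood subset_union_left
    rw [hunion] at this
    calc P (seq n).1 + d ≤ P (F n (seq n).1 (seq n).2) + (↑(n + 1) : ℝ≥0∞)⁻¹ := this
      _ = P (seq (n + 1)).1 + (↑(n + 1) : ℝ≥0∞)⁻¹ := rfl
      _ ≤ P B + (↑(n + 1) : ℝ≥0∞)⁻¹ := by
          gcongr
          exact subset_iUnion (fun n => (seq n).1) (n + 1)
  -- derive a contradiction
  set e : ℝ≥0∞ := d / 2 with he
  have he0 : e ≠ 0 := by
    simp [he, ENNReal.div_eq_top, hd0, ENNReal.div_eq_zero_iff, hd_top]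
  have he_top : e ≠ ∞ := by
    simp [he, ENNReal.div_eq_top, hd_top]
  obtain ⟨n₂, hn₂⟩ := ENNReal.exists_inv_nat_lt he0
  have hn₂' : (↑(n₂ + 1) : ℝ≥0∞)⁻¹ < e := by
    refine lt_of_le_of_lt ?_ hn₂
    rw [ENNReal.inv_le_inv]
    exact_mod_cast Nat.le_succ n₂
  rcases le_or_gt (P B) e with hBe | hBe
  · have := star n₂
    have h1 : d ≤ P (seq n₂).1 + d := le_add_self
    have h2 : P B + (↑(n₂ + 1) : ℝ≥0∞)⁻¹ < e + e := by
      calc P B + (↑(n₂ + 1) : ℝ≥0∞)⁻¹ ≤ e + (↑(n₂ + 1) : ℝ≥0∞)⁻¹ := by gcongr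
        _ < e + e := ENNReal.add_lt_add_left he_top hn₂'
    have : d < d := lt_of_le_of_lt (h1.trans this) (h2.trans_eq (ENNReal.add_halves d))
    exact absurd this (lt_irrefl d)
  · have hPB_ne : P B ≠ 0 := (lt_of_le_of_lt zero_le hBe).ne'
    have hsub : P B - e < P B := ENNReal.sub_lt_self (measure_ne_top P B) hPB_ne he0
    rw [hPB] at hsub
    obtain ⟨n₁, hn₁⟩ := lt_iSup_iff.mp hsub
    set n : ℕ := max n₁ n₂ with hn
    have hmon : P (seq n₁).1 ≤ P (seq n).1 := measure_mono (hseq_mono (le_max_left n₁ n₂))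
    have h1 : P B - e < P (seq n).1 := by rw [hPB]; exact lt_of_lt_of_le hn₁ hmon
    have h2 : P B < P (seq n).1 + e := by
      calc P B = (P B - e) + e := (tsub_add_cancel_of_le hBe.le).symm
        _ < P (seq n).1 + e := ENNReal.add_lt_add_right he_top h1
    have hinv : (↑(n + 1) : ℝ≥0∞)⁻¹ < e := by
      refine lt_of_le_of_lt ?_ hn₂'
      rw [ENNReal.inv_le_inv]
      exact_mod_cast Nat.succ_le_succ (le_max_right n₁ n₂)
    have hfin : P B + d < P B + d := by
      calc P B + d < (P (seq n).1 + e) + d := ENNReal.add_lt_add_right hd_top h2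
        _ = (P (seq n).1 + d) + e := by ring
        _ ≤ (P B + (↑(n + 1) : ℝ≥0∞)⁻¹) + e := add_le_add_left (star n) e
        _ = (P B + e) + (↑(n + 1) : ℝ≥0∞)⁻¹ := by ring
        _ < (P B + e) + e := by
            refine ENNReal.add_lt_add_left ?_ hinv
            exact ENNReal.add_ne_top.mpr ⟨measure_ne_top P B, he_top⟩
        _ = P B + (e + e) := by ring
        _ = P B + d := by rw [he, ENNReal.add_halves]
    exact absurd hfin (lt_irrefl _)

lemma my_superset (P : Measure Ω) [IsProbabilityMeasure P]
    (hAtomless : ∀ A : Set Ω, MeasurableSet A → 0 < P A →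
      ∃ B : Set Ω, B ⊆ A ∧ MeasurableSet B ∧ 0 < P B ∧ P B < P A)
    (A : Set Ω) (hA : MeasurableSet A) (β : ℝ≥0∞) (hβ1 : β ≤ 1) (hAβ : P A ≤ β) :
    ∃ B, A ⊆ B ∧ MeasurableSet B ∧ P B = β := by
  obtain ⟨D, hDA, hDm, hPD⟩ := my_sierpinski P hAtomless Aᶜ hA.compl (β - P A)
    (by rw [prob_compl_eq_one_sub hA]; exact tsub_le_tsub_right hβ1 (P A))
  refine ⟨A ∪ D, subset_union_left, hA.union hDm, ?_⟩
  rw [measure_union (Set.subset_compl_iff_disjoint_left.mp hDA) hDm, hPD,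
    add_tsub_cancel_of_le hAβ]

lemma my_law (P : Measure Ω) [IsProbabilityMeasure P]
    (B : Set Ω) [DecidablePred (· ∈ B)] (hB : MeasurableSet B) (l x y : ℝ) (hl0 : 0 ≤ l) (hl1 : l ≤ 1)
    (hPB : P B = ENNReal.ofReal l) :
    P.map (fun ω => if ω ∈ B then x else y) =
      ENNReal.ofReal l • Measure.dirac x + ENNReal.ofReal (1 - l) • Measure.dirac y := by
  classical
  have hm : Measurable (fun ω => if ω ∈ B then x else y) :=
    Measurable.ite hB measurable_const measurable_const
  have hcompl : P Bᶜ = ENNReal.ofReal (1 - l) := by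
    rw [prob_compl_eq_one_sub hB, hPB, ENNReal.ofReal_sub 1 hl0, ENNReal.ofReal_one]
  ext s hs
  rw [Measure.map_apply hm hs]
  simp only [Measure.coe_add, Pi.add_apply, Measure.smul_apply, smul_eq_mul,
    Measure.dirac_apply' _ hs]
  by_cases hx : x ∈ s <;> by_cases hy : y ∈ s
  · have hpre : (fun ω => if ω ∈ B then x else y) ⁻¹' s = univ := by
      ext ω; by_cases hω : ω ∈ B <;> simp [hω, hx, hy]
    rw [hpre]
    simp only [indicator_of_mem hx, indicator_of_mem hy, Pi.one_apply, mul_one, measure_univ,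
      ← ENNReal.ofReal_add hl0 (by linarith : (0:ℝ) ≤ 1 - l)]
    norm_num
  · have hpre : (fun ω => if ω ∈ B then x else y) ⁻¹' s = B := by
      ext ω; by_cases hω : ω ∈ B <;> simp [hω, hx, hy]
    rw [hpre, hPB]
    simp [indicator_of_mem, indicator_of_notMem, hx, hy]
  · have hpre : (fun ω => if ω ∈ B then x else y) ⁻¹' s = Bᶜ := by
      ext ω; by_cases hω : ω ∈ B <;> simp [hω, hx, hy]
    rw [hpre, hcompl]
    simp [indicator_of_mem, indicator_of_notMem, hx, hy]
  · have hpre : (fun ω => if ω ∈ B then x else y) ⁻¹' s = ∅ := by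
      ext ω; by_cases hω : ω ∈ B <;> simp [hω, hx, hy]
    rw [hpre]
    simp [indicator_of_notMem, hx, hy]

lemma my_integral (Q : Measure Ω) [IsProbabilityMeasure Q]
    (B : Set Ω) [DecidablePred (· ∈ B)] (hB : MeasurableSet B) (x y : ℝ) :
    ∫ ω, (if ω ∈ B then x else y) ∂Q = (x - y) * (Q B).toReal + y := by
  classical
  have heq : (fun ω => if ω ∈ B then x else y)
      = fun ω => B.indicator (fun _ => x - y) ω + y := by
    funext ω; by_cases hω : ω ∈ B <;> simp [hω]
  rw [heq, integral_add ((integrable_const (x - y)).indicator hB) (integrable_const y),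
    integral_indicator_const _ hB, integral_const]
  simp [smul_eq_mul, mul_comm]
  exact Or.inl rfl


theorem stmt_2 {Ω : Type} [MeasurableSpace Ω] (P : Measure Ω) [IsProbabilityMeasure P]
    (u : (Ω → ℝ) → ℝ)
    (hAtomless : ∀ A : Set Ω, MeasurableSet A → 0 < P A →
      ∃ B : Set Ω, B ⊆ A ∧ MeasurableSet B ∧ 0 < P B ∧ P B < P A)
    (hTI : ∀ ξ : Ω → ℝ, BddMeas P ξ → ∀ h : ℝ, u (fun ω => ξ ω + h) = u ξ + h)
    (hMono : ∀ ξ η : Ω → ℝ, BddMeas P ξ → BddMeas P η → (∀ᵐ ω ∂P, ξ ω ≤ η ω) → u ξ ≤ u η)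
    (hNorm : u (fun _ => 0) = 0)
    (hLaw : ∀ ξ η : Ω → ℝ, BddMeas P ξ → BddMeas P η → P.map ξ = P.map η → u ξ = u η)
    (hConc : ∀ ξ η : Ω → ℝ, BddMeas P ξ → BddMeas P η → ∀ l : ℝ, 0 ≤ l → l ≤ 1 →
      l * u ξ + (1 - l) * u η ≤ u (fun ω => l * ξ ω + (1 - l) * η ω))
    (hFatou : ∀ (ξs : ℕ → Ω → ℝ) (ξ : Ω → ℝ), (∀ n, BddMeas P (ξs n)) → BddMeas P ξ →
      (∃ C : ℝ, ∀ n, ∀ᵐ ω ∂P, |ξs n ω| ≤ C) →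
      TendstoInMeasure P ξs Filter.atTop ξ →
      Filter.limsup (fun n => u (ξs n)) Filter.atTop ≤ u ξ)
    (a : ℝ) (ha : 0 < a) (k : ℕ → ℝ) (hk : Tendsto k Filter.atTop Filter.atBot)
    (α : ℕ → ℝ) (hα : ∀ n, 0 < α n ∧ α n < 1)
    (hyp : ∀ n : ℕ, ∃ ξ : Ω → ℝ, BddMeas P ξ ∧ HasDyadicLaw P ξ (k n) a (α n) ∧ 0 ≤ u ξ) :
    WCProperty P u := by
  classical
  intro m hm ε hε
  obtain ⟨n, hn⟩ := (hk.eventually (eventually_lt_atBot (a - (a + m) / ε))).exists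
  obtain ⟨αn0, αn1⟩ := hα n
  refine ⟨α n, αn0, ?_⟩
  intro Q hQprob hQP hQpen A hA hPA
  have ham : 0 < a + m := by linarith
  have hak0 : 0 < a - k n := lt_trans (div_pos ham hε) (by linarith)
  -- a superset of A of measure exactly α n
  obtain ⟨B, hAB, hBm, hPB⟩ := my_superset P hAtomless A hA (ENNReal.ofReal (α n))
    (by rw [← ENNReal.ofReal_one]; exact ENNReal.ofReal_le_ofReal αn1.le) hPA.le
  -- the test random variable
  set ξ : Ω → ℝ := fun ω => if ω ∈ B then k n else a with hξ
  have hξm : Measurable ξ := Measurable.ite hBm measurable_const measurable_const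
  have hξbdd : BddMeas P ξ := by
    refine ⟨hξm, |k n| + |a|, ae_of_all _ fun ω => ?_⟩
    by_cases hω : ω ∈ B
    · simp only [hξ, if_pos hω]; have := abs_nonneg a; linarith
    · simp only [hξ, if_neg hω]; have := abs_nonneg (k n); linarith
  have hξlaw : P.map ξ = ENNReal.ofReal (α n) • Measure.dirac (k n)
      + ENNReal.ofReal (1 - α n) • Measure.dirac a :=
    my_law P B hBm (α n) (k n) a αn0.le αn1.le hPB
  -- u ξ ≥ 0 by law invariance
  obtain ⟨ξ₀, hξ₀b, hξ₀law, hξ₀u⟩ := hyp n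
  have huξ0 : 0 ≤ u ξ := by
    have : u ξ = u ξ₀ := hLaw ξ ξ₀ hξbdd hξ₀b (by rw [hξlaw]; exact hξ₀law.symm)
    linarith
  -- the penalty inequality
  have hint : ∫ ω, ξ ω ∂Q = (k n - a) * (Q B).toReal + a := my_integral Q B hBm (k n) a
  have hpen := hQpen ξ hξbdd
  rw [hint] at hpen
  set q : ℝ := (Q B).toReal with hq
  have hq1 : (a - k n) * q ≤ a + m := by nlinarith
  have hqε : q < ε := by
    have h2 : a + m < ε * (a - k n) := by
      have := (div_lt_iff₀ hε).mp (by linarith : (a + m) / ε < a - k n)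
      linarith
    have : q ≤ (a + m) / (a - k n) := (le_div_iff₀ hak0).mpr (by linarith)
    calc q ≤ (a + m) / (a - k n) := this
      _ < ε := (div_lt_iff₀ hak0).mpr (by linarith)
  -- conclude
  rw [Measure.setIntegral_toReal_rnDeriv hQP A]
  calc (Q A).toReal ≤ q := ENNReal.toReal_mono (measure_ne_top Q B) (measure_mono hAB)
    _ < ε := hqε
end

section
/- Let u be a concave, law-determined monetary utility function on L^∞ of an atomless probability space, satisfying the Fatou property. Then u(ξ) = ess inf ξ for all ξ ∈ L^∞ if and only if condition C fails for every pair (k,a) with k < 0 and a > 0, i.e. if and only if for all k < 0, a > 0 and α ∈ (0,1) one has u(α δ_k + (1−α) δ_a) < 0. -/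
open MeasureTheory Filter Set
open scoped Classical

section Aux
set_option linter.unusedSectionVars false
variable {Ω : Type} [MeasurableSpace Ω] (P : Measure Ω) [IsProbabilityMeasure P]

lemma halving
    (hAtomless : ∀ A : Set Ω, MeasurableSet A → 0 < P A →
      ∃ B : Set Ω, B ⊆ A ∧ MeasurableSet B ∧ 0 < P B ∧ P B < P A)
    (A : Set Ω) (hA : MeasurableSet A) (hpos : 0 < P A) :
    ∃ C : Set Ω, C ⊆ A ∧ MeasurableSet C ∧ 0 < P C ∧ P C ≤ P A / 2 := by
  obtain ⟨B, hBA, hBm, hB0, hBlt⟩ := hAtomless A hA hpos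
  have hPAne : P A ≠ ⊤ := (measure_lt_top P A).ne
  have hPBne : P B ≠ ⊤ := (measure_lt_top P B).ne
  by_cases h : P B ≤ P A / 2
  · exact ⟨B, hBA, hBm, hB0, h⟩
  · push_neg at h
    refine ⟨A \ B, diff_subset, hA.diff hBm, ?_, ?_⟩
    · have : P (A \ B) = P A - P B := measure_diff hBA hBm.nullMeasurableSet hPBne
      rw [this]
      exact tsub_pos_of_lt hBlt
    · have h1 : P (A \ B) = P A - P B := measure_diff hBA hBm.nullMeasurableSet hPBne
      rw [h1]
      calc P A - P B ≤ P A - P A / 2 := tsub_le_tsub_left h.le _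
        _ = P A / 2 := ENNReal.sub_half hPAne

lemma small_sets
    (hAtomless : ∀ A : Set Ω, MeasurableSet A → 0 < P A →
      ∃ B : Set Ω, B ⊆ A ∧ MeasurableSet B ∧ 0 < P B ∧ P B < P A)
    (A : Set Ω) (hA : MeasurableSet A) (hpos : 0 < P A) (ε : ENNReal) (hε : 0 < ε) :
    ∃ C : Set Ω, C ⊆ A ∧ MeasurableSet C ∧ 0 < P C ∧ P C ≤ ε := by
  have key : ∀ n : ℕ, ∃ C : Set Ω, C ⊆ A ∧ MeasurableSet C ∧ 0 < P C ∧ P C ≤ P A / 2 ^ n := by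
    intro n
    induction n with
    | zero => exact ⟨A, subset_rfl, hA, hpos, by simp⟩
    | succ n ih =>
      obtain ⟨C, hCA, hCm, hC0, hCle⟩ := ih
      obtain ⟨D, hDC, hDm, hD0, hDle⟩ := halving P hAtomless C hCm hC0
      refine ⟨D, hDC.trans hCA, hDm, hD0, ?_⟩
      calc P D ≤ P C / 2 := hDle
        _ ≤ (P A / 2 ^ n) / 2 := by gcongr
        _ = P A / 2 ^ (n + 1) := by simp [ENNReal.div_eq_inv_mul, pow_succ, ENNReal.mul_inv, mul_comm, mul_assoc, mul_left_comm]
  obtain ⟨n, hn⟩ := ENNReal.exists_inv_two_pow_lt hε.ne'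
  obtain ⟨C, hCA, hCm, hC0, hCle⟩ := key n
  refine ⟨C, hCA, hCm, hC0, hCle.trans ?_⟩
  have hPA1 : P A ≤ 1 := prob_le_one
  calc P A / 2 ^ n ≤ 1 / 2 ^ n := by gcongr
    _ = 2⁻¹ ^ n := by rw [one_div, ENNReal.inv_pow]
    _ ≤ ε := hn.le

lemma sierpinski
    (hAtomless : ∀ A : Set Ω, MeasurableSet A → 0 < P A →
      ∃ B : Set Ω, B ⊆ A ∧ MeasurableSet B ∧ 0 < P B ∧ P B < P A)
    (t : ENNReal) (ht : t ≤ 1) :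
    ∃ B : Set Ω, MeasurableSet B ∧ P B = t := by
  classical
  have htne : t ≠ ⊤ := (ht.trans_lt (by norm_num)).ne
  -- the best possible "gain" from a set B
  set g : Set Ω → ENNReal := fun B =>
    sSup {m | ∃ C : Set Ω, MeasurableSet C ∧ C ⊆ Bᶜ ∧ P B + P C ≤ t ∧ P C = m} with hg
  have hg_le : ∀ B, g B ≤ t := by
    intro B
    apply sSup_le
    rintro m ⟨C, _, _, hle, rfl⟩
    exact le_trans (le_add_self) hle
  have hstep : ∀ B : Set Ω, MeasurableSet B → P B ≤ t →
      ∃ C : Set Ω, MeasurableSet C ∧ C ⊆ Bᶜ ∧ P B + P C ≤ t ∧ g B / 2 ≤ P C := by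
    intro B hBm hBt
    by_cases h0 : g B = 0
    · exact ⟨∅, MeasurableSet.empty, empty_subset _, by simp [hBt], by simp [h0]⟩
    · have hfin : g B ≠ ⊤ := ((hg_le B).trans_lt (htne.lt_top)).ne
      have : g B / 2 < g B := ENNReal.half_lt_self h0 hfin
      obtain ⟨m, hm, hlt⟩ := lt_sSup_iff.mp this
      obtain ⟨C, hCm, hCsub, hCle, rfl⟩ := hm
      exact ⟨C, hCm, hCsub, hCle, hlt.le⟩
  choose! F hF1 hF2 hF3 hF4 using hstep
  -- the increasing sequence of sets
  set seq : ℕ → Set Ω := fun n => Nat.rec ∅ (fun _ B => B ∪ F B) n with hseq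
  have hseq_succ : ∀ n, seq (n + 1) = seq n ∪ F (seq n) := fun n => rfl
  have hInv : ∀ n, MeasurableSet (seq n) ∧ P (seq n) ≤ t := by
    intro n
    induction n with
    | zero =>
      rw [show seq 0 = ∅ from rfl]
      exact ⟨MeasurableSet.empty, by simp⟩
    | succ n ih =>
      obtain ⟨hm, hle⟩ := ih
      have hFm := hF1 (seq n) hm hle
      have hdisj : Disjoint (seq n) (F (seq n)) :=
        disjoint_compl_right.mono_right (hF2 (seq n) hm hle)
      constructor
      · rw [hseq_succ]; exact hm.union hFm
      · rw [hseq_succ, measure_union hdisj hFm]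
        exact hF3 (seq n) hm hle
  have hPsucc : ∀ n, P (seq (n + 1)) = P (seq n) + P (F (seq n)) := by
    intro n
    obtain ⟨hm, hle⟩ := hInv n
    have hFm := hF1 (seq n) hm hle
    have hdisj : Disjoint (seq n) (F (seq n)) :=
      disjoint_compl_right.mono_right (hF2 (seq n) hm hle)
    rw [hseq_succ, measure_union hdisj hFm]
  have hmono : Monotone seq := by
    apply monotone_nat_of_le_succ
    intro n
    rw [hseq_succ]
    exact subset_union_left
  set B : Set Ω := ⋃ n, seq n with hB
  have hBm : MeasurableSet B := MeasurableSet.iUnion fun n => (hInv n).1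
  have hPB : P B = ⨆ n, P (seq n) := (hmono.directed_le).measure_iUnion
  have hPBt : P B ≤ t := by
    rw [hPB]; exact iSup_le fun n => (hInv n).2
  rcases eq_or_lt_of_le hPBt with heq | hlt
  · exact ⟨B, hBm, heq⟩
  exfalso
  -- find a small positive set in Bᶜ
  have hBcpos : 0 < P Bᶜ := by
    have : P Bᶜ = 1 - P B := prob_compl_eq_one_sub hBm
    rw [this]
    exact tsub_pos_of_lt (hlt.trans_le ht)
  obtain ⟨C, hCB, hCm, hC0, hCle⟩ :=
    small_sets P hAtomless Bᶜ hBm.compl hBcpos (t - P B) (tsub_pos_of_lt hlt)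
  -- each step gains at least P C / 2
  have hgain : ∀ n, P C ≤ g (seq n) := by
    intro n
    apply le_sSup
    refine ⟨C, hCm, ?_, ?_, rfl⟩
    · exact hCB.trans (compl_subset_compl.mpr (subset_iUnion seq n))
    · calc P (seq n) + P C ≤ P B + (t - P B) := by
            exact add_le_add (le_trans (le_iSup (fun n => P (seq n)) n) hPB.ge) hCle
        _ = t := add_tsub_cancel_of_le hlt.le
  have hstepge : ∀ n, P (seq n) + P C / 2 ≤ P (seq (n + 1)) := by
    intro n
    rw [hPsucc n]
    obtain ⟨hm, hle⟩ := hInv n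
    exact add_le_add_right (le_trans (ENNReal.div_le_div_right (hgain n) 2)
      (hF4 (seq n) hm hle)) _
  have hlin : ∀ n : ℕ, (n : ENNReal) * (P C / 2) ≤ P (seq n) := by
    intro n
    induction n with
    | zero => simp
    | succ n ih =>
      have hcast : ((n + 1 : ℕ) : ENNReal) * (P C / 2) = n * (P C / 2) + P C / 2 := by
        push_cast
        ring
      calc ((n + 1 : ℕ) : ENNReal) * (P C / 2) = n * (P C / 2) + P C / 2 := hcast
        _ ≤ P (seq n) + P C / 2 := add_le_add_left ih _
        _ ≤ P (seq (n + 1)) := hstepge n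
  -- contradiction: linear growth exceeds t
  have hc2 : P C / 2 ≠ 0 := by
    simp only [ne_eq, ENNReal.div_eq_zero_iff]
    push_neg
    exact ⟨hC0.ne', by norm_num⟩
  have hc2top : P C / 2 ≠ ⊤ := by
    exact (ENNReal.div_lt_top (measure_lt_top P C).ne (by norm_num)).ne
  obtain ⟨n, hn⟩ := ENNReal.exists_nat_gt (ENNReal.div_lt_top htne hc2).ne
  have : t < n * (P C / 2) := by
    rw [← ENNReal.div_lt_iff (Or.inl hc2) (Or.inl hc2top)]
    exact hn
  exact absurd ((hInv n).2) (not_le.mpr (this.trans_le (hlin n)))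

lemma bddMeas_ite (B : Set Ω) (hB : MeasurableSet B) (k a : ℝ) :
    BddMeas P (fun ω => if ω ∈ B then k else a) := by
  refine ⟨Measurable.ite hB measurable_const measurable_const, max |k| |a|, ?_⟩
  filter_upwards with ω
  by_cases hω : ω ∈ B <;> simp [hω, le_max_left, le_max_right]

lemma law_ite (B : Set Ω) (hB : MeasurableSet B) (k a l : ℝ) (hl0 : 0 ≤ l)
    (hPB : P B = ENNReal.ofReal l) :
    P.map (fun ω => if ω ∈ B then k else a) =
      ENNReal.ofReal l • Measure.dirac k + ENNReal.ofReal (1 - l) • Measure.dirac a := by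
  classical
  have hmeas : Measurable (fun ω => if ω ∈ B then k else a) :=
    Measurable.ite hB measurable_const measurable_const
  have hPBc : P Bᶜ = ENNReal.ofReal (1 - l) := by
    rw [prob_compl_eq_one_sub hB, hPB, ENNReal.ofReal_sub _ hl0, ENNReal.ofReal_one]
  have hsum : ENNReal.ofReal l + ENNReal.ofReal (1 - l) = 1 := by
    rw [← hPB, ← hPBc, measure_add_measure_compl hB, measure_univ]
  ext s hs
  rw [Measure.map_apply hmeas hs]
  rw [Measure.add_apply, Measure.smul_apply, Measure.smul_apply,
    Measure.dirac_apply' _ hs, Measure.dirac_apply' _ hs, smul_eq_mul, smul_eq_mul]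
  by_cases hk : k ∈ s <;> by_cases ha : a ∈ s
  · have hpre : (fun ω => if ω ∈ B then k else a) ⁻¹' s = univ := by
      ext ω; by_cases hω : ω ∈ B <;> simp [hω, hk, ha]
    rw [hpre]
    simp [Set.indicator_apply, hk, ha, hsum]
  · have hpre : (fun ω => if ω ∈ B then k else a) ⁻¹' s = B := by
      ext ω; by_cases hω : ω ∈ B <;> simp [hω, hk, ha]
    rw [hpre]
    simp [Set.indicator_apply, hk, ha, hPB]
  · have hpre : (fun ω => if ω ∈ B then k else a) ⁻¹' s = Bᶜ := by
      ext ω; by_cases hω : ω ∈ B <;> simp [hω, hk, ha]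
    rw [hpre]
    simp [Set.indicator_apply, hk, ha, hPBc]
  · have hpre : (fun ω => if ω ∈ B then k else a) ⁻¹' s = ∅ := by
      ext ω; by_cases hω : ω ∈ B <;> simp [hω, hk, ha]
    rw [hpre]
    simp [Set.indicator_apply, hk, ha]

lemma essInf_ite (B : Set Ω) (hpos : 0 < P B) (k a : ℝ) (hka : k ≤ a) :
    essInfR P (fun ω => if ω ∈ B then k else a) = k := by
  classical
  have hk_mem : (∀ᵐ ω ∂P, k ≤ if ω ∈ B then k else a) := by
    filter_upwards with ω
    by_cases hω : ω ∈ B <;> simp [hω, hka]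
  have hub : ∀ c ∈ {c : ℝ | ∀ᵐ ω ∂P, c ≤ if ω ∈ B then k else a}, c ≤ k := by
    intro c hc
    by_contra hck
    push_neg at hck
    have hbad : P {ω | ¬ c ≤ (if ω ∈ B then k else a)} = 0 := by
      rw [← ae_iff] at *
      exact hc
    have hsub : B ⊆ {ω | ¬ c ≤ (if ω ∈ B then k else a)} := by
      intro ω hω
      simp only [mem_setOf_eq, hω, if_true, not_le]
      exact hck
    exact absurd (le_trans (measure_mono hsub) hbad.le) (not_le.mpr hpos)
  exact le_antisymm (csSup_le ⟨k, hk_mem⟩ hub) (le_csSup ⟨k, hub⟩ hk_mem)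

end Aux

theorem stmt_3 {Ω : Type} [MeasurableSpace Ω] (P : Measure Ω) [IsProbabilityMeasure P]
    (u : (Ω → ℝ) → ℝ)
    (hAtomless : ∀ A : Set Ω, MeasurableSet A → 0 < P A →
      ∃ B : Set Ω, B ⊆ A ∧ MeasurableSet B ∧ 0 < P B ∧ P B < P A)
    (hTI : ∀ ξ : Ω → ℝ, BddMeas P ξ → ∀ h : ℝ, u (fun ω => ξ ω + h) = u ξ + h)
    (hMono : ∀ ξ η : Ω → ℝ, BddMeas P ξ → BddMeas P η → (∀ᵐ ω ∂P, ξ ω ≤ η ω) → u ξ ≤ u η)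
    (hNorm : u (fun _ => 0) = 0)
    (hLaw : ∀ ξ η : Ω → ℝ, BddMeas P ξ → BddMeas P η → P.map ξ = P.map η → u ξ = u η)
    (hConc : ∀ ξ η : Ω → ℝ, BddMeas P ξ → BddMeas P η → ∀ l : ℝ, 0 ≤ l → l ≤ 1 →
      l * u ξ + (1 - l) * u η ≤ u (fun ω => l * ξ ω + (1 - l) * η ω))
    (hFatou : ∀ (ξs : ℕ → Ω → ℝ) (ξ : Ω → ℝ), (∀ n, BddMeas P (ξs n)) → BddMeas P ξ →
      (∃ C : ℝ, ∀ n, ∀ᵐ ω ∂P, |ξs n ω| ≤ C) →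
      TendstoInMeasure P ξs Filter.atTop ξ →
      Filter.limsup (fun n => u (ξs n)) Filter.atTop ≤ u ξ)
    :
    (∀ ξ : Ω → ℝ, BddMeas P ξ → u ξ = essInfR P ξ) ↔
      (∀ k : ℝ, k < 0 → ∀ a : ℝ, 0 < a → ∀ α : ℝ, 0 < α → α < 1 →
        ∃ ξ : Ω → ℝ, BddMeas P ξ ∧ HasDyadicLaw P ξ k a α ∧ u ξ < 0) := by
  classical
  constructor
  · -- forward direction
    intro h k hk a ha α hα0 hα1
    have hαle : ENNReal.ofReal α ≤ 1 := by
      rw [← ENNReal.ofReal_one]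
      exact ENNReal.ofReal_le_ofReal hα1.le
    obtain ⟨B, hBm, hPB⟩ := sierpinski P hAtomless (ENNReal.ofReal α) hαle
    have hBpos : 0 < P B := by
      rw [hPB]; exact ENNReal.ofReal_pos.mpr hα0
    refine ⟨fun ω => if ω ∈ B then k else a, bddMeas_ite P B hBm k a,
      law_ite P B hBm k a α hα0.le hPB, ?_⟩
    rw [h _ (bddMeas_ite P B hBm k a), essInf_ite P B hBpos k a (hk.trans ha).le]
    exact hk
  · -- backward direction
    intro h ξ hξ
    obtain ⟨hξm, Cb, hCb⟩ := hξ
    have hξB : BddMeas P ξ := ⟨hξm, Cb, hCb⟩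
    have hPae : (ae P).NeBot := ae_neBot.mpr (IsProbabilityMeasure.ne_zero P)
    have hSne : ({c : ℝ | ∀ᵐ ω ∂P, c ≤ ξ ω}).Nonempty := by
      refine ⟨-Cb, ?_⟩
      filter_upwards [hCb] with ω hb
      linarith [(abs_le.mp hb).1]
    have hSbdd : BddAbove {c : ℝ | ∀ᵐ ω ∂P, c ≤ ξ ω} := by
      refine ⟨Cb, fun c hc => ?_⟩
      obtain ⟨ω, h1, h2⟩ := ((show ∀ᵐ ω ∂P, c ≤ ξ ω from hc).and hCb).exists
      linarith [(abs_le.mp h2).2]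
    have hconst : ∀ c : ℝ, u (fun _ => c) = c := by
      intro c
      have := hTI (fun _ => 0) ⟨measurable_const, 0, ae_of_all _ (by simp)⟩ c
      simpa [hNorm] using this
    have hlower : essInfR P ξ ≤ u ξ := by
      apply csSup_le hSne
      intro c hc
      have hmc := hMono (fun _ => c) ξ
        ⟨measurable_const, |c|, ae_of_all _ (by simp [le_abs_self])⟩ hξB hc
      rwa [hconst] at hmc
    refine le_antisymm ?_ hlower
    by_contra hgt
    push_neg at hgt
    set m := essInfR P ξ with hm
    set ε := u ξ - m with hε
    have hε0 : 0 < ε := sub_pos.mpr hgt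
    have huξ : u ξ = m + ε := by rw [hε]; ring
    set δ : ℝ := ε / 4 with hδ
    have hδ0 : 0 < δ := by positivity
    set A := {ω | ξ ω ≤ m + δ} with hA
    have hAm : MeasurableSet A := hξm measurableSet_Iic
    have hApos : 0 < P A := by
      rcases eq_or_lt_of_le (zero_le : 0 ≤ P A) with h0 | h0
      · exfalso
        have hnm : ∀ᵐ ω ∂P, ω ∉ A := measure_eq_zero_iff_ae_notMem.mp h0.symm
        have hmem : (m + δ) ∈ {c : ℝ | ∀ᵐ ω ∂P, c ≤ ξ ω} := by
          filter_upwards [hnm] with ω hω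
          exact (not_le.mp hω).le
        have : m + δ ≤ m := le_csSup hSbdd hmem
        linarith
      · exact h0
    have hA1 : P A < 1 := by
      rcases lt_or_ge (P A) 1 with h1 | h1
      · exact h1
      · exfalso
        have hPA1 : P A = 1 := le_antisymm prob_le_one h1
        have hcompl : P Aᶜ = 0 := by
          rw [prob_compl_eq_one_sub hAm, hPA1, tsub_self]
        have hmem : ∀ᵐ ω ∂P, ω ∈ A := by
          have := measure_eq_zero_iff_ae_notMem.mp hcompl
          filter_upwards [this] with ω hω
          simpa using hω
        have hub : u ξ ≤ m + δ := by
          have := hMono ξ (fun _ => m + δ) hξB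
            ⟨measurable_const, |m + δ|, ae_of_all _ (by simp [le_abs_self])⟩
            (by filter_upwards [hmem] with ω hω; exact hω)
          rwa [hconst] at this
        rw [huξ] at hub
        linarith
    -- build the two-point dominating variable
    set Cbig : ℝ := max Cb (m + δ + ε / 2 + 1) with hCbig
    set t : ℝ := m + δ + ε / 2 with ht
    have hηbdd := bddMeas_ite P A hAm (m + δ) Cbig
    have hζbdd := bddMeas_ite P A hAm (m + δ - t) (Cbig - t)
    have hξη : ∀ᵐ ω ∂P, ξ ω ≤ (if ω ∈ A then m + δ else Cbig) := by
      filter_upwards [hCb] with ω hb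
      by_cases hω : ω ∈ A
      · simp only [hω, if_true]
        exact hω
      · simp only [hω, if_false]
        calc ξ ω ≤ |ξ ω| := le_abs_self _
          _ ≤ Cb := hb
          _ ≤ Cbig := le_max_left _ _
    have h1 : u ξ ≤ u (fun ω => if ω ∈ A then m + δ else Cbig) :=
      hMono _ _ hξB hηbdd hξη
    have hζeq : (fun ω => if ω ∈ A then m + δ - t else Cbig - t) =
        (fun ω => (if ω ∈ A then m + δ else Cbig) + (-t)) := by
      funext ω
      by_cases hω : ω ∈ A <;> simp [hω] <;> ring
    have h2 : u (fun ω => if ω ∈ A then m + δ - t else Cbig - t) =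
        u (fun ω => if ω ∈ A then m + δ else Cbig) - t := by
      rw [hζeq, hTI _ hηbdd (-t)]
      ring
    have hζpos : 0 < u (fun ω => if ω ∈ A then m + δ - t else Cbig - t) := by
      rw [h2]
      have : m + ε ≤ u (fun ω => if ω ∈ A then m + δ else Cbig) := huξ ▸ h1
      rw [ht]
      linarith
    -- apply the hypothesis
    set α : ℝ := (P A).toReal with hα
    have hPA : P A = ENNReal.ofReal α := (ENNReal.ofReal_toReal (measure_lt_top P A).ne).symm
    have hα0 : 0 < α := ENNReal.toReal_pos hApos.ne' (measure_lt_top _ _).ne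
    have hα1 : α < 1 := by
      have := (ENNReal.toReal_lt_toReal (measure_lt_top P A).ne (by norm_num)).mpr hA1
      simpa using this
    have hk' : m + δ - t < 0 := by rw [ht]; linarith
    have ha' : 0 < Cbig - t := by
      have : m + δ + ε / 2 + 1 ≤ Cbig := le_max_right _ _
      rw [ht]; linarith
    obtain ⟨ξw, hξwB, hξwL, hξwneg⟩ := h (m + δ - t) hk' (Cbig - t) ha' α hα0 hα1
    have hlaw : P.map (fun ω => if ω ∈ A then m + δ - t else Cbig - t) = P.map ξw := by
      rw [law_ite P A hAm _ _ α hα0.le hPA]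
      have hξwL' : P.map ξw = ENNReal.ofReal α • Measure.dirac (m + δ - t) +
          ENNReal.ofReal (1 - α) • Measure.dirac (Cbig - t) := hξwL
      exact hξwL'.symm
    have := hLaw _ ξw hζbdd hξwB hlaw
    linarith
end

section
/- Let u be a concave, law-determined monetary utility function on L^∞ of an atomless probability space, with the Fatou property and the CxLS property. Then the acceptance set at the level of distributions 𝒩 := {Law(ξ) : ξ ∈ L^∞, u(ξ) ≥ 0} and its complement (within laws of bounded random variables) are convex with respect to mixtures: if ξ, η ∈ L^∞ with u(ξ) ≥ 0 and u(η) ≥ 0, and ζ ∈ L^∞ has law α·Law(ξ) + (1−α)·Law(η) for some α ∈ (0,1), then u(ζ) ≥ 0; and if instead u(ξ) < 0 and u(η) < 0, then u(ζ) < 0. -/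
open MeasureTheory Filter Set

/-- Convex level sets at the level of distributions: if `u ξ = u η`, `l ∈ (0,1)` and `ζ` has
law `l·Law(ξ) + (1-l)·Law(η)`, then `u ζ = u ξ`. -/
def CxLS {Ω : Type} [MeasurableSpace Ω] (P : Measure Ω) (u : (Ω → ℝ) → ℝ) : Prop :=
  ∀ ξ η ζ : Ω → ℝ, BddMeas P ξ → BddMeas P η → BddMeas P ζ → u ξ = u η →
    ∀ l : ℝ, 0 < l → l < 1 →
      P.map ζ = ENNReal.ofReal l • P.map ξ + ENNReal.ofReal (1 - l) • P.map η →
      u ζ = u ξ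


open ProbabilityTheory
open scoped ENNReal Topology

section Sierp
variable {Ω : Type} [MeasurableSpace Ω] (P : Measure Ω) [IsProbabilityMeasure P]

lemma sierp_half (hAt : ∀ A : Set Ω, MeasurableSet A → 0 < P A →
      ∃ B : Set Ω, B ⊆ A ∧ MeasurableSet B ∧ 0 < P B ∧ P B < P A)
    (A : Set Ω) (hA : MeasurableSet A) (h0 : 0 < P A) :
    ∃ B, B ⊆ A ∧ MeasurableSet B ∧ 0 < P B ∧ P B ≤ P A / 2 := by
  obtain ⟨B, hBA, hBm, hB0, hBlt⟩ := hAt A hA h0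
  by_cases h : P B ≤ P A / 2
  · exact ⟨B, hBA, hBm, hB0, h⟩
  · push_neg at h
    have hd : P (A \ B) = P A - P B :=
      measure_diff hBA hBm.nullMeasurableSet (measure_ne_top P B)
    refine ⟨A \ B, diff_subset, hA.diff hBm, ?_, ?_⟩
    · rw [hd]; exact tsub_pos_iff_lt.mpr hBlt
    · rw [hd, tsub_le_iff_right]
      calc P A = P A / 2 + P A / 2 := (ENNReal.add_halves _).symm
        _ ≤ P A / 2 + P B := by gcongr
        _ = _ := by ring

lemma sierp_small' (hAt : ∀ A : Set Ω, MeasurableSet A → 0 < P A →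
      ∃ B : Set Ω, B ⊆ A ∧ MeasurableSet B ∧ 0 < P B ∧ P B < P A)
    (A : Set Ω) (hA : MeasurableSet A) (h0 : 0 < P A) (ε : ℝ≥0∞) (hε : 0 < ε) :
    ∃ B, B ⊆ A ∧ MeasurableSet B ∧ 0 < P B ∧ P B ≤ ε := by
  have key : ∀ n : ℕ, ∃ B, B ⊆ A ∧ MeasurableSet B ∧ 0 < P B ∧ P B ≤ P A / 2 ^ n := by
    intro n
    induction n with
    | zero => exact ⟨A, subset_rfl, hA, h0, by simp⟩
    | succ n ih =>
      obtain ⟨B, hBA, hBm, hB0, hBle⟩ := ih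
      obtain ⟨C, hCB, hCm, hC0, hCle⟩ := sierp_half P hAt B hBm hB0
      refine ⟨C, hCB.trans hBA, hCm, hC0, hCle.trans ?_⟩
      calc P B / 2 ≤ P A / 2 ^ n / 2 := by gcongr
        _ = P A / 2 ^ (n + 1) := by
          rw [div_eq_mul_inv, div_eq_mul_inv, div_eq_mul_inv, mul_assoc,
            ← ENNReal.mul_inv (by simp) (by simp), pow_succ]
  obtain ⟨n, hn⟩ := ENNReal.exists_inv_two_pow_lt hε.ne'
  obtain ⟨B, hBA, hBm, hB0, hBle⟩ := key n
  refine ⟨B, hBA, hBm, hB0, hBle.trans (le_trans ?_ hn.le)⟩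
  calc P A / 2 ^ n ≤ 1 / 2 ^ n := by gcongr; exact prob_le_one
    _ = 2⁻¹ ^ n := by rw [one_div, ENNReal.inv_pow]



lemma sierp (hAt : ∀ A : Set Ω, MeasurableSet A → 0 < P A →
      ∃ B : Set Ω, B ⊆ A ∧ MeasurableSet B ∧ 0 < P B ∧ P B < P A)
    (A : Set Ω) (hA : MeasurableSet A) (r : ℝ≥0∞) (hr : r ≤ P A) :
    ∃ B, B ⊆ A ∧ MeasurableSet B ∧ P B = r := by
  classical
  set G : Set Ω → Set (Set Ω) := fun B => {B' | MeasurableSet B' ∧ B ⊆ B' ∧ B' ⊆ A ∧ P B' ≤ r}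
    with hGdef
  set t : Set Ω → ℝ≥0∞ := fun B => ⨆ B' ∈ G B, P B' with htdef
  have htle : ∀ B, t B ≤ r := fun B => iSup₂_le fun B' hB' => hB'.2.2.2
  have hrne : r ≠ ⊤ := (hr.trans_lt (measure_lt_top P A)).ne
  have hstep : ∀ B, B ∈ G B → ∀ ε : ℝ≥0∞, 0 < ε → ε ≠ ⊤ →
      ∃ B', B' ∈ G B ∧ t B < P B' + ε := by
    intro B hB ε hε hεt
    by_contra hcon
    push_neg at hcon
    have hεle : ε ≤ t B := le_trans (le_add_self.trans_eq rfl) (hcon B hB)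
    have h1 : t B ≤ t B - ε :=
      iSup₂_le fun B' hB' => ENNReal.le_sub_of_add_le_right hεt (hcon B' hB')
    have h2 : t B + ε ≤ t B + 0 := by
      calc t B + ε ≤ (t B - ε) + ε := by gcongr
        _ = t B := tsub_add_cancel_of_le hεle
        _ = t B + 0 := by rw [add_zero]
    have htne : t B ≠ ⊤ := ((htle B).trans_lt (lt_of_le_of_lt hr (measure_lt_top P A))).ne
    exact hε.not_ge ((ENNReal.add_le_add_iff_left htne).mp h2)
  have hεpos : ∀ n : ℕ, (0:ℝ≥0∞) < 2⁻¹ ^ n := fun n => ENNReal.pow_pos (by norm_num) n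
  have hεne : ∀ n : ℕ, ((2:ℝ≥0∞)⁻¹ ^ n) ≠ ⊤ := fun n =>
    ENNReal.pow_ne_top (by simp)
  -- greedy sequence
  let T := {B : Set Ω // B ∈ G B}
  have hbase : (∅ : Set Ω) ∈ G ∅ :=
    ⟨MeasurableSet.empty, subset_rfl, empty_subset _, by simp⟩
  let step : ℕ → T → T := fun n p =>
    ⟨(hstep p.1 p.2 (2⁻¹ ^ n) (hεpos n) (hεne n)).choose,
      by
        have h := (hstep p.1 p.2 (2⁻¹ ^ n) (hεpos n) (hεne n)).choose_spec.1
        exact ⟨h.1, subset_rfl, h.2.2.1, h.2.2.2⟩⟩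
  let seq : ℕ → T := fun n => Nat.rec ⟨∅, hbase⟩ step n
  set Bs : ℕ → Set Ω := fun n => (seq n).1 with hBs
  have hspec : ∀ n, Bs (n+1) ∈ G (Bs n) ∧ t (Bs n) < P (Bs (n+1)) + 2⁻¹ ^ n := fun n =>
    (hstep (seq n).1 (seq n).2 (2⁻¹ ^ n) (hεpos n) (hεne n)).choose_spec
  have hmeas : ∀ n, MeasurableSet (Bs n) := fun n => (seq n).2.1
  have hsubA : ∀ n, Bs n ⊆ A := fun n => (seq n).2.2.2.1
  have hler : ∀ n, P (Bs n) ≤ r := fun n => (seq n).2.2.2.2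
  have hmono : Monotone Bs := monotone_nat_of_le_succ fun n => (hspec n).1.2.1
  set Binf : Set Ω := ⋃ n, Bs n with hBinf
  have hBinfm : MeasurableSet Binf := MeasurableSet.iUnion hmeas
  have hBinfA : Binf ⊆ A := iUnion_subset hsubA
  have hPinf : P Binf = ⨆ n, P (Bs n) := hmono.directed_le.measure_iUnion
  have hPler : P Binf ≤ r := by rw [hPinf]; exact iSup_le hler
  rcases eq_or_lt_of_le hPler with heq | hlt
  · exact ⟨Binf, hBinfA, hBinfm, heq⟩
  exfalso
  have hposdiff : 0 < P (A \ Binf) := by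
    have hd : P (A \ Binf) = P A - P Binf :=
      measure_diff hBinfA hBinfm.nullMeasurableSet (measure_ne_top P Binf)
    rw [hd]
    exact tsub_pos_iff_lt.mpr (lt_of_lt_of_le hlt hr)
  obtain ⟨C, hCsub, hCm, hC0, hCle⟩ := sierp_small' P hAt (A \ Binf) (hA.diff hBinfm)
    hposdiff (r - P Binf) (tsub_pos_iff_lt.mpr hlt)
  have hCA : C ⊆ A := hCsub.trans diff_subset
  have hCd : ∀ n, Disjoint C (Bs n) := fun n =>
    (disjoint_sdiff_left.mono_left hCsub).mono_right (subset_iUnion Bs n)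
  have hkey : ∀ n, P (Bs n) + P C ≤ P Binf + 2⁻¹ ^ n := by
    intro n
    have hmem : (Bs n ∪ C) ∈ G (Bs n) := by
      refine ⟨(hmeas n).union hCm, subset_union_left, union_subset (hsubA n) hCA, ?_⟩
      calc P (Bs n ∪ C) ≤ P (Bs n) + P C := measure_union_le _ _
        _ ≤ P Binf + (r - P Binf) := by
            gcongr
            · exact subset_iUnion Bs n
        _ = r := add_tsub_cancel_of_le hPler
    have h1 : P (Bs n) + P C = P (Bs n ∪ C) := (measure_union (hCd n).symm hCm).symm
    have h2 : P (Bs n ∪ C) ≤ t (Bs n) := by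
      rw [htdef]; exact le_iSup₂ (f := fun B' _ => P B') (Bs n ∪ C) hmem
    calc P (Bs n) + P C ≤ t (Bs n) := h1.trans_le h2
      _ ≤ P (Bs (n+1)) + 2⁻¹ ^ n := (hspec n).2.le
      _ ≤ P Binf + 2⁻¹ ^ n := by
          gcongr
          exact subset_iUnion Bs (n+1)
  have hfin : ∀ m : ℕ, P C ≤ 2⁻¹ ^ m := by
    intro m
    have hsup : (⨆ n, P (Bs (max n m))) = P Binf := by
      apply le_antisymm
      · exact iSup_le fun n => by rw [hPinf]; exact le_iSup (fun k => P (Bs k)) (max n m)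
      · rw [hPinf]; exact iSup_mono fun j => measure_mono (hmono (le_max_left j m))
    have h1 : P Binf + P C ≤ P Binf + 2⁻¹ ^ m := by
      rw [← hsup, ENNReal.iSup_add]
      refine iSup_le fun n => (hkey (max n m)).trans ?_
      have hpow : (2:ℝ≥0∞)⁻¹ ^ (n ⊔ m) ≤ 2⁻¹ ^ m := by
        rw [← ENNReal.inv_pow, ← ENNReal.inv_pow]
        exact ENNReal.inv_le_inv.mpr (pow_le_pow_right₀ one_le_two (le_max_right n m))
      exact add_le_add hsup.ge hpow
    exact (ENNReal.add_le_add_iff_left (measure_ne_top P Binf)).mp h1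
  obtain ⟨m, hm⟩ := ENNReal.exists_inv_two_pow_lt hC0.ne'
  exact (lt_irrefl _ (lt_of_le_of_lt (hfin m) hm))

end Sierp

section Unif
variable {Ω : Type} [MeasurableSpace Ω] (P : Measure Ω) [IsProbabilityMeasure P]

def LSpec (P : Measure Ω) (n : ℕ) (E : ℕ → Set Ω) : Prop :=
  (∀ k, MeasurableSet (E k)) ∧ (∀ k, E k ⊆ E (k+1)) ∧
  (∀ k, k ≤ 2^n → P (E k) = (k : ℝ≥0∞) * ((2:ℝ≥0∞)^n)⁻¹) ∧
  (∀ k, 2^n ≤ k → E k = univ)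

lemma lspec_mono {P : Measure Ω} {n : ℕ} {E : ℕ → Set Ω} (h : LSpec P n E) :
    ∀ {k k'}, k ≤ k' → E k ⊆ E k' := by
  intro k k' hkk
  induction hkk with
  | refl => exact subset_rfl
  | step h' ih => exact fun ω hω => h.2.1 _ (ih hω)

lemma lspec_zero : LSpec P 0 (fun k => if k = 0 then (∅ : Set Ω) else univ) := by
  refine ⟨fun k => ?_, fun k => ?_, fun k hk => ?_, fun k hk => ?_⟩
  · by_cases h : k = 0 <;> simp [h]
  · by_cases h : k = 0 <;> simp [h]
  · interval_cases k <;> simp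
  · have : k ≠ 0 := by omega
    simp [this]

lemma lspec_step
    (hAt : ∀ A : Set Ω, MeasurableSet A → 0 < P A →
      ∃ B : Set Ω, B ⊆ A ∧ MeasurableSet B ∧ 0 < P B ∧ P B < P A)
    (n : ℕ) (E : ℕ → Set Ω) (hE : LSpec P n E) :
    ∃ E', LSpec P (n+1) E' ∧ ∀ j, E' (2*j) = E j := by
  classical
  obtain ⟨hMeas, hMono, hProb, hUniv⟩ := hE
  have hpowne : ((2:ℝ≥0∞)^n)⁻¹ ≠ ⊤ := by simp
  have hgap : ∀ j, j < 2^n → P (E (j+1) \ E j) = ((2:ℝ≥0∞)^n)⁻¹ := by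
    intro j hj
    have h1 : P (E (j+1) \ E j) = P (E (j+1)) - P (E j) :=
      measure_diff (hMono j) (hMeas j).nullMeasurableSet (measure_ne_top P _)
    rw [h1, hProb (j+1) (by omega), hProb j (by omega)]
    have : ((j:ℝ≥0∞) + 1) * ((2:ℝ≥0∞)^n)⁻¹ = (j:ℝ≥0∞) * ((2:ℝ≥0∞)^n)⁻¹ + ((2:ℝ≥0∞)^n)⁻¹ := by
      ring
    rw [Nat.cast_add, Nat.cast_one, this, ENNReal.add_sub_cancel_left]
    exact ENNReal.mul_ne_top (by simp) hpowne
  have hhalf : ((2:ℝ≥0∞)^(n+1))⁻¹ ≤ ((2:ℝ≥0∞)^n)⁻¹ := by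
    exact ENNReal.inv_le_inv.mpr (pow_le_pow_right₀ one_le_two (by omega))
  set C : ℕ → Set Ω := fun j =>
    if h : j < 2^n then
      (sierp P hAt (E (j+1) \ E j) ((hMeas (j+1)).diff (hMeas j)) ((2:ℝ≥0∞)^(n+1))⁻¹
        (by rw [hgap j h]; exact hhalf)).choose
    else ∅ with hCdef
  have hCspec : ∀ j, j < 2^n →
      C j ⊆ E (j+1) \ E j ∧ MeasurableSet (C j) ∧ P (C j) = ((2:ℝ≥0∞)^(n+1))⁻¹ := by
    intro j h
    have := (sierp P hAt (E (j+1) \ E j) ((hMeas (j+1)).diff (hMeas j)) ((2:ℝ≥0∞)^(n+1))⁻¹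
        (by rw [hgap j h]; exact hhalf)).choose_spec
    simpa [hCdef, h] using this
  have hCm : ∀ j, MeasurableSet (C j) := by
    intro j
    by_cases h : j < 2^n
    · exact (hCspec j h).2.1
    · simp [hCdef, h]
  have hCsub : ∀ j, C j ⊆ E (j+1) := by
    intro j
    by_cases h : j < 2^n
    · exact ((hCspec j h).1).trans diff_subset
    · simp [hCdef, h]
  have hCdisj : ∀ j, Disjoint (C j) (E j) := by
    intro j
    by_cases h : j < 2^n
    · exact disjoint_sdiff_left.mono_left (hCspec j h).1
    · simp [hCdef, h]
  refine ⟨fun k => if k % 2 = 0 then E (k/2) else E (k/2) ∪ C (k/2), ?_, ?_⟩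
  · constructor
    · intro k
      by_cases h : k % 2 = 0 <;> simp only [h, if_true, if_false]
      · exact hMeas _
      · exact (hMeas _).union (hCm _)
    constructor
    · -- monotone
      intro k
      rcases Nat.even_or_odd k with ⟨j, hj⟩ | ⟨j, hj⟩
      · subst hj
        have e1 : (j + j) % 2 = 0 := by omega
        have e2 : (j + j + 1) % 2 = 1 := by omega
        have e3 : (j + j) / 2 = j := by omega
        have e4 : (j + j + 1) / 2 = j := by omega
        simp only [e1, e2, e3, e4, if_true, if_false]
        simp only [one_ne_zero, if_false]
        exact subset_union_left
      · subst hj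
        have e1 : (2*j + 1) % 2 = 1 := by omega
        have e2 : (2*j + 1) / 2 = j := by omega
        have e3 : (2*j + 1 + 1) % 2 = 0 := by omega
        have e4 : (2*j + 1 + 1) / 2 = j + 1 := by omega
        simp only [e1, e2, e3, e4, one_ne_zero, if_false, if_true]
        exact union_subset (hMono j) (hCsub j)
    constructor
    · -- measure
      intro k hk
      rcases Nat.even_or_odd k with ⟨j, hj⟩ | ⟨j, hj⟩
      · subst hj
        have e1 : (j + j) % 2 = 0 := by omega
        have e3 : (j + j) / 2 = j := by omega
        have hj2 : j ≤ 2^n := by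
          have : 2^(n+1) = 2 * 2^n := by ring
          omega
        simp only [e1, e3, if_true]
        rw [hProb j hj2]
        have harith : ((j:ℝ≥0∞) + j) * ((2:ℝ≥0∞)^(n+1))⁻¹ = (j:ℝ≥0∞) * ((2:ℝ≥0∞)^n)⁻¹ := by
          have h2 : ((2:ℝ≥0∞)^(n+1))⁻¹ = 2⁻¹ * ((2:ℝ≥0∞)^n)⁻¹ := by
            rw [pow_succ, ENNReal.mul_inv (by simp) (by simp), mul_comm]
          rw [h2, ← mul_assoc]
          have : ((j:ℝ≥0∞) + j) * 2⁻¹ = j := by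
            rw [← two_mul, mul_comm ((2:ℝ≥0∞)) _, mul_assoc,
              ENNReal.mul_inv_cancel (by norm_num) (by norm_num), mul_one]
          rw [this]
        rw [Nat.cast_add, harith]
      · subst hj
        have e1 : (2*j + 1) % 2 = 1 := by omega
        have e2 : (2*j + 1) / 2 = j := by omega
        have hj2 : j < 2^n := by
          have : 2^(n+1) = 2 * 2^n := by ring
          omega
        simp only [e1, e2, one_ne_zero, if_false]
        rw [measure_union (hCdisj j).symm (hCm j), hProb j hj2.le, (hCspec j hj2).2.2]
        have h2 : ((2:ℝ≥0∞)^(n+1))⁻¹ = 2⁻¹ * ((2:ℝ≥0∞)^n)⁻¹ := by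
          rw [pow_succ, ENNReal.mul_inv (by simp) (by simp), mul_comm]
        push_cast
        rw [h2]
        have h21 : (2:ℝ≥0∞) * 2⁻¹ = 1 := ENNReal.mul_inv_cancel (by norm_num) (by norm_num)
        calc (j:ℝ≥0∞) * ((2:ℝ≥0∞)^n)⁻¹ + 2⁻¹ * ((2:ℝ≥0∞)^n)⁻¹
            = (2 * 2⁻¹) * ((j:ℝ≥0∞) * ((2:ℝ≥0∞)^n)⁻¹) + 2⁻¹ * ((2:ℝ≥0∞)^n)⁻¹ := by
              rw [h21, one_mul]
          _ = ((2:ℝ≥0∞) * j + 1) * (2⁻¹ * ((2:ℝ≥0∞)^n)⁻¹) := by ring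
    · -- univ
      intro k hk
      rcases Nat.even_or_odd k with ⟨j, hj⟩ | ⟨j, hj⟩
      · subst hj
        have e1 : (j + j) % 2 = 0 := by omega
        have e3 : (j + j) / 2 = j := by omega
        have hj2 : 2^n ≤ j := by
          have : 2^(n+1) = 2 * 2^n := by ring
          omega
        simp only [e1, e3, if_true]
        exact hUniv j hj2
      · subst hj
        have e1 : (2*j + 1) % 2 = 1 := by omega
        have e2 : (2*j + 1) / 2 = j := by omega
        have hj2 : 2^n ≤ j := by
          have : 2^(n+1) = 2 * 2^n := by ring
          omega
        simp only [e1, e2, one_ne_zero, if_false]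
        rw [hUniv j hj2, univ_union]
  · intro j
    have e1 : (2*j) % 2 = 0 := by omega
    have e2 : (2*j) / 2 = j := by omega
    simp only [e1, e2, if_true]

end Unif


section Unif2
variable {Ω : Type} [MeasurableSpace Ω] (P : Measure Ω) [IsProbabilityMeasure P]

lemma exists_uniform
    (hAt : ∀ A : Set Ω, MeasurableSet A → 0 < P A →
      ∃ B : Set Ω, B ⊆ A ∧ MeasurableSet B ∧ 0 < P B ∧ P B < P A) :
    ∃ U : Ω → ℝ, Measurable U ∧ (∀ ω, 0 ≤ U ω ∧ U ω ≤ 1) ∧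
      ∀ t : ℝ, 0 ≤ t → t ≤ 1 → P {ω | U ω ≤ t} = ENNReal.ofReal t := by
  classical
  -- the dyadic filtration
  let F : (n : ℕ) → {E : ℕ → Set Ω // LSpec P n E} := fun n =>
    Nat.rec ⟨_, lspec_zero P⟩
      (fun n p => ⟨(lspec_step P hAt n p.1 p.2).choose,
        (lspec_step P hAt n p.1 p.2).choose_spec.1⟩) n
  set A : ℕ → ℕ → Set Ω := fun n => (F n).1 with hAdef
  have hspec : ∀ n, LSpec P n (A n) := fun n => (F n).2
  have hconsist : ∀ n j, A (n+1) (2*j) = A n j := fun n j =>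
    (lspec_step P hAt n (F n).1 (F n).2).choose_spec.2 j
  -- cross-level monotonicity
  have hcrossd : ∀ n d k k', k * 2^d ≤ k' → A n k ⊆ A (n+d) k' := by
    intro n d
    induction d with
    | zero =>
      intro k k' hkk'
      simp only [pow_zero, mul_one] at hkk'
      exact lspec_mono (hspec n) hkk'
    | succ d ih =>
      intro k k' hkk'
      have h1 : A n k ⊆ A (n+d) (k * 2^d) := ih k _ le_rfl
      have h2 : A (n+d) (k * 2^d) = A (n+d+1) (2*(k * 2^d)) := (hconsist (n+d) _).symm
      have h3 : 2*(k * 2^d) ≤ k' := by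
        have heq : 2*(k * 2^d) = k * 2^(d+1) := by rw [pow_succ]; ring
        exact heq.trans_le hkk'
      exact (h1.trans h2.subset).trans (lspec_mono (hspec (n+d+1)) h3)
  have hcross : ∀ n m k k', n ≤ m → k * 2^(m-n) ≤ k' → A n k ⊆ A m k' := by
    intro n m k k' hnm hkk'
    obtain ⟨d, rfl⟩ : ∃ d, m = n + d := ⟨m - n, by omega⟩
    have hd : n + d - n = d := by omega
    rw [hd] at hkk'
    exact hcrossd n d k k' hkk'
  -- the dyadic value identity
  have hval : ∀ n m k, n ≤ m → ((k * 2^(m-n) : ℕ):ℝ) * ((2:ℝ)^m)⁻¹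
      = (k:ℝ) * ((2:ℝ)^n)⁻¹ := by
    intro n m k hnm
    have h2m : (2:ℝ)^m = 2^(m-n) * 2^n := by
      rw [← pow_add]; congr 1; omega
    push_cast
    rw [h2m]
    have hne1 : ((2:ℝ)^(m-n)) ≠ 0 := by positivity
    have hne2 : ((2:ℝ)^n) ≠ 0 := by positivity
    field_simp
  -- the uniform random variable
  set Q : Ω → Set ℝ := fun ω =>
    {x : ℝ | x = 1 ∨ ∃ n k : ℕ, ω ∈ A n k ∧ x = (k : ℝ) * ((2:ℝ)^n)⁻¹} with hQdef
  have hQne : ∀ ω, (Q ω).Nonempty := fun ω => ⟨1, Or.inl rfl⟩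
  have hQbdd : ∀ ω, BddBelow (Q ω) := by
    intro ω
    refine ⟨0, fun x hx => ?_⟩
    rcases hx with rfl | ⟨n, k, _, rfl⟩
    · norm_num
    · positivity
  set U : Ω → ℝ := fun ω => sInf (Q ω) with hUdef
  have hU0 : ∀ ω, 0 ≤ U ω := fun ω => le_csInf (hQne ω) (fun x hx => by
    rcases hx with rfl | ⟨n, k, _, rfl⟩
    · norm_num
    · positivity)
  have hU1 : ∀ ω, U ω ≤ 1 := fun ω => csInf_le (hQbdd ω) (Or.inl rfl)
  -- sub-level sets
  have hlev : ∀ x : ℝ, {ω | U ω < x} =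
      ⋃ (n : ℕ) (k : ℕ) (_ : (k : ℝ) * ((2:ℝ)^n)⁻¹ < x), A n k := by
    intro x
    ext ω
    simp only [mem_setOf_eq, mem_iUnion]
    constructor
    · intro h
      obtain ⟨q, hq, hqx⟩ := exists_lt_of_csInf_lt (hQne ω) h
      rcases hq with rfl | ⟨n, k, hmem, rfl⟩
      · refine ⟨0, 1, ?_, ?_⟩
        · simpa using hqx
        · have : A 0 1 = univ := (hspec 0).2.2.2 1 (by norm_num)
          simp [this]
      · exact ⟨n, k, hqx, hmem⟩
    · rintro ⟨n, k, hkx, hmem⟩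
      exact lt_of_le_of_lt (csInf_le (hQbdd ω) (Or.inr ⟨n, k, hmem, rfl⟩)) hkx
  have hlevms : ∀ x : ℝ, MeasurableSet {ω | U ω < x} := by
    intro x
    rw [hlev x]
    exact MeasurableSet.iUnion fun n => MeasurableSet.iUnion fun k =>
      MeasurableSet.iUnion fun _ => (hspec n).1 k
  have hUmeas : Measurable U := by
    apply measurable_of_Iio
    intro x
    exact hlevms x
  -- ENNReal dyadic value
  have hdyENN : ∀ n k : ℕ, k ≤ 2^n →
      P (A n k) = ENNReal.ofReal ((k : ℝ) * ((2:ℝ)^n)⁻¹) := by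
    intro n k hk
    rw [(hspec n).2.2.1 k hk]
    rw [ENNReal.ofReal_mul (by positivity), ENNReal.ofReal_natCast,
      ENNReal.ofReal_inv_of_pos (by positivity), ENNReal.ofReal_pow (by norm_num)]
    norm_num
  -- measure of strict sublevel sets
  have hlevmeas : ∀ x : ℝ, 0 < x → x ≤ 1 → P {ω | U ω < x} = ENNReal.ofReal x := by
    intro x hx0 hx1
    apply le_antisymm
    · -- upper bound via directedness
      rw [hlev x]
      set s : ℕ × ℕ → Set Ω := fun p =>
        if (p.2 : ℝ) * ((2:ℝ)^p.1)⁻¹ < x then A p.1 p.2 else ∅ with hsdef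
      have hcover : (⋃ (n : ℕ) (k : ℕ) (_ : (k : ℝ) * ((2:ℝ)^n)⁻¹ < x), A n k) = ⋃ p, s p := by
        ext ω
        simp only [mem_iUnion, hsdef]
        constructor
        · rintro ⟨n, k, hkx, hmem⟩
          exact ⟨⟨n, k⟩, by simp [hkx, hmem]⟩
        · rintro ⟨⟨n, k⟩, hmem⟩
          by_cases h : (k : ℝ) * ((2:ℝ)^n)⁻¹ < x
          · simp only [h, if_true] at hmem
            exact ⟨n, k, h, hmem⟩
          · simp [h] at hmem
      have hsmono : ∀ n m k : ℕ, n ≤ m → (k:ℝ) * ((2:ℝ)^n)⁻¹ < x →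
          A n k ⊆ A m (k * 2^(m-n)) ∧ ((k * 2^(m-n) : ℕ):ℝ) * ((2:ℝ)^m)⁻¹ < x := by
        intro n m k hnm hkx
        exact ⟨hcross n m k _ hnm le_rfl, by rw [hval n m k hnm]; exact hkx⟩
      have hdir : Directed (· ⊆ ·) s := by
        rintro ⟨n, k⟩ ⟨m, j⟩
        by_cases hp : (k : ℝ) * ((2:ℝ)^n)⁻¹ < x
        case neg =>
          refine ⟨⟨m, j⟩, ?_, subset_rfl⟩
          simp [hsdef, hp]
        by_cases hq : (j : ℝ) * ((2:ℝ)^m)⁻¹ < x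
        case neg =>
          refine ⟨⟨n, k⟩, subset_rfl, ?_⟩
          simp [hsdef, hq]
        set L := max n m with hL
        set a := k * 2^(L-n) with ha
        set b := j * 2^(L-m) with hb
        have h1 := hsmono n L k (le_max_left n m) hp
        have h2 := hsmono m L j (le_max_right n m) hq
        refine ⟨⟨L, max a b⟩, ?_, ?_⟩
        · have hcond : ((max a b : ℕ):ℝ) * ((2:ℝ)^L)⁻¹ < x := by
            rcases max_cases a b with ⟨hmax, _⟩ | ⟨hmax, _⟩ <;> rw [hmax]
            · exact h1.2
            · exact h2.2
          simp only [hsdef, hp, if_true, hcond]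
          exact h1.1.trans (lspec_mono (hspec L) (le_max_left a b))
        · have hcond : ((max a b : ℕ):ℝ) * ((2:ℝ)^L)⁻¹ < x := by
            rcases max_cases a b with ⟨hmax, _⟩ | ⟨hmax, _⟩ <;> rw [hmax]
            · exact h1.2
            · exact h2.2
          simp only [hsdef, hq, if_true, hcond]
          exact h2.1.trans (lspec_mono (hspec L) (le_max_right a b))
      rw [hcover, hdir.measure_iUnion]
      refine iSup_le ?_
      rintro ⟨n, k⟩
      by_cases h : (k : ℝ) * ((2:ℝ)^n)⁻¹ < x
      · simp only [hsdef, h, if_true]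
        have hk2 : k ≤ 2^n := by
          have h1 : (k:ℝ) < x * 2^n := by
            have hpow : (0:ℝ) < 2^n := by positivity
            calc (k:ℝ) = (k:ℝ) * ((2:ℝ)^n)⁻¹ * 2^n := by field_simp
              _ < x * 2^n := by gcongr
          have h2 : (k:ℝ) < (2:ℝ)^n := lt_of_lt_of_le h1 (by nlinarith)
          exact_mod_cast h2.le.trans (le_refl _)
        rw [hdyENN n k hk2]
        exact ENNReal.ofReal_le_ofReal h.le
      · simp [hsdef, h]
    · -- lower bound
      refine ENNReal.le_of_forall_pos_le_add fun ε hε _ => ?_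
      obtain ⟨n, hn⟩ := exists_pow_lt_of_lt_one (show (0:ℝ) < ε from hε)
        (show (2:ℝ)⁻¹ < 1 by norm_num)
      have hxpow : (0:ℝ) < x * 2^n := by positivity
      set c := ⌈x * (2:ℝ)^n⌉₊ with hc
      have hc1 : 1 ≤ c := Nat.one_le_iff_ne_zero.mpr (by
        simp only [hc, ne_eq, Nat.ceil_eq_zero, not_le]
        exact hxpow)
      set k := c - 1 with hk
      have hkc : k + 1 = c := by omega
      have hklt : (k:ℝ) < x * 2^n := by
        have := Nat.ceil_lt_add_one hxpow.le (R := ℝ)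
        have hcast : (c:ℝ) = (k:ℝ) + 1 := by
          rw [← hkc]; push_cast; ring
        rw [hc] at hcast
        nlinarith [this]
      have hxle : x ≤ ((k:ℝ) + 1) * ((2:ℝ)^n)⁻¹ := by
        have hle := Nat.le_ceil (x * (2:ℝ)^n)
        have hcast : ((⌈x * (2:ℝ)^n⌉₊ : ℕ):ℝ) = (k:ℝ) + 1 := by
          rw [← hc, ← hkc]; push_cast; ring
        rw [hcast] at hle
        have hpow : (0:ℝ) < 2^n := by positivity
        have h5 : x ≤ ((k:ℝ) + 1) / 2^n := (le_div_iff₀ hpow).mpr (by linarith [hle])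
        rwa [div_eq_mul_inv] at h5
      have hkx : (k:ℝ) * ((2:ℝ)^n)⁻¹ < x := by
        have hpow : (0:ℝ) < 2^n := by positivity
        rw [← div_lt_iff₀ hpow] at hklt
        rwa [div_eq_mul_inv] at hklt
      have hk2 : k ≤ 2^n := by
        have : (k:ℝ) < (2:ℝ)^n := by nlinarith
        exact_mod_cast this.le.trans (le_refl _)
      have hsub : A n k ⊆ {ω | U ω < x} := by
        rw [hlev x]
        intro ω hω
        exact mem_iUnion.mpr ⟨n, mem_iUnion.mpr ⟨k, mem_iUnion.mpr ⟨hkx, hω⟩⟩⟩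
      calc ENNReal.ofReal x ≤ ENNReal.ofReal ((k:ℝ) * ((2:ℝ)^n)⁻¹ + ε) := by
            apply ENNReal.ofReal_le_ofReal
            have hpe : ((2:ℝ)^n)⁻¹ ≤ ε := by
              rw [← inv_pow]
              exact hn.le
            calc x ≤ ((k:ℝ) + 1) * ((2:ℝ)^n)⁻¹ := hxle
              _ = (k:ℝ) * ((2:ℝ)^n)⁻¹ + ((2:ℝ)^n)⁻¹ := by ring
              _ ≤ (k:ℝ) * ((2:ℝ)^n)⁻¹ + ε := by linarith
        _ ≤ ENNReal.ofReal ((k:ℝ) * ((2:ℝ)^n)⁻¹) + ENNReal.ofReal ε :=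
            ENNReal.ofReal_add_le
        _ = P (A n k) + (ε : ℝ≥0∞) := by
            rw [hdyENN n k hk2, ENNReal.ofReal_coe_nnreal]
        _ ≤ P {ω | U ω < x} + (ε : ℝ≥0∞) :=
            add_le_add_left (measure_mono hsub) _
  -- conclusion: the cdf of U
  refine ⟨U, hUmeas, fun ω => ⟨hU0 ω, hU1 ω⟩, ?_⟩
  intro t ht0 ht1
  rcases eq_or_lt_of_le ht1 with h1 | h1
  · have : {ω | U ω ≤ t} = univ := by
      ext ω; simp only [mem_setOf_eq, mem_univ, iff_true]
      rw [h1] at *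
      exact hU1 ω
    rw [this, h1]
    simp
  · -- t < 1
    set S : ℕ → Set Ω := fun m => {ω | U ω < t + (1-t) * (2⁻¹:ℝ)^(m+1)} with hSdef
    have hpos : ∀ m, 0 < t + (1-t) * (2⁻¹:ℝ)^(m+1) := by
      intro m
      have : (0:ℝ) < (1-t) * (2⁻¹:ℝ)^(m+1) :=
        mul_pos (by linarith) (pow_pos (by norm_num) _)
      linarith
    have hle1 : ∀ m, t + (1-t) * (2⁻¹:ℝ)^(m+1) ≤ 1 := by
      intro m
      have h2 : (2⁻¹:ℝ)^(m+1) ≤ 1 := by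
        apply pow_le_one₀ <;> norm_num
      nlinarith
    have hanti : Antitone S := by
      intro m m' hmm ω hω
      simp only [hSdef, mem_setOf_eq] at hω ⊢
      have : (2⁻¹:ℝ)^(m'+1) ≤ (2⁻¹:ℝ)^(m+1) :=
        pow_le_pow_of_le_one (by norm_num) (by norm_num) (by omega)
      nlinarith
    have hiInt : ⋂ m, S m = {ω | U ω ≤ t} := by
      ext ω
      simp only [mem_iInter, hSdef, mem_setOf_eq]
      constructor
      · intro h
        by_contra hc
        push_neg at hc
        obtain ⟨m, hm⟩ := exists_pow_lt_of_lt_one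
          (show (0:ℝ) < (U ω - t) / (1 - t) by
            apply div_pos <;> linarith)
          (show (2⁻¹:ℝ) < 1 by norm_num)
        have h2 : (2⁻¹:ℝ)^(m+1) ≤ (2⁻¹:ℝ)^m :=
          pow_le_pow_of_le_one (by norm_num) (by norm_num) (by omega)
        have h3 : (1-t) * (2⁻¹:ℝ)^(m+1) < U ω - t := by
          have h4 : (1-t) * (2⁻¹:ℝ)^m < U ω - t := by
            rw [lt_div_iff₀ (show (0:ℝ) < 1 - t by linarith)] at hm
            nlinarith
          nlinarith [pow_pos (show (0:ℝ) < 2⁻¹ by norm_num) (m+1), h2]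
        have := h m
        linarith
      · intro h m
        have hq : 0 < (1-t) * (2⁻¹:ℝ)^(m+1) :=
          mul_pos (by linarith) (pow_pos (by norm_num) _)
        linarith
    have htendsto : Tendsto (fun m => P (S m)) atTop (𝓝 (P {ω | U ω ≤ t})) := by
      rw [← hiInt]
      exact tendsto_measure_iInter_atTop
        (fun m => (hlevms _).nullMeasurableSet) hanti ⟨0, measure_ne_top _ _⟩
    have heval : ∀ m, P (S m) = ENNReal.ofReal (t + (1-t) * (2⁻¹:ℝ)^(m+1)) := by
      intro m
      exact hlevmeas _ (hpos m) (hle1 m)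
    have htendsto2 : Tendsto (fun m => P (S m)) atTop (𝓝 (ENNReal.ofReal t)) := by
      simp only [heval]
      apply ENNReal.tendsto_ofReal
      have hpow : Tendsto (fun m : ℕ => (2⁻¹:ℝ)^(m+1)) atTop (𝓝 0) := by
        have h0 := tendsto_pow_atTop_nhds_zero_of_lt_one
          (show (0:ℝ) ≤ 2⁻¹ by norm_num) (show (2⁻¹:ℝ) < 1 by norm_num)
        exact h0.comp (tendsto_add_atTop_nat 1)
      have : Tendsto (fun m : ℕ => t + (1-t) * (2⁻¹:ℝ)^(m+1)) atTop (𝓝 (t + (1-t) * 0)) :=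
        tendsto_const_nhds.add (hpow.const_mul _)
      simpa using this
    exact tendsto_nhds_unique htendsto htendsto2

end Unif2

noncomputable def qf (μ : Measure ℝ) (C u : ℝ) : ℝ :=
  sInf {x | min u 1 ≤ cdf μ x ∧ -C - 1 ≤ x}

section Quant
variable (μ ν : Measure ℝ) (C : ℝ)

lemma qset_bdd (u : ℝ) : BddBelow {x | min u 1 ≤ cdf μ x ∧ -C - 1 ≤ x} :=
  ⟨-C - 1, fun x hx => hx.2⟩

lemma qset_mem (hC1 : cdf μ C = 1) (hC : 0 ≤ C) (u : ℝ) :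
    C ∈ {x | min u 1 ≤ cdf μ x ∧ -C - 1 ≤ x} :=
  ⟨by rw [hC1]; exact min_le_right _ _, by linarith⟩

lemma qf_le_C (hC1 : cdf μ C = 1) (hC : 0 ≤ C) (u : ℝ) : qf μ C u ≤ C :=
  csInf_le (qset_bdd μ C u) (qset_mem μ C hC1 hC u)

lemma qf_ge (hC1 : cdf μ C = 1) (hC : 0 ≤ C) (u : ℝ) : -C - 1 ≤ qf μ C u :=
  le_csInf ⟨C, qset_mem μ C hC1 hC u⟩ (fun x hx => hx.2)

lemma qf_mono (hC1 : cdf μ C = 1) (hC : 0 ≤ C) : Monotone (qf μ C) := by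
  intro v w hvw
  apply csInf_le_csInf (qset_bdd μ C v) ⟨C, qset_mem μ C hC1 hC w⟩
  intro x hx
  exact ⟨le_trans (min_le_min hvw le_rfl) hx.1, hx.2⟩

lemma qf_comp (hC1 : cdf μ C = 1) (hC : 0 ≤ C) (hle : ∀ x, cdf μ x ≤ cdf ν x) (u : ℝ) :
    qf ν C u ≤ qf μ C u := by
  apply csInf_le_csInf (qset_bdd ν C u) ⟨C, qset_mem μ C hC1 hC u⟩
  intro x hx
  exact ⟨hx.1.trans (hle x), hx.2⟩

lemma qf_le_iff (hC1 : cdf μ C = 1) (hC0 : ∀ x, x < -C → cdf μ x = 0) (hC : 0 ≤ C)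
    {v : ℝ} (hv0 : 0 < v) (hv1 : v ≤ 1) (x : ℝ) :
    qf μ C v ≤ x ↔ v ≤ cdf μ x := by
  have hmin : min v 1 = v := min_eq_left hv1
  constructor
  · intro h
    have hkey : v ≤ cdf μ (qf μ C v) := by
      have hne : {y | min v 1 ≤ cdf μ y ∧ -C - 1 ≤ y}.Nonempty := ⟨C, qset_mem μ C hC1 hC v⟩
      have hev : ∀ᶠ y in 𝓝[>] (qf μ C v), v ≤ cdf μ y := by
        apply eventually_nhdsWithin_of_forall
        intro y hy
        obtain ⟨z, hz, hzy⟩ := exists_lt_of_csInf_lt hne hy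
        calc v = min v 1 := hmin.symm
          _ ≤ cdf μ z := hz.1
          _ ≤ cdf μ y := (monotone_cdf μ) hzy.le
      have htd : Tendsto (cdf μ) (𝓝[>] (qf μ C v)) (𝓝 (cdf μ (qf μ C v))) :=
        ((cdf μ).right_continuous _).tendsto.mono_left
          (nhdsWithin_mono _ Ioi_subset_Ici_self)
      exact ge_of_tendsto htd hev
    exact hkey.trans ((monotone_cdf μ) h)
  · intro h
    apply csInf_le (qset_bdd μ C v)
    refine ⟨by rwa [hmin], ?_⟩
    by_contra hx
    push_neg at hx
    have : cdf μ x = 0 := hC0 x (by linarith)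
    rw [this] at h
    linarith

end Quant

section QuantLaw
variable {Ω : Type} [MeasurableSpace Ω] (P : Measure Ω) [IsProbabilityMeasure P]

lemma qf_law (μ : Measure ℝ) [IsProbabilityMeasure μ] (C : ℝ)
    (hC1 : cdf μ C = 1) (hC0 : ∀ x, x < -C → cdf μ x = 0) (hC : 0 ≤ C)
    (U : Ω → ℝ) (hUm : Measurable U) (hUb : ∀ ω, 0 ≤ U ω ∧ U ω ≤ 1)
    (hUlaw : ∀ t : ℝ, 0 ≤ t → t ≤ 1 → P {ω | U ω ≤ t} = ENNReal.ofReal t) :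
    P.map (fun ω => qf μ C (U ω)) = μ := by
  have hZm : Measurable (fun ω => qf μ C (U ω)) :=
    ((qf_mono μ C hC1 hC).measurable).comp hUm
  have : IsProbabilityMeasure (P.map (fun ω => qf μ C (U ω))) :=
    Measure.isProbabilityMeasure_map hZm.aemeasurable
  apply Measure.ext_of_Iic
  intro x
  rw [Measure.map_apply hZm measurableSet_Iic]
  have hN : P {ω | U ω ≤ 0} = 0 := by
    have := hUlaw 0 le_rfl zero_le_one
    simpa using this
  have hseteq : {ω | qf μ C (U ω) ≤ x} \ {ω | U ω ≤ 0}
      = {ω | U ω ≤ cdf μ x} \ {ω | U ω ≤ 0} := by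
    ext ω
    simp only [mem_diff, mem_setOf_eq, not_le]
    constructor
    · rintro ⟨h1, h2⟩
      exact ⟨((qf_le_iff μ C hC1 hC0 hC h2 (hUb ω).2 x).mp h1), h2⟩
    · rintro ⟨h1, h2⟩
      exact ⟨((qf_le_iff μ C hC1 hC0 hC h2 (hUb ω).2 x).mpr h1), h2⟩
  have hpre : (fun ω => qf μ C (U ω)) ⁻¹' Iic x = {ω | qf μ C (U ω) ≤ x} := rfl
  rw [hpre]
  calc P {ω | qf μ C (U ω) ≤ x}
      = P ({ω | qf μ C (U ω) ≤ x} \ {ω | U ω ≤ 0}) := (measure_diff_null hN).symm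
    _ = P ({ω | U ω ≤ cdf μ x} \ {ω | U ω ≤ 0}) := by rw [hseteq]
    _ = P {ω | U ω ≤ cdf μ x} := measure_diff_null hN
    _ = ENNReal.ofReal (cdf μ x) := hUlaw _ (cdf_nonneg μ x) (cdf_le_one μ x)
    _ = μ (Iic x) := ofReal_cdf μ x

end QuantLaw

section Key
variable {Ω : Type} [MeasurableSpace Ω] (P : Measure Ω) [IsProbabilityMeasure P]

lemma map_iic_one (f : Ω → ℝ) (D : ℝ) (hf : Measurable f) (hD : ∀ᵐ ω ∂P, |f ω| ≤ D)
    (x : ℝ) (hx : D ≤ x) : P.map f (Iic x) = 1 := by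
  rw [Measure.map_apply hf measurableSet_Iic]
  rw [← prob_compl_eq_zero_iff (hf measurableSet_Iic)]
  apply measure_mono_null _ (ae_iff.mp hD)
  intro ω hω
  simp only [mem_compl_iff, mem_preimage, mem_Iic, not_le, mem_setOf_eq] at hω ⊢
  exact lt_of_lt_of_le (lt_of_le_of_lt hx hω) (le_abs_self _)

lemma map_iic_zero (f : Ω → ℝ) (D : ℝ) (hf : Measurable f) (hD : ∀ᵐ ω ∂P, |f ω| ≤ D)
    (x : ℝ) (hx : x < -D) : P.map f (Iic x) = 0 := by
  rw [Measure.map_apply hf measurableSet_Iic]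
  apply measure_mono_null _ (ae_iff.mp hD)
  intro ω hω
  simp only [mem_preimage, mem_Iic, mem_setOf_eq, not_le] at hω ⊢
  have : -f ω > D := by linarith
  calc D < -f ω := this
    _ ≤ |f ω| := neg_le_abs _

lemma cdf_one_of (ρ : Measure ℝ) [IsProbabilityMeasure ρ] (y : ℝ) (h : ρ (Iic y) = 1) :
    cdf ρ y = 1 := by rw [cdf_eq_real, measureReal_def, h]; simp

lemma cdf_zero_of (ρ : Measure ℝ) [IsProbabilityMeasure ρ] (y : ℝ) (h : ρ (Iic y) = 0) :
    cdf ρ y = 0 := by rw [cdf_eq_real, measureReal_def, h]; simp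

lemma key_lower
    (u : (Ω → ℝ) → ℝ)
    (hTI : ∀ ξ : Ω → ℝ, BddMeas P ξ → ∀ h : ℝ, u (fun ω => ξ ω + h) = u ξ + h)
    (hMono : ∀ ξ η : Ω → ℝ, BddMeas P ξ → BddMeas P η → (∀ᵐ ω ∂P, ξ ω ≤ η ω) → u ξ ≤ u η)
    (hLaw : ∀ ξ η : Ω → ℝ, BddMeas P ξ → BddMeas P η → P.map ξ = P.map η → u ξ = u η)
    (hCxLS : CxLS P u)
    (U : Ω → ℝ) (hUm : Measurable U) (hUb : ∀ ω, 0 ≤ U ω ∧ U ω ≤ 1)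
    (hUlaw : ∀ t : ℝ, 0 ≤ t → t ≤ 1 → P {ω | U ω ≤ t} = ENNReal.ofReal t)
    (ξ η ζ : Ω → ℝ) (hξ : BddMeas P ξ) (hη : BddMeas P η) (hζ : BddMeas P ζ)
    (α : ℝ) (hα0 : 0 < α) (hα1 : α < 1)
    (hmix : P.map ζ = ENNReal.ofReal α • P.map ξ + ENNReal.ofReal (1-α) • P.map η)
    (d : ℝ) (hd : 0 ≤ d) (hval : u η - d = u ξ) :
    u ξ ≤ u ζ := by
  obtain ⟨hξm, Cξ, hCξ⟩ := hξ
  obtain ⟨hηm, Cη, hCη⟩ := hη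
  obtain ⟨hζm, Cζ, hCζ⟩ := hζ
  have hξbdd : BddMeas P ξ := ⟨hξm, Cξ, hCξ⟩
  have hηbdd : BddMeas P η := ⟨hηm, Cη, hCη⟩
  have hζbdd : BddMeas P ζ := ⟨hζm, Cζ, hCζ⟩
  set η' : Ω → ℝ := fun ω => η ω + (-d) with hη'def
  have hη'm : Measurable η' := hηm.add_const _
  have hCη' : ∀ᵐ ω ∂P, |η' ω| ≤ Cη + d := by
    filter_upwards [hCη] with ω hω
    calc |η' ω| ≤ |η ω| + |(-d)| := abs_add_le _ _
      _ ≤ Cη + d := by rw [abs_neg, abs_of_nonneg hd]; linarith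
  have hη'bdd : BddMeas P η' := ⟨hη'm, Cη + d, hCη'⟩
  set C : ℝ := |Cξ| + |Cη| + |Cζ| + d + 1 with hCdef
  have habsξ := abs_nonneg Cξ
  have habsη := abs_nonneg Cη
  have habsζ := abs_nonneg Cζ
  have hleξ := le_abs_self Cξ
  have hleη := le_abs_self Cη
  have hleζ := le_abs_self Cζ
  have hC : 0 ≤ C := by rw [hCdef]; linarith
  haveI : IsProbabilityMeasure (P.map ξ) := Measure.isProbabilityMeasure_map hξm.aemeasurable
  haveI : IsProbabilityMeasure (P.map η) := Measure.isProbabilityMeasure_map hηm.aemeasurable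
  haveI : IsProbabilityMeasure (P.map η') := Measure.isProbabilityMeasure_map hη'm.aemeasurable
  haveI : IsProbabilityMeasure (P.map ζ) := Measure.isProbabilityMeasure_map hζm.aemeasurable
  set μ : Measure ℝ := P.map ζ with hμdef
  set ν : Measure ℝ := ENNReal.ofReal α • P.map ξ + ENNReal.ofReal (1-α) • P.map η'
    with hνdef
  have hνapp : ∀ s : Set ℝ,
      ν s = ENNReal.ofReal α * P.map ξ s + ENNReal.ofReal (1-α) * P.map η' s := by
    intro s
    rw [hνdef]
    simp [Measure.add_apply, Measure.smul_apply, smul_eq_mul]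
  have hcoeff : ENNReal.ofReal α + ENNReal.ofReal (1-α) = 1 := by
    rw [← ENNReal.ofReal_add (by linarith) (by linarith)]
    norm_num
  haveI hνprob : IsProbabilityMeasure ν := by
    constructor
    rw [hνapp, measure_univ, measure_univ, mul_one, mul_one, hcoeff]
  have hμ1 : cdf μ C = 1 :=
    cdf_one_of _ _ (map_iic_one P ζ Cζ hζm hCζ C (by rw [hCdef]; linarith))
  have hμ0 : ∀ x, x < -C → cdf μ x = 0 := fun x hx =>
    cdf_zero_of _ _ (map_iic_zero P ζ Cζ hζm hCζ x (by rw [hCdef] at hx; linarith))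
  have hν1 : cdf ν C = 1 := by
    apply cdf_one_of
    rw [hνapp, map_iic_one P ξ Cξ hξm hCξ C (by rw [hCdef]; linarith),
      map_iic_one P η' (Cη + d) hη'm hCη' C (by rw [hCdef]; linarith),
      mul_one, mul_one, hcoeff]
  have hν0 : ∀ x, x < -C → cdf ν x = 0 := by
    intro x hx
    rw [hCdef] at hx
    apply cdf_zero_of
    rw [hνapp, map_iic_zero P ξ Cξ hξm hCξ x (by linarith),
      map_iic_zero P η' (Cη + d) hη'm hCη' x (by linarith)]
    simp
  have hshift : ∀ x, P.map η (Iic x) ≤ P.map η' (Iic x) := by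
    intro x
    rw [Measure.map_apply hηm measurableSet_Iic, Measure.map_apply hη'm measurableSet_Iic]
    apply measure_mono
    intro ω hω
    simp only [mem_preimage, mem_Iic] at hω ⊢
    have : η' ω = η ω + (-d) := rfl
    rw [this]
    linarith
  have hμν : ∀ x, cdf μ x ≤ cdf ν x := by
    intro x
    rw [cdf_eq_real, cdf_eq_real, measureReal_def, measureReal_def]
    apply ENNReal.toReal_mono (measure_ne_top ν _)
    have hmixapp : μ (Iic x)
        = ENNReal.ofReal α * P.map ξ (Iic x) + ENNReal.ofReal (1-α) * P.map η (Iic x) := by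
      rw [hmix]
      simp [Measure.add_apply, Measure.smul_apply, smul_eq_mul]
    rw [hmixapp, hνapp]
    gcongr _ + _ * ?_
    exact hshift x
  set Z : Ω → ℝ := fun ω => qf μ C (U ω) with hZdef
  set Z' : Ω → ℝ := fun ω => qf ν C (U ω) with hZ'def
  have hlawZ : P.map Z = μ := qf_law P μ C hμ1 hμ0 hC U hUm hUb hUlaw
  have hlawZ' : P.map Z' = ν := qf_law P ν C hν1 hν0 hC U hUm hUb hUlaw
  have hZbdd : BddMeas P Z :=
    ⟨(qf_mono μ C hμ1 hC).measurable.comp hUm, C + 1, ae_of_all _ fun ω => abs_le.mpr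
      ⟨by have := qf_ge μ C hμ1 hC (U ω); linarith,
       by have := qf_le_C μ C hμ1 hC (U ω); linarith⟩⟩
  have hZ'bdd : BddMeas P Z' :=
    ⟨(qf_mono ν C hν1 hC).measurable.comp hUm, C + 1, ae_of_all _ fun ω => abs_le.mpr
      ⟨by have := qf_ge ν C hν1 hC (U ω); linarith,
       by have := qf_le_C ν C hν1 hC (U ω); linarith⟩⟩
  have huη' : u η' = u ξ := by
    have := hTI η hηbdd (-d)
    rw [hη'def]
    rw [this]
    linarith
  have huZ' : u Z' = u ξ :=
    hCxLS ξ η' Z' hξbdd hη'bdd hZ'bdd huη'.symm α hα0 hα1 (by rw [hlawZ'])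
  have huZ : u Z = u ζ := hLaw Z ζ hZbdd hζbdd (by rw [hlawZ])
  have hZle : ∀ ω, Z' ω ≤ Z ω := fun ω => qf_comp μ ν C hμ1 hC hμν (U ω)
  calc u ξ = u Z' := huZ'.symm
    _ ≤ u Z := hMono Z' Z hZ'bdd hZbdd (ae_of_all _ hZle)
    _ = u ζ := huZ

lemma key_upper
    (u : (Ω → ℝ) → ℝ)
    (hTI : ∀ ξ : Ω → ℝ, BddMeas P ξ → ∀ h : ℝ, u (fun ω => ξ ω + h) = u ξ + h)
    (hMono : ∀ ξ η : Ω → ℝ, BddMeas P ξ → BddMeas P η → (∀ᵐ ω ∂P, ξ ω ≤ η ω) → u ξ ≤ u η)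
    (hLaw : ∀ ξ η : Ω → ℝ, BddMeas P ξ → BddMeas P η → P.map ξ = P.map η → u ξ = u η)
    (hCxLS : CxLS P u)
    (U : Ω → ℝ) (hUm : Measurable U) (hUb : ∀ ω, 0 ≤ U ω ∧ U ω ≤ 1)
    (hUlaw : ∀ t : ℝ, 0 ≤ t → t ≤ 1 → P {ω | U ω ≤ t} = ENNReal.ofReal t)
    (ξ η ζ : Ω → ℝ) (hξ : BddMeas P ξ) (hη : BddMeas P η) (hζ : BddMeas P ζ)
    (α : ℝ) (hα0 : 0 < α) (hα1 : α < 1)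
    (hmix : P.map ζ = ENNReal.ofReal α • P.map ξ + ENNReal.ofReal (1-α) • P.map η)
    (d : ℝ) (hd : 0 ≤ d) (hval : u η + d = u ξ) :
    u ζ ≤ u ξ := by
  obtain ⟨hξm, Cξ, hCξ⟩ := hξ
  obtain ⟨hηm, Cη, hCη⟩ := hη
  obtain ⟨hζm, Cζ, hCζ⟩ := hζ
  have hξbdd : BddMeas P ξ := ⟨hξm, Cξ, hCξ⟩
  have hηbdd : BddMeas P η := ⟨hηm, Cη, hCη⟩
  have hζbdd : BddMeas P ζ := ⟨hζm, Cζ, hCζ⟩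
  set η' : Ω → ℝ := fun ω => η ω + d with hη'def
  have hη'm : Measurable η' := hηm.add_const _
  have hCη' : ∀ᵐ ω ∂P, |η' ω| ≤ Cη + d := by
    filter_upwards [hCη] with ω hω
    calc |η' ω| ≤ |η ω| + |d| := abs_add_le _ _
      _ ≤ Cη + d := by rw [abs_of_nonneg hd]; linarith
  have hη'bdd : BddMeas P η' := ⟨hη'm, Cη + d, hCη'⟩
  set C : ℝ := |Cξ| + |Cη| + |Cζ| + d + 1 with hCdef
  have habsξ := abs_nonneg Cξ
  have habsη := abs_nonneg Cη
  have habsζ := abs_nonneg Cζ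
  have hleξ := le_abs_self Cξ
  have hleη := le_abs_self Cη
  have hleζ := le_abs_self Cζ
  have hC : 0 ≤ C := by rw [hCdef]; linarith
  haveI : IsProbabilityMeasure (P.map ξ) := Measure.isProbabilityMeasure_map hξm.aemeasurable
  haveI : IsProbabilityMeasure (P.map η) := Measure.isProbabilityMeasure_map hηm.aemeasurable
  haveI : IsProbabilityMeasure (P.map η') := Measure.isProbabilityMeasure_map hη'm.aemeasurable
  haveI : IsProbabilityMeasure (P.map ζ) := Measure.isProbabilityMeasure_map hζm.aemeasurable
  set μ : Measure ℝ := P.map ζ with hμdef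
  set ν : Measure ℝ := ENNReal.ofReal α • P.map ξ + ENNReal.ofReal (1-α) • P.map η'
    with hνdef
  have hνapp : ∀ s : Set ℝ,
      ν s = ENNReal.ofReal α * P.map ξ s + ENNReal.ofReal (1-α) * P.map η' s := by
    intro s
    rw [hνdef]
    simp [Measure.add_apply, Measure.smul_apply, smul_eq_mul]
  have hcoeff : ENNReal.ofReal α + ENNReal.ofReal (1-α) = 1 := by
    rw [← ENNReal.ofReal_add (by linarith) (by linarith)]
    norm_num
  haveI hνprob : IsProbabilityMeasure ν := by
    constructor
    rw [hνapp, measure_univ, measure_univ, mul_one, mul_one, hcoeff]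
  have hμ1 : cdf μ C = 1 :=
    cdf_one_of _ _ (map_iic_one P ζ Cζ hζm hCζ C (by rw [hCdef]; linarith))
  have hμ0 : ∀ x, x < -C → cdf μ x = 0 := fun x hx =>
    cdf_zero_of _ _ (map_iic_zero P ζ Cζ hζm hCζ x (by rw [hCdef] at hx; linarith))
  have hν1 : cdf ν C = 1 := by
    apply cdf_one_of
    rw [hνapp, map_iic_one P ξ Cξ hξm hCξ C (by rw [hCdef]; linarith),
      map_iic_one P η' (Cη + d) hη'm hCη' C (by rw [hCdef]; linarith),
      mul_one, mul_one, hcoeff]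
  have hν0 : ∀ x, x < -C → cdf ν x = 0 := by
    intro x hx
    rw [hCdef] at hx
    apply cdf_zero_of
    rw [hνapp, map_iic_zero P ξ Cξ hξm hCξ x (by linarith),
      map_iic_zero P η' (Cη + d) hη'm hCη' x (by linarith)]
    simp
  have hshift : ∀ x, P.map η' (Iic x) ≤ P.map η (Iic x) := by
    intro x
    rw [Measure.map_apply hηm measurableSet_Iic, Measure.map_apply hη'm measurableSet_Iic]
    apply measure_mono
    intro ω hω
    simp only [mem_preimage, mem_Iic] at hω ⊢
    have heq : η' ω = η ω + d := rfl
    rw [heq] at hω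
    linarith
  have hνμ : ∀ x, cdf ν x ≤ cdf μ x := by
    intro x
    rw [cdf_eq_real, cdf_eq_real, measureReal_def, measureReal_def]
    apply ENNReal.toReal_mono (measure_ne_top μ _)
    have hmixapp : μ (Iic x)
        = ENNReal.ofReal α * P.map ξ (Iic x) + ENNReal.ofReal (1-α) * P.map η (Iic x) := by
      rw [hmix]
      simp [Measure.add_apply, Measure.smul_apply, smul_eq_mul]
    rw [hmixapp, hνapp]
    gcongr _ + _ * ?_
    exact hshift x
  set Z : Ω → ℝ := fun ω => qf μ C (U ω) with hZdef
  set Z' : Ω → ℝ := fun ω => qf ν C (U ω) with hZ'def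
  have hlawZ : P.map Z = μ := qf_law P μ C hμ1 hμ0 hC U hUm hUb hUlaw
  have hlawZ' : P.map Z' = ν := qf_law P ν C hν1 hν0 hC U hUm hUb hUlaw
  have hZbdd : BddMeas P Z :=
    ⟨(qf_mono μ C hμ1 hC).measurable.comp hUm, C + 1, ae_of_all _ fun ω => abs_le.mpr
      ⟨by have := qf_ge μ C hμ1 hC (U ω); linarith,
       by have := qf_le_C μ C hμ1 hC (U ω); linarith⟩⟩
  have hZ'bdd : BddMeas P Z' :=
    ⟨(qf_mono ν C hν1 hC).measurable.comp hUm, C + 1, ae_of_all _ fun ω => abs_le.mpr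
      ⟨by have := qf_ge ν C hν1 hC (U ω); linarith,
       by have := qf_le_C ν C hν1 hC (U ω); linarith⟩⟩
  have huη' : u η' = u ξ := by
    have := hTI η hηbdd d
    rw [hη'def]
    rw [this]
    linarith
  have huZ' : u Z' = u ξ :=
    hCxLS ξ η' Z' hξbdd hη'bdd hZ'bdd huη'.symm α hα0 hα1 (by rw [hlawZ'])
  have huZ : u Z = u ζ := hLaw Z ζ hZbdd hζbdd (by rw [hlawZ])
  have hZle : ∀ ω, Z ω ≤ Z' ω := fun ω => qf_comp ν μ C hν1 hC hνμ (U ω)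
  calc u ζ = u Z := huZ.symm
    _ ≤ u Z' := hMono Z Z' hZbdd hZ'bdd (ae_of_all _ hZle)
    _ = u ξ := huZ'


end Key


theorem stmt_8 {Ω : Type} [MeasurableSpace Ω] (P : Measure Ω) [IsProbabilityMeasure P]
    (u : (Ω → ℝ) → ℝ)
    (hAtomless : ∀ A : Set Ω, MeasurableSet A → 0 < P A →
      ∃ B : Set Ω, B ⊆ A ∧ MeasurableSet B ∧ 0 < P B ∧ P B < P A)
    (hTI : ∀ ξ : Ω → ℝ, BddMeas P ξ → ∀ h : ℝ, u (fun ω => ξ ω + h) = u ξ + h)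
    (hMono : ∀ ξ η : Ω → ℝ, BddMeas P ξ → BddMeas P η → (∀ᵐ ω ∂P, ξ ω ≤ η ω) → u ξ ≤ u η)
    (hNorm : u (fun _ => 0) = 0)
    (hLaw : ∀ ξ η : Ω → ℝ, BddMeas P ξ → BddMeas P η → P.map ξ = P.map η → u ξ = u η)
    (hConc : ∀ ξ η : Ω → ℝ, BddMeas P ξ → BddMeas P η → ∀ l : ℝ, 0 ≤ l → l ≤ 1 →
      l * u ξ + (1 - l) * u η ≤ u (fun ω => l * ξ ω + (1 - l) * η ω))
    (hFatou : ∀ (ξs : ℕ → Ω → ℝ) (ξ : Ω → ℝ), (∀ n, BddMeas P (ξs n)) → BddMeas P ξ →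
      (∃ C : ℝ, ∀ n, ∀ᵐ ω ∂P, |ξs n ω| ≤ C) →
      TendstoInMeasure P ξs Filter.atTop ξ →
      Filter.limsup (fun n => u (ξs n)) Filter.atTop ≤ u ξ)
    (hCxLS : CxLS P u) :
    ∀ ξ η ζ : Ω → ℝ, BddMeas P ξ → BddMeas P η → BddMeas P ζ →
      ∀ α : ℝ, 0 < α → α < 1 →
      P.map ζ = ENNReal.ofReal α • P.map ξ + ENNReal.ofReal (1 - α) • P.map η →
      ((0 ≤ u ξ → 0 ≤ u η → 0 ≤ u ζ) ∧ (u ξ < 0 → u η < 0 → u ζ < 0)) := by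
  intro ξ η ζ hξ hη hζ α hα0 hα1 hmix
  obtain ⟨U, hUm, hUb, hUlaw⟩ := exists_uniform P hAtomless
  have hswap : P.map ζ
      = ENNReal.ofReal (1-α) • P.map η + ENNReal.ofReal (1-(1-α)) • P.map ξ := by
    rw [hmix, add_comm, show (1:ℝ)-(1-α) = α from by ring]
  have hlow : min (u ξ) (u η) ≤ u ζ := by
    rcases le_total (u ξ) (u η) with hab | hab
    · rw [min_eq_left hab]
      exact key_lower P u hTI hMono hLaw hCxLS U hUm hUb hUlaw ξ η ζ hξ hη hζ
        α hα0 hα1 hmix (u η - u ξ) (by linarith) (by ring)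
    · rw [min_eq_right hab]
      exact key_lower P u hTI hMono hLaw hCxLS U hUm hUb hUlaw η ξ ζ hη hξ hζ
        (1-α) (by linarith) (by linarith) hswap (u ξ - u η) (by linarith) (by ring)
  have hhi : u ζ ≤ max (u ξ) (u η) := by
    rcases le_total (u η) (u ξ) with hab | hab
    · rw [max_eq_left hab]
      exact key_upper P u hTI hMono hLaw hCxLS U hUm hUb hUlaw ξ η ζ hξ hη hζ
        α hα0 hα1 hmix (u ξ - u η) (by linarith) (by ring)
    · rw [max_eq_right hab]
      exact key_upper P u hTI hMono hLaw hCxLS U hUm hUb hUlaw η ξ ζ hη hξ hζ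
        (1-α) (by linarith) (by linarith) hswap (u η - u ξ) (by linarith) (by ring)
  constructor
  · intro h1 h2
    exact le_trans (le_min h1 h2) hlow
  · intro h1 h2
    exact lt_of_le_of_lt hhi (max_lt h1 h2)
end

section
/- Let u be a concave, law-determined monetary utility function on L^∞ of an atomless probability space, with the Fatou property and the CxLS property, and assume u is not the essential infimum (there exists ξ ∈ L^∞ with u(ξ) ≠ ess inf ξ). Then there exists k_0 < 0 such that for every a > 0 there exists α ∈ (0,1) with u(α δ_{k_0} + (1−α) δ_a) ≥ 0. -/
open MeasureTheory Filter Set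
open scoped ENNReal NNReal

noncomputable local instance : ∀ (p : Prop), Decidable p := fun p => Classical.propDecidable p

section Sier
variable {Ω : Type} [MeasurableSpace Ω] (P : Measure Ω) [IsProbabilityMeasure P]
variable (hAtomless : ∀ A : Set Ω, MeasurableSet A → 0 < P A →
      ∃ B : Set Ω, B ⊆ A ∧ MeasurableSet B ∧ 0 < P B ∧ P B < P A)

include hAtomless

lemma half_lemma (A : Set Ω) (hA : MeasurableSet A) (h0 : 0 < P A) :
    ∃ B : Set Ω, B ⊆ A ∧ MeasurableSet B ∧ 0 < P B ∧ P B + P B ≤ P A := by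
  obtain ⟨B, hBA, hBm, hB0, hBlt⟩ := hAtomless A hA h0
  have hsum : P B + P (A \ B) = P A := by
    have := measure_inter_add_diff (μ := P) A hBm
    rwa [Set.inter_eq_self_of_subset_right hBA] at this
  rcases le_total (P B) (P (A \ B)) with h | h
  · exact ⟨B, hBA, hBm, hB0, by calc P B + P B ≤ P B + P (A \ B) := add_le_add_right h _
      _ = P A := hsum⟩
  · refine ⟨A \ B, Set.diff_subset, hA.diff hBm, ?_, ?_⟩
    · rw [pos_iff_ne_zero]
      intro hz
      rw [hz, add_zero] at hsum
      exact absurd hsum (ne_of_lt hBlt)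
    · calc P (A \ B) + P (A \ B) ≤ P B + P (A \ B) := add_le_add_left h _
        _ = P A := hsum

lemma small_lemma (k : ℕ) (A : Set Ω) (hA : MeasurableSet A) (h0 : 0 < P A) :
    ∃ B : Set Ω, B ⊆ A ∧ MeasurableSet B ∧ 0 < P B ∧ 2 ^ k * P B ≤ P A := by
  induction k generalizing A with
  | zero => exact ⟨A, subset_rfl, hA, h0, by simp⟩
  | succ k ih =>
    obtain ⟨B, hBA, hBm, hB0, hBle⟩ := ih A hA h0
    obtain ⟨B', hB'B, hB'm, hB'0, hB'le⟩ := half_lemma P hAtomless B hBm hB0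
    refine ⟨B', hB'B.trans hBA, hB'm, hB'0, ?_⟩
    have : (2:ℝ≥0∞) ^ (k+1) * P B' = 2 ^ k * (P B' + P B') := by ring
    rw [this]
    calc 2 ^ k * (P B' + P B') ≤ 2 ^ k * P B := mul_le_mul_right hB'le _
      _ ≤ P A := hBle

lemma small_eps (A : Set Ω) (hA : MeasurableSet A) (h0 : 0 < P A) (ε : ℝ≥0∞) (hε : ε ≠ 0) :
    ∃ B : Set Ω, B ⊆ A ∧ MeasurableSet B ∧ 0 < P B ∧ P B ≤ ε := by
  obtain ⟨k, hk⟩ := ENNReal.exists_inv_two_pow_lt hε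
  obtain ⟨B, hBA, hBm, hB0, hBle⟩ := small_lemma P hAtomless k A hA h0
  refine ⟨B, hBA, hBm, hB0, ?_⟩
  have h1 : P B = 2⁻¹ ^ k * (2 ^ k * P B) := by
    rw [← mul_assoc, ← ENNReal.inv_pow, ENNReal.inv_mul_cancel (by positivity) (by simp), one_mul]
  calc P B = 2⁻¹ ^ k * (2 ^ k * P B) := h1
    _ ≤ 2⁻¹ ^ k * P A := mul_le_mul_right hBle _
    _ ≤ 2⁻¹ ^ k * 1 := mul_le_mul_right prob_le_one _
    _ = 2⁻¹ ^ k := mul_one _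
    _ ≤ ε := hk.le

end Sier

section Sier2
set_option linter.unusedSectionVars false
variable {Ω : Type} [MeasurableSpace Ω] (P : Measure Ω) [IsProbabilityMeasure P]
variable (hAtomless : ∀ A : Set Ω, MeasurableSet A → 0 < P A →
      ∃ B : Set Ω, B ⊆ A ∧ MeasurableSet B ∧ 0 < P B ∧ P B < P A)

include hAtomless

theorem sierpinski_s9 (S : Set Ω) (hS : MeasurableSet S) (r : ℝ≥0∞) (hr : r ≤ P S) :
    ∃ B : Set Ω, B ⊆ S ∧ MeasurableSet B ∧ P B = r := by
  classical
  have hrtop : r ≠ ⊤ := by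
    intro h; rw [h] at hr
    exact absurd (top_le_iff.mp hr) (by
      have := prob_le_one (μ := P) (s := S); intro hh; rw [hh] at this; simp at this)
  set Good : Set Ω → Prop := fun B => B ⊆ S ∧ MeasurableSet B ∧ P B ≤ r with hGood
  set g : Set Ω → ℝ≥0∞ :=
    fun B => ⨆ (C : Set Ω) (_ : MeasurableSet C ∧ C ⊆ S \ B ∧ P C ≤ r - P B), P C with hg
  have step : ∀ B, Good B →
      ∃ C, MeasurableSet C ∧ C ⊆ S \ B ∧ P C ≤ r - P B ∧ g B ≤ 2 * P C := by
    intro B hB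
    by_cases hgz : g B = 0
    · exact ⟨∅, MeasurableSet.empty, Set.empty_subset _, by simp, by simp [hgz]⟩
    · have hgle : g B ≤ r := by
        apply iSup₂_le
        intro C hC
        exact hC.2.2.trans tsub_le_self
      have hgtop : g B ≠ ⊤ := by
        intro h; rw [h] at hgle; exact hrtop (top_le_iff.mp hgle)
      have hlt : g B / 2 < g B := ENNReal.half_lt_self hgz hgtop
      rw [hg] at hlt
      simp only [lt_iSup_iff] at hlt
      obtain ⟨C, hC, hCgt⟩ := hlt
      refine ⟨C, hC.1, hC.2.1, hC.2.2, ?_⟩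
      calc g B = 2 * (g B / 2) := (ENNReal.mul_div_cancel' (by norm_num) (by norm_num)).symm
        _ ≤ 2 * P C := mul_le_mul_right hCgt.le _
  have good_empty : Good ∅ := ⟨Set.empty_subset _, MeasurableSet.empty, by simp⟩
  let T := {B : Set Ω // Good B}
  have step' : ∀ b : T, ∃ C, MeasurableSet C ∧ C ⊆ S \ b.1 ∧ P C ≤ r - P b.1 ∧
      g b.1 ≤ 2 * P C := fun b => step b.1 b.2
  let nextC : T → Set Ω := fun b => Classical.choose (step' b)
  have hnextC : ∀ b : T, MeasurableSet (nextC b) ∧ nextC b ⊆ S \ b.1 ∧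
      P (nextC b) ≤ r - P b.1 ∧ g b.1 ≤ 2 * P (nextC b) := fun b => Classical.choose_spec (step' b)
  have hdisj : ∀ b : T, Disjoint b.1 (nextC b) := by
    intro b
    exact Set.disjoint_of_subset_right (hnextC b).2.1 disjoint_sdiff_self_right
  have hPunion : ∀ b : T, P (b.1 ∪ nextC b) = P b.1 + P (nextC b) := by
    intro b
    exact measure_union (hdisj b) (hnextC b).1
  have good_next : ∀ b : T, Good (b.1 ∪ nextC b) := by
    intro b
    refine ⟨Set.union_subset b.2.1 ((hnextC b).2.1.trans Set.diff_subset),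
      b.2.2.1.union (hnextC b).1, ?_⟩
    rw [hPunion b]
    calc P b.1 + P (nextC b) ≤ P b.1 + (r - P b.1) := add_le_add_right (hnextC b).2.2.1 _
      _ = r := add_tsub_cancel_of_le b.2.2.2
  let next : T → T := fun b => ⟨b.1 ∪ nextC b, good_next b⟩
  let seq : ℕ → T := fun n => next^[n] ⟨∅, good_empty⟩
  have hseq_succ : ∀ n, seq (n+1) = next (seq n) := by
    intro n
    exact Function.iterate_succ_apply' next n _
  have hmono : Monotone (fun n => (seq n).1) := by
    apply monotone_nat_of_le_succ
    intro n
    rw [hseq_succ n]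
    exact Set.subset_union_left
  set W := ⋃ n, (seq n).1 with hW
  have hWm : MeasurableSet W := MeasurableSet.iUnion (fun n => (seq n).2.2.1)
  have hWS : W ⊆ S := Set.iUnion_subset (fun n => (seq n).2.1)
  have hPW : P W = ⨆ n, P (seq n).1 := hmono.directed_le.measure_iUnion
  have hWr : P W ≤ r := by
    rw [hPW]; exact iSup_le (fun n => (seq n).2.2.2)
  refine ⟨W, hWS, hWm, ?_⟩
  by_contra hne
  have hWlt : P W < r := lt_of_le_of_ne hWr hne
  have hδ : r - P W ≠ 0 := by
    rw [Ne, tsub_eq_zero_iff_le]; exact not_le.mpr hWlt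
  have hSW : 0 < P (S \ W) := by
    have : P (S \ W) = P S - P W := measure_diff hWS hWm.nullMeasurableSet (measure_ne_top P W)
    rw [this]
    rw [tsub_pos_iff_lt]
    exact lt_of_lt_of_le hWlt hr
  obtain ⟨C0, hC0sub, hC0m, hC0pos, hC0le⟩ :=
    small_eps P hAtomless (S \ W) (hS.diff hWm) hSW (r - P W) hδ
  set c := P C0 / 2 with hc
  have hc0 : c ≠ 0 := by
    rw [hc, Ne, ENNReal.div_eq_zero_iff]
    push_neg
    exact ⟨pos_iff_ne_zero.mp hC0pos, by norm_num⟩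
  have hctop : c ≠ ⊤ := by
    rw [hc]
    exact (ENNReal.div_lt_top (measure_ne_top P C0) (by norm_num)).ne
  have hcand : ∀ n, P C0 ≤ g (seq n).1 := by
    intro n
    have h1 : C0 ⊆ S \ (seq n).1 := by
      intro x hx
      exact ⟨(hC0sub hx).1, fun hmem => (hC0sub hx).2 (Set.mem_iUnion.mpr ⟨n, hmem⟩)⟩
    have h2 : P C0 ≤ r - P (seq n).1 := by
      refine hC0le.trans (tsub_le_tsub_left ?_ r)
      calc P (seq n).1 ≤ ⨆ m, P (seq m).1 := le_iSup (fun m => P (seq m).1) n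
        _ = P W := hPW.symm
    exact le_iSup₂ (f := fun (C : Set Ω) (_ : MeasurableSet C ∧ C ⊆ S \ (seq n).1 ∧
      P C ≤ r - P (seq n).1) => P C) C0 ⟨hC0m, h1, h2⟩
  have hCn_ge : ∀ n, c ≤ P (nextC (seq n)) := by
    intro n
    have := (hcand n).trans (hnextC (seq n)).2.2.2
    calc c = P C0 / 2 := hc
      _ ≤ 2 * P (nextC (seq n)) / 2 := by exact ENNReal.div_le_div_right this 2
      _ = P (nextC (seq n)) := by
          rw [mul_comm, mul_div_assoc, ENNReal.div_self (by norm_num) (by norm_num), mul_one]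
  have hgrow : ∀ n : ℕ, (n : ℝ≥0∞) * c ≤ P (seq n).1 := by
    intro n
    induction n with
    | zero => simp
    | succ n ih =>
      rw [hseq_succ n]
      show ((n+1 : ℕ) : ℝ≥0∞) * c ≤ P ((seq n).1 ∪ nextC (seq n))
      rw [hPunion (seq n)]
      push_cast
      rw [add_mul, one_mul]
      exact add_le_add ih (hCn_ge n)
  obtain ⟨n, hn⟩ := ENNReal.exists_nat_gt ((ENNReal.div_lt_top hrtop hc0).ne)
  have : r < (n : ℝ≥0∞) * c := by
    rw [← ENNReal.div_lt_iff (Or.inl hc0) (Or.inl hctop)]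
    exact hn
  exact absurd ((hgrow n).trans (seq n).2.2.2) (not_le.mpr this)

end Sier2

section Maps
set_option linter.unusedSectionVars false
variable {Ω : Type} [MeasurableSpace Ω] (P : Measure Ω) [IsProbabilityMeasure P]

lemma map_step {A B : Set Ω} (hA : MeasurableSet A) (hB : MeasurableSet B)
    (hd : Disjoint A B) {f : Ω → ℝ} (hf : Measurable f) {x y z : ℝ}
    (hfA : ∀ ω ∈ A, f ω = x) (hfB : ∀ ω ∈ B, f ω = y)
    (hfZ : ∀ ω, ω ∉ A → ω ∉ B → f ω = z) :
    P.map f = P A • Measure.dirac x + P B • Measure.dirac y + P (A ∪ B)ᶜ • Measure.dirac z := by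
  classical
  ext s hs
  rw [Measure.map_apply hf hs]
  set t := f ⁻¹' s with ht
  have h1 : t ∩ A = if x ∈ s then A else ∅ := by
    ext ω
    constructor
    · rintro ⟨htω, hω⟩
      rw [Set.mem_preimage, hfA ω hω] at htω
      simp [htω, hω]
    · intro hω
      split_ifs at hω with hx
      · exact ⟨by rw [Set.mem_preimage, hfA ω hω]; exact hx, hω⟩
      · exact absurd hω (Set.notMem_empty ω)
  have h2 : t ∩ B = if y ∈ s then B else ∅ := by
    ext ω
    constructor
    · rintro ⟨htω, hω⟩
      rw [Set.mem_preimage, hfB ω hω] at htω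
      simp [htω, hω]
    · intro hω
      split_ifs at hω with hy
      · exact ⟨by rw [Set.mem_preimage, hfB ω hω]; exact hy, hω⟩
      · exact absurd hω (Set.notMem_empty ω)
  have h3 : t ∩ (A ∪ B)ᶜ = if z ∈ s then (A ∪ B)ᶜ else ∅ := by
    ext ω
    constructor
    · rintro ⟨htω, hω⟩
      rw [Set.mem_compl_iff, Set.mem_union] at hω
      push_neg at hω
      rw [Set.mem_preimage, hfZ ω hω.1 hω.2] at htω
      rw [if_pos htω, Set.mem_compl_iff, Set.mem_union]
      push_neg
      exact hω
    · intro hω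
      split_ifs at hω with hz
      · have hω' := hω
        rw [Set.mem_compl_iff, Set.mem_union] at hω'
        push_neg at hω'
        exact ⟨by rw [Set.mem_preimage, hfZ ω hω'.1 hω'.2]; exact hz, hω⟩
      · exact absurd hω (Set.notMem_empty ω)
  have hsplit : P t = P (t ∩ A) + P (t ∩ B) + P (t ∩ (A ∪ B)ᶜ) := by
    have e1 : P (t ∩ (A ∪ B)) + P (t ∩ (A ∪ B)ᶜ) = P t := by
      rw [← Set.diff_eq]
      exact measure_inter_add_diff t (hA.union hB)
    have e3 : (t ∩ (A ∪ B)) ∩ A = t ∩ A := by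
      ext ω; simp only [Set.mem_inter_iff, Set.mem_union]; tauto
    have e4 : (t ∩ (A ∪ B)) \ A = t ∩ B := by
      ext ω
      simp only [Set.mem_diff, Set.mem_inter_iff, Set.mem_union]
      constructor
      · rintro ⟨⟨h1', h2'⟩, h3'⟩
        exact ⟨h1', h2'.resolve_left h3'⟩
      · rintro ⟨h1', h2'⟩
        exact ⟨⟨h1', Or.inr h2'⟩, fun hA' => Set.disjoint_left.mp hd hA' h2'⟩
    have e2 : P (t ∩ (A ∪ B)) = P (t ∩ A) + P (t ∩ B) := by
      rw [← measure_inter_add_diff (t ∩ (A ∪ B)) hA, e3, e4]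
    rw [← e1, e2]
  rw [hsplit, h1, h2, h3]
  simp only [Measure.add_apply, Measure.smul_apply, smul_eq_mul, Measure.dirac_apply' _ hs]
  by_cases hx : x ∈ s <;> by_cases hy : y ∈ s <;> by_cases hz : z ∈ s <;>
    simp [hx, hy, hz, mul_comm]

lemma map_two {A : Set Ω} (hA : MeasurableSet A) {f : Ω → ℝ} (hf : Measurable f) {x z : ℝ}
    (hfA : ∀ ω ∈ A, f ω = x) (hfZ : ∀ ω, ω ∉ A → f ω = z) :
    P.map f = P A • Measure.dirac x + P Aᶜ • Measure.dirac z := by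
  have h := map_step P hA MeasurableSet.empty (Set.disjoint_empty A) hf (y := z) (x := x) (z := z)
    hfA (fun ω hω => absurd hω (Set.notMem_empty ω)) (fun ω h1 _ => hfZ ω h1)
  rw [Set.union_empty] at h
  simpa using h

end Maps

section Bdd
set_option linter.unusedSectionVars false
variable {Ω : Type} [MeasurableSpace Ω] (P : Measure Ω) [IsProbabilityMeasure P]

lemma bdd_const (c : ℝ) : BddMeas P (fun _ => c) :=
  ⟨measurable_const, |c|, Filter.Eventually.of_forall (fun _ => le_refl _)⟩

lemma bdd_step {A B : Set Ω} (hA : MeasurableSet A) (hB : MeasurableSet B) (x y z : ℝ) :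
    BddMeas P (fun ω => if ω ∈ A then x else if ω ∈ B then y else z) := by
  classical
  refine ⟨Measurable.ite hA measurable_const (Measurable.ite hB measurable_const
    measurable_const), |x| + |y| + |z|, Filter.Eventually.of_forall (fun ω => ?_)⟩
  have hx := abs_nonneg x
  have hy := abs_nonneg y
  have hz := abs_nonneg z
  by_cases h1 : ω ∈ A <;> by_cases h2 : ω ∈ B <;> simp [h1, h2] <;> linarith

lemma bdd_two {A : Set Ω} (hA : MeasurableSet A) (x z : ℝ) :
    BddMeas P (fun ω => if ω ∈ A then x else z) := by
  have h := bdd_step P hA MeasurableSet.empty x z z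
  simpa using h

lemma bdd_add_const {f : Ω → ℝ} (hf : BddMeas P f) (h : ℝ) :
    BddMeas P (fun ω => f ω + h) := by
  obtain ⟨hfm, Cf, hCf⟩ := hf
  refine ⟨hfm.add measurable_const, Cf + |h|, ?_⟩
  filter_upwards [hCf] with ω h1
  calc |f ω + h| ≤ |f ω| + |h| := abs_add_le _ _
    _ ≤ Cf + |h| := by linarith

lemma bdd_comb (l : ℝ) {f g : Ω → ℝ} (hf : BddMeas P f) (hg : BddMeas P g) :
    BddMeas P (fun ω => l * f ω + (1 - l) * g ω) := by
  obtain ⟨hfm, Cf, hCf⟩ := hf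
  obtain ⟨hgm, Cg, hCg⟩ := hg
  refine ⟨(measurable_const.mul hfm).add (measurable_const.mul hgm),
    |l| * (|Cf| + 1) + |1 - l| * (|Cg| + 1), ?_⟩
  filter_upwards [hCf, hCg] with ω h1 h2
  have e1 : |f ω| ≤ |Cf| + 1 := by
    calc |f ω| ≤ Cf := h1
      _ ≤ |Cf| := le_abs_self _
      _ ≤ |Cf| + 1 := by linarith
  have e2 : |g ω| ≤ |Cg| + 1 := by
    calc |g ω| ≤ Cg := h2
      _ ≤ |Cg| := le_abs_self _
      _ ≤ |Cg| + 1 := by linarith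
  calc |l * f ω + (1 - l) * g ω| ≤ |l * f ω| + |(1 - l) * g ω| := abs_add_le _ _
    _ = |l| * |f ω| + |1 - l| * |g ω| := by rw [abs_mul, abs_mul]
    _ ≤ |l| * (|Cf| + 1) + |1 - l| * (|Cg| + 1) :=
        add_le_add (mul_le_mul_of_nonneg_left e1 (abs_nonneg l))
          (mul_le_mul_of_nonneg_left e2 (abs_nonneg (1 - l)))

end Bdd

section Part
set_option linter.unusedSectionVars false
variable {Ω : Type} [MeasurableSpace Ω] (P : Measure Ω) [IsProbabilityMeasure P]
variable (sierp : ∀ S : Set Ω, MeasurableSet S → ∀ r : ℝ≥0∞, r ≤ P S →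
    ∃ B : Set Ω, B ⊆ S ∧ MeasurableSet B ∧ P B = r)

include sierp

lemma partition_lemma : ∀ (n : ℕ) (S : Set Ω), MeasurableSet S → ∀ c : ℝ≥0∞,
    P S = (n + 1 : ℕ) * c →
    ∃ F : ℕ → Set Ω, (∀ i, MeasurableSet (F i)) ∧ (∀ i, F i ⊆ S) ∧
      (∀ i ≤ n, P (F i) = c) ∧ (∀ i, n < i → F i = ∅) ∧
      (Pairwise (Function.onFun Disjoint F)) ∧ (⋃ i, F i) = S := by
  intro n
  induction n with
  | zero =>
    intro S hS c hc
    refine ⟨fun i => if i = 0 then S else ∅, ?_, ?_, ?_, ?_, ?_, ?_⟩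
    · intro i; by_cases h : i = 0 <;> simp [h, hS]
    · intro i; by_cases h : i = 0 <;> simp [h]
    · intro i hi
      interval_cases i
      simpa using hc
    · intro i hi
      have : ¬ i = 0 := by omega
      simp [this]
    · intro i j hij
      unfold Function.onFun
      by_cases h : i = 0
      · have : ¬ j = 0 := by omega
        simp [h, this]
      · simp [h]
    · ext ω
      simp only [Set.mem_iUnion]
      constructor
      · rintro ⟨i, hi⟩
        by_cases h : i = 0
        · rw [h] at hi; simpa using hi
        · simp [h] at hi
      · intro h
        exact ⟨0, by simpa using h⟩
  | succ n ih =>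
    intro S hS c hc
    have hctop : c ≠ ⊤ := by
      intro h
      rw [h] at hc
      have : P S = ⊤ := by
        rw [hc]
        rw [ENNReal.mul_top (by positivity)]
      exact (measure_ne_top P S) this
    have hcS : c ≤ P S := by
      rw [hc]
      calc c = 1 * c := (one_mul c).symm
        _ ≤ (n + 1 + 1 : ℕ) * c := by
            apply mul_le_mul_left
            have : (1:ℝ≥0∞) = ((1:ℕ):ℝ≥0∞) := by norm_num
            rw [this]
            exact_mod_cast by omega
    obtain ⟨B0, hB0S, hB0m, hB0P⟩ := sierp S hS c hcS
    set rest := S \ B0 with hrest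
    have hrestm : MeasurableSet rest := hS.diff hB0m
    have hrestP : P rest = (n + 1 : ℕ) * c := by
      have h1 : P rest = P S - P B0 :=
        measure_diff hB0S hB0m.nullMeasurableSet (measure_ne_top P B0)
      rw [h1, hB0P, hc]
      have h2 : ((n + 1 + 1 : ℕ) : ℝ≥0∞) * c = ((n + 1 : ℕ) : ℝ≥0∞) * c + c := by
        push_cast
        ring
      rw [h2, ENNReal.add_sub_cancel_right hctop]
    obtain ⟨F', hF'm, hF'S, hF'P, hF'e, hF'd, hF'U⟩ := ih rest hrestm c hrestP
    refine ⟨fun i => Nat.casesOn i B0 F', ?_, ?_, ?_, ?_, ?_, ?_⟩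
    · intro i; cases i with
      | zero => exact hB0m
      | succ j => exact hF'm j
    · intro i; cases i with
      | zero => exact hB0S
      | succ j => exact (hF'S j).trans Set.diff_subset
    · intro i hi
      cases i with
      | zero => exact hB0P
      | succ j => exact hF'P j (by omega)
    · intro i hi
      cases i with
      | zero => omega
      | succ j => exact hF'e j (by omega)
    · intro i j hij
      unfold Function.onFun
      cases i with
      | zero =>
        cases j with
        | zero => exact absurd rfl hij
        | succ j' =>
          exact Set.disjoint_of_subset_right (hF'S j') disjoint_sdiff_self_right
      | succ i' =>
        cases j with
        | zero =>
          exact (Set.disjoint_of_subset_right (hF'S i') disjoint_sdiff_self_right).symm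
        | succ j' => exact hF'd (by omega : i' ≠ j')
    · ext ω
      simp only [Set.mem_iUnion]
      constructor
      · rintro ⟨i, hi⟩
        cases i with
        | zero => exact hB0S hi
        | succ j =>
          have : ω ∈ ⋃ i, F' i := Set.mem_iUnion.mpr ⟨j, hi⟩
          rw [hF'U] at this
          exact this.1
      · intro h
        by_cases hB : ω ∈ B0
        · exact ⟨0, hB⟩
        · have : ω ∈ ⋃ i, F' i := by
            rw [hF'U]
            exact ⟨h, hB⟩
          obtain ⟨j, hj⟩ := Set.mem_iUnion.mp this
          exact ⟨j + 1, hj⟩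

end Part

theorem stmt_9 {Ω : Type} [MeasurableSpace Ω] (P : Measure Ω) [IsProbabilityMeasure P]
    (u : (Ω → ℝ) → ℝ)
    (hAtomless : ∀ A : Set Ω, MeasurableSet A → 0 < P A →
      ∃ B : Set Ω, B ⊆ A ∧ MeasurableSet B ∧ 0 < P B ∧ P B < P A)
    (hTI : ∀ ξ : Ω → ℝ, BddMeas P ξ → ∀ h : ℝ, u (fun ω => ξ ω + h) = u ξ + h)
    (hMono : ∀ ξ η : Ω → ℝ, BddMeas P ξ → BddMeas P η → (∀ᵐ ω ∂P, ξ ω ≤ η ω) → u ξ ≤ u η)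
    (hNorm : u (fun _ => 0) = 0)
    (hLaw : ∀ ξ η : Ω → ℝ, BddMeas P ξ → BddMeas P η → P.map ξ = P.map η → u ξ = u η)
    (hConc : ∀ ξ η : Ω → ℝ, BddMeas P ξ → BddMeas P η → ∀ l : ℝ, 0 ≤ l → l ≤ 1 →
      l * u ξ + (1 - l) * u η ≤ u (fun ω => l * ξ ω + (1 - l) * η ω))
    (hFatou : ∀ (ξs : ℕ → Ω → ℝ) (ξ : Ω → ℝ), (∀ n, BddMeas P (ξs n)) → BddMeas P ξ →
      (∃ C : ℝ, ∀ n, ∀ᵐ ω ∂P, |ξs n ω| ≤ C) →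
      TendstoInMeasure P ξs Filter.atTop ξ →
      Filter.limsup (fun n => u (ξs n)) Filter.atTop ≤ u ξ)
    (hCxLS : CxLS P u)
    (hNotEssInf : ∃ ξ : Ω → ℝ, BddMeas P ξ ∧ u ξ ≠ essInfR P ξ) :
    ∃ k₀ : ℝ, k₀ < 0 ∧ ∀ a : ℝ, 0 < a → ∃ α : ℝ, 0 < α ∧ α < 1 ∧
      ∃ ξ : Ω → ℝ, BddMeas P ξ ∧ HasDyadicLaw P ξ k₀ a α ∧ 0 ≤ u ξ := by
  classical
  have bdd0 : BddMeas P (fun _ => (0:ℝ)) := bdd_const P 0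
  have u_const : ∀ c : ℝ, u (fun _ => c) = c := by
    intro c
    have h := hTI (fun _ => 0) bdd0 c
    simpa [hNorm] using h
  have sierp := sierpinski_s9 P hAtomless
  obtain ⟨ξ0, hξ0bdd, hξ0ne⟩ := hNotEssInf
  obtain ⟨hξ0m, C, hC⟩ := id hξ0bdd
  set SS : Set ℝ := {c : ℝ | ∀ᵐ ω ∂P, c ≤ ξ0 ω} with hSS
  have hSne : (-C) ∈ SS := by
    filter_upwards [hC] with ω h
    linarith [(abs_le.mp h).1]
  have hub : ∀ c ∈ SS, c ≤ u ξ0 := by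
    intro c hc
    have h1 : u (fun _ => c) ≤ u ξ0 := hMono _ _ (bdd_const P c) hξ0bdd hc
    rwa [u_const] at h1
  have hm_le : essInfR P ξ0 ≤ u ξ0 := csSup_le ⟨-C, hSne⟩ hub
  set m := essInfR P ξ0 with hm
  have hmlt : m < u ξ0 := lt_of_le_of_ne hm_le (Ne.symm hξ0ne)
  set ε := (u ξ0 - m) / 2 with hε
  have hε0 : 0 < ε := by rw [hε]; linarith
  set A₀ := ξ0 ⁻¹' (Set.Iic (m + ε)) with hA₀
  have hA₀m : MeasurableSet A₀ := hξ0m measurableSet_Iic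
  have hA₀mem : ∀ ω, ω ∈ A₀ ↔ ξ0 ω ≤ m + ε := by
    intro ω; rw [hA₀, Set.mem_preimage, Set.mem_Iic]
  have hA₀pos : P A₀ ≠ 0 := by
    intro h0
    have hae : ∀ᵐ ω ∂P, ω ∉ A₀ := measure_eq_zero_iff_ae_notMem.mp h0
    have hmem : (m + ε) ∈ SS := by
      filter_upwards [hae] with ω h
      have h2 : ¬ (ξ0 ω ≤ m + ε) := fun hh => h ((hA₀mem ω).mpr hh)
      linarith [lt_of_not_ge h2]
    have h3 : m + ε ≤ m := le_csSup ⟨u ξ0, fun c hc => hub c hc⟩ hmem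
    linarith
  have hA₀c : P A₀ᶜ ≠ 0 := by
    intro h0
    have hae : ∀ᵐ ω ∂P, ω ∈ A₀ := by
      have := measure_eq_zero_iff_ae_notMem.mp h0
      filter_upwards [this] with ω h
      exact not_not.mp (fun hh => h (Set.mem_compl hh))
    have h1 : u ξ0 ≤ u (fun _ => m + ε) := by
      apply hMono _ _ hξ0bdd (bdd_const _ _)
      filter_upwards [hae] with ω h
      exact (hA₀mem ω).mp h
    rw [u_const] at h1
    rw [hε] at h1
    linarith
  set lam := (P A₀).toReal with hlam
  have hPA₀ : P A₀ = ENNReal.ofReal lam := by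
    rw [hlam, ENNReal.ofReal_toReal (measure_ne_top P A₀)]
  have hlam0 : 0 < lam := ENNReal.toReal_pos hA₀pos (measure_ne_top _ _)
  have hlam1 : lam < 1 := by
    have h1 : P A₀ < 1 := by
      rcases lt_or_eq_of_le (prob_le_one (μ := P) (s := A₀)) with h | h
      · exact h
      · exfalso
        apply hA₀c
        rw [measure_compl hA₀m (measure_ne_top _ _), measure_univ, h, tsub_self]
    have h2 := ENNReal.toReal_strict_mono (by norm_num) h1
    simpa using h2
  have hPA₀c : P A₀ᶜ = ENNReal.ofReal (1 - lam) := by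
    rw [measure_compl hA₀m (measure_ne_top _ _), measure_univ, hPA₀,
      ← ENNReal.ofReal_one, ← ENNReal.ofReal_sub _ hlam0.le]
  have huC : u ξ0 ≤ C := by
    have h1 : u ξ0 ≤ u (fun _ => C) := by
      apply hMono _ _ hξ0bdd (bdd_const _ _)
      filter_upwards [hC] with ω h
      exact (abs_le.mp h).2
    rwa [u_const] at h1
  have hmC : m < C := lt_of_lt_of_le hmlt huC
  set η := fun ω => if ω ∈ A₀ then m else C with hη
  have hηbdd : BddMeas P η := bdd_two P hA₀m m C
  have hηC : ∀ ω, η ω ≤ C := by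
    intro ω
    by_cases h : ω ∈ A₀ <;> simp [hη, h, hmC.le]
  have hle : ∀ᵐ ω ∂P, ξ0 ω ≤ η ω + ε := by
    filter_upwards [hC] with ω h
    by_cases hω : ω ∈ A₀
    · have h2 : ξ0 ω ≤ m + ε := (hA₀mem ω).mp hω
      simp only [hη, if_pos hω]
      linarith
    · simp only [hη, if_neg hω]
      linarith [(abs_le.mp h).2, hε0]
  have hηbig : u ξ0 - ε ≤ u η := by
    have h1 : u ξ0 ≤ u (fun ω => η ω + ε) :=
      hMono _ _ hξ0bdd (bdd_add_const P hηbdd ε) hle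
    rw [hTI η hηbdd ε] at h1
    linarith
  set r := u η with hr
  have hrm : m < r := by
    have : u ξ0 - ε = m + ε := by rw [hε]; ring
    rw [this] at hηbig
    linarith
  have hrC : r ≤ C := by
    have h1 := hMono η (fun _ => C) hηbdd (bdd_const _ _) (Filter.Eventually.of_forall hηC)
    rw [u_const] at h1
    exact h1
  set k₀ := m - r with hk₀
  have hk₀neg : k₀ < 0 := by rw [hk₀]; linarith
  set b := C - r with hbdef
  have hb0 : 0 ≤ b := by rw [hbdef]; linarith
  set ζ := fun ω => if ω ∈ A₀ then k₀ else b with hζ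
  have hζbdd : BddMeas P ζ := bdd_two P hA₀m k₀ b
  have hζη : ζ = fun ω => η ω + (-r) := by
    funext ω
    by_cases h : ω ∈ A₀ <;> simp [hζ, hη, h, hk₀, hbdef] <;> ring
  have huζ : u ζ = 0 := by
    rw [hζη, hTI η hηbdd (-r), ← hr]
    ring
  have hζmap : P.map ζ = ENNReal.ofReal lam • Measure.dirac k₀ +
      ENNReal.ofReal (1 - lam) • Measure.dirac b := by
    have h := map_two P hA₀m hζbdd.1 (x := k₀) (z := b)
      (fun ω h => by simp [hζ, h]) (fun ω h => by simp [hζ, h])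
    rw [h, hPA₀, hPA₀c]
  refine ⟨k₀, hk₀neg, ?_⟩
  intro a ha
  by_cases hab : b ≤ a
  · -- easy case : a ≥ b, use monotonicity directly
    set ξs := fun ω => if ω ∈ A₀ then k₀ else a with hξs
    have hξsbdd : BddMeas P ξs := bdd_two P hA₀m k₀ a
    refine ⟨lam, hlam0, hlam1, ξs, hξsbdd, ?_, ?_⟩
    · unfold HasDyadicLaw
      rw [map_two P hA₀m hξsbdd.1 (x := k₀) (z := a)
        (fun ω h => by simp [hξs, h]) (fun ω h => by simp [hξs, h]), hPA₀, hPA₀c]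
    · have h1 : ∀ ω, ζ ω ≤ ξs ω := by
        intro ω
        by_cases h : ω ∈ A₀ <;> simp [hζ, hξs, h, hab]
      have h2 := hMono ζ ξs hζbdd hξsbdd (Filter.Eventually.of_forall h1)
      rw [huζ] at h2
      exact h2
  · push_neg at hab
    have hbpos : 0 < b := ha.trans hab
    set n := ⌈b / a⌉₊ with hn
    have hn2 : 2 ≤ n := by
      have h1 : (1:ℝ) < b / a := (one_lt_div ha).mpr hab
      have h2 : 1 < n := by
        rw [hn]
        exact Nat.lt_ceil.mpr (by exact_mod_cast h1)
      omega
    have hnpos : (0:ℝ) < (n:ℝ) := by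
      have : (0:ℕ) < n := by omega
      exact_mod_cast this
    have hba : b / (n:ℝ) ≤ a := by
      rw [div_le_iff₀ hnpos]
      calc b = (b / a) * a := by field_simp
        _ ≤ (n:ℝ) * a := by
            apply mul_le_mul_of_nonneg_right _ ha.le
            exact Nat.le_ceil _
        _ = a * (n:ℝ) := mul_comm _ _
    set D := (n:ℝ) * (1 - lam) + lam with hD
    have hn2' : (2:ℝ) ≤ (n:ℝ) := by exact_mod_cast hn2
    have hD1 : 1 < D := by rw [hD]; nlinarith
    have hDpos : 0 < D := by linarith
    set t := 1 / D with ht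
    have ht0 : 0 < t := by rw [ht]; positivity
    have ht1 : t < 1 := by rw [ht]; rw [div_lt_one hDpos]; exact hD1
    set α := t * lam with hα
    have hα0 : 0 < α := mul_pos ht0 hlam0
    have hα1 : α < 1 := by
      calc α = t * lam := hα
        _ < 1 * 1 := by
            apply mul_lt_mul' ht1.le hlam1 hlam0.le; norm_num
        _ = 1 := by norm_num
    set β := (1 - α) / (n:ℝ) with hβ
    have hβt : β = t * (1 - lam) := by
      rw [hβ, hα, ht]
      field_simp
      rw [hD]
      ring
    have hβ0 : 0 < β := by
      rw [hβt]
      apply mul_pos ht0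
      linarith
    have hrest : 1 - α - β = 1 - t := by
      rw [hα, hβt]; ring
    have ht1' : 0 < 1 - t := by linarith
    -- construct the sets
    obtain ⟨A, -, hAm, hAP⟩ := sierp Set.univ MeasurableSet.univ (ENNReal.ofReal α)
      (by rw [measure_univ]; exact ENNReal.ofReal_le_one.mpr hα1.le)
    have hAc : P Aᶜ = ENNReal.ofReal (1 - α) := by
      rw [measure_compl hAm (measure_ne_top _ _), measure_univ, hAP,
        ← ENNReal.ofReal_one, ← ENNReal.ofReal_sub _ hα0.le]
    have hAcn : P Aᶜ = ((n - 1) + 1 : ℕ) * ENNReal.ofReal β := by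
      have hn1 : ((n - 1) + 1 : ℕ) = n := by omega
      rw [hAc, hn1]
      rw [hβ]
      rw [← ENNReal.ofReal_natCast n, ← ENNReal.ofReal_mul (by positivity)]
      congr 1
      field_simp
    obtain ⟨F, hFm, hFsub, hFP, hFe, hFd, hFU⟩ :=
      partition_lemma P sierp (n - 1) Aᶜ hAm.compl (ENNReal.ofReal β) hAcn
    have hFP' : ∀ i < n, P (F i) = ENNReal.ofReal β := by
      intro i hi
      exact hFP i (by omega)
    -- the CxLS pieces
    set Ξ : ℕ → Ω → ℝ := fun i ω => if ω ∈ A then k₀ else if ω ∈ F i then b else 0 with hΞ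
    have hΞbdd : ∀ i, BddMeas P (Ξ i) := fun i => bdd_step P hAm (hFm i) k₀ b 0
    have hFdisjA : ∀ i, Disjoint A (F i) := by
      intro i
      exact Set.disjoint_of_subset_right (hFsub i) disjoint_compl_right
    have hmix : ENNReal.ofReal t • P.map ζ + ENNReal.ofReal (1 - t) • P.map (fun _ => (0:ℝ))
        = ENNReal.ofReal α • Measure.dirac k₀ + ENNReal.ofReal β • Measure.dirac b +
          ENNReal.ofReal (1 - α - β) • Measure.dirac 0 := by
      rw [hζmap, Measure.map_const, measure_univ, one_smul, smul_add, smul_smul, smul_smul,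
        ← ENNReal.ofReal_mul ht0.le, ← ENNReal.ofReal_mul ht0.le, ← hα, ← hβt, hrest]
    have hΞu : ∀ i < n, u (Ξ i) = 0 := by
      intro i hi
      have hmapi : P.map (Ξ i) = ENNReal.ofReal α • Measure.dirac k₀ +
          ENNReal.ofReal β • Measure.dirac b + ENNReal.ofReal (1 - α - β) • Measure.dirac 0 := by
        rw [map_step P hAm (hFm i) (hFdisjA i) (hΞbdd i).1 (x := k₀) (y := b) (z := 0)
          (fun ω h => by simp [hΞ, h])
          (fun ω h => by
            have hnA : ω ∉ A := Set.disjoint_right.mp (hFdisjA i) h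
            simp [hΞ, h, hnA])
          (fun ω h1 h2 => by simp [hΞ, h1, h2])]
        rw [hAP, hFP' i hi]
        have hc1 : P (A ∪ F i)ᶜ = ENNReal.ofReal (1 - α - β) := by
          rw [measure_compl (hAm.union (hFm i)) (measure_ne_top _ _), measure_univ,
            measure_union (hFdisjA i) (hFm i), hAP, hFP' i hi,
            ← ENNReal.ofReal_add hα0.le hβ0.le, ← ENNReal.ofReal_one,
            ← ENNReal.ofReal_sub _ (by positivity)]
          congr 1
          ring
        rw [hc1]
      have h := hCxLS ζ (fun _ => 0) (Ξ i) hζbdd bdd0 (hΞbdd i)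
        (by rw [huζ, hNorm]) t ht0 ht1 (by rw [hmapi, ← hmix])
      rw [h, huζ]
    -- the averaging induction
    set U : ℕ → Set Ω := fun mm => ⋃ i, ⋃ (_ : i < mm), F i with hU
    have hUm : ∀ mm, MeasurableSet (U mm) :=
      fun mm => MeasurableSet.iUnion (fun i => MeasurableSet.iUnion (fun _ => hFm i))
    have hUmem : ∀ mm ω, ω ∈ U mm ↔ ∃ i, i < mm ∧ ω ∈ F i := by
      intro mm ω
      rw [hU]
      simp [Set.mem_iUnion]
    set T : ℕ → Ω → ℝ := fun mm ω => if ω ∈ A then k₀ else if ω ∈ U mm then b / (mm:ℝ) else 0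
      with hT
    have hTbdd : ∀ mm, BddMeas P (T mm) := fun mm => bdd_step P hAm (hUm mm) _ _ _
    have hTu : ∀ mm : ℕ, 1 ≤ mm → mm ≤ n → 0 ≤ u (T mm) := by
      intro mm
      induction mm with
      | zero => omega
      | succ mm ih =>
        intro h1 h2
        by_cases hmm : mm = 0
        · subst hmm
          have hT1 : T 1 = Ξ 0 := by
            funext ω
            by_cases hA' : ω ∈ A
            · simp [hT, hΞ, hA']
            · by_cases hF : ω ∈ F 0
              · have hU1 : ω ∈ U 1 := (hUmem 1 ω).mpr ⟨0, by omega, hF⟩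
                simp [hT, hΞ, hA', hF, hU1]
              · have hU1 : ω ∉ U 1 := by
                  intro hc
                  obtain ⟨i, hi, hωi⟩ := (hUmem 1 ω).mp hc
                  have : i = 0 := by omega
                  rw [this] at hωi
                  exact hF hωi
                simp [hT, hΞ, hA', hF, hU1]
          rw [hT1, hΞu 0 (by omega)]
        · have hmm1 : 1 ≤ mm := by omega
          have hmmn : mm ≤ n := by omega
          have hprev := ih hmm1 hmmn
          have hΞmm := hΞu mm (by omega)
          set l := (mm : ℝ) / ((mm:ℝ) + 1) with hl
          have hmmR : (1:ℝ) ≤ (mm:ℝ) := by exact_mod_cast hmm1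
          have hl0 : 0 ≤ l := by rw [hl]; positivity
          have hl1 : l ≤ 1 := by
            rw [hl, div_le_one (by linarith)]
            linarith
          have hl1' : 1 - l = 1 / ((mm:ℝ) + 1) := by
            rw [hl]
            field_simp
            ring
          have hident : (fun ω => l * T mm ω + (1 - l) * Ξ mm ω) = T (mm + 1) := by
            funext ω
            by_cases hA' : ω ∈ A
            · simp only [hT, hΞ, if_pos hA']
              ring
            · by_cases hUm' : ω ∈ U mm
              · have hUm1 : ω ∈ U (mm + 1) := by
                  obtain ⟨i, hi, hωi⟩ := (hUmem mm ω).mp hUm'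
                  exact (hUmem (mm+1) ω).mpr ⟨i, by omega, hωi⟩
                have hFmm : ω ∉ F mm := by
                  obtain ⟨i, hi, hωi⟩ := (hUmem mm ω).mp hUm'
                  intro hc
                  exact Set.disjoint_left.mp (hFd (show i ≠ mm by omega)) hωi hc
                simp only [hT, hΞ, if_neg hA', if_pos hUm', if_pos hUm1, if_neg hFmm]
                rw [hl1', hl]
                push_cast
                field_simp
                ring
              · by_cases hFmm : ω ∈ F mm
                · have hUm1 : ω ∈ U (mm + 1) := (hUmem (mm+1) ω).mpr ⟨mm, by omega, hFmm⟩
                  simp only [hT, hΞ, if_neg hA', if_neg hUm', if_pos hUm1, if_pos hFmm]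
                  rw [hl1']
                  push_cast
                  field_simp
                  ring
                · have hUm1 : ω ∉ U (mm + 1) := by
                    intro hc
                    obtain ⟨i, hi, hωi⟩ := (hUmem (mm+1) ω).mp hc
                    rcases Nat.lt_succ_iff_lt_or_eq.mp hi with h | h
                    · exact hUm' ((hUmem mm ω).mpr ⟨i, h, hωi⟩)
                    · rw [h] at hωi; exact hFmm hωi
                  simp only [hT, hΞ, if_neg hA', if_neg hUm', if_neg hUm1, if_neg hFmm]
                  ring
          have hconc := hConc (T mm) (Ξ mm) (hTbdd mm) (hΞbdd mm) l hl0 hl1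
          rw [hident, hΞmm] at hconc
          have : 0 ≤ l * u (T mm) + (1 - l) * 0 := by
            have := mul_nonneg hl0 hprev
            linarith
          linarith
    have hfin := hTu n (by omega) le_rfl
    set ξs := fun ω => if ω ∈ A then k₀ else a with hξs
    have hξsbdd : BddMeas P ξs := bdd_two P hAm k₀ a
    have hle2 : ∀ ω, T n ω ≤ ξs ω := by
      intro ω
      by_cases hA' : ω ∈ A
      · simp [hT, hξs, hA']
      · simp only [hT, hξs, if_neg hA']
        by_cases hU' : ω ∈ U n
        · rw [if_pos hU']
          exact hba
        · rw [if_neg hU']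
          exact ha.le
    have hu2 : 0 ≤ u ξs :=
      le_trans hfin (hMono _ _ (hTbdd n) hξsbdd (Filter.Eventually.of_forall hle2))
    refine ⟨α, hα0, hα1, ξs, hξsbdd, ?_, hu2⟩
    unfold HasDyadicLaw
    rw [map_two P hAm hξsbdd.1 (x := k₀) (z := a)
      (fun ω h => by simp [hξs, h]) (fun ω h => by simp [hξs, h]), hAP, hAc]
end
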